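/- arXiv:2004.12942 — 9 statements merged into one kernel-verified Lean document; each statement's English description precedes it below -/
import Mathlib

section
/- For every n ≥ 1: (a) every Boolean function with exactly n influencing variables requires every decision tree computing it to have depth at least ⌈log₂(n+1)⌉; and (b) there exists a Boolean function on n variables, all of whose variables are influencing, that is computed by a decision tree of depth ⌈log₂(n+1)⌉. Hence the minimum deterministic query complexity DQ_n over all Boolean functions with n influencing variables equals ⌈log₂(n+1)⌉. -/
/-- A deterministic decision tree over `n` Boolean variables: either a leaf
labelled by a `Bool`, or an internal node querying a variable with two subtrees. -/
inductive DTree (n : ℕ) where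
  | leaf : Bool → DTree n
  | node : Fin n → DTree n → DTree n → DTree n

namespace DTree

/-- Evaluation of a decision tree on an input. -/
def eval {n : ℕ} : DTree n → (Fin n → Bool) → Bool
  | leaf b, _ => b
  | node i t0 t1, x => if x i then eval t1 x else eval t0 x

/-- The depth of a decision tree: the maximum number of internal nodes on a
root-to-leaf path. -/
def depth {n : ℕ} : DTree n → ℕ
  | leaf _ => 0
  | node _ t0 t1 => max (depth t0) (depth t1) + 1

/-- A decision tree computes `f` if its evaluation agrees with `f` on all inputs. -/
def Computes {n : ℕ} (T : DTree n) (f : (Fin n → Bool) → Bool) : Prop :=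
  ∀ x, T.eval x = f x

end DTree

/-- Variable `i` is influencing for `f`: there are inputs differing only in
coordinate `i` on which `f` takes different values. -/
def Influences {n : ℕ} (f : (Fin n → Bool) → Bool) (i : Fin n) : Prop :=
  ∃ x x' : Fin n → Bool, (∀ j, j ≠ i → x j = x' j) ∧ f x ≠ f x'

namespace Aux
open DTree

/-- The set of variables queried in a tree. -/
def vars {n : ℕ} : DTree n → Finset (Fin n)
  | .leaf _ => ∅
  | .node i t0 t1 => insert i (vars t0 ∪ vars t1)

lemma card_vars_add_one_le {n : ℕ} (T : DTree n) :
    (vars T).card + 1 ≤ 2 ^ T.depth := by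
  induction T with
  | leaf b => simp [vars, DTree.depth]
  | node i t0 t1 ih0 ih1 =>
    have h1 : (vars (DTree.node i t0 t1)).card ≤ (vars t0).card + (vars t1).card + 1 := by
      refine (Finset.card_insert_le _ _).trans ?_
      have := Finset.card_union_le (vars t0) (vars t1)
      omega
    have h0 : 2 ^ t0.depth ≤ 2 ^ (max t0.depth t1.depth) :=
      Nat.pow_le_pow_right (by norm_num) (le_max_left _ _)
    have h0' : 2 ^ t1.depth ≤ 2 ^ (max t0.depth t1.depth) :=
      Nat.pow_le_pow_right (by norm_num) (le_max_right _ _)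
    have : 2 ^ (DTree.node i t0 t1).depth = 2 ^ (max t0.depth t1.depth) * 2 := by
      simp [DTree.depth, pow_succ]
    omega

lemma eval_update_not_mem {n : ℕ} (T : DTree n) {i : Fin n} (hi : i ∉ vars T)
    (x : Fin n → Bool) (v : Bool) :
    T.eval (Function.update x i v) = T.eval x := by
  induction T with
  | leaf b => rfl
  | node j t0 t1 ih0 ih1 =>
    simp only [vars, Finset.mem_insert, Finset.mem_union] at hi
    push_neg at hi
    have hji : Function.update x i v j = x j := Function.update_of_ne (Ne.symm hi.1) _ _
    simp only [DTree.eval, hji]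
    by_cases h : x j
    · simp [h, ih1 hi.2.2]
    · simp [h, ih0 hi.2.1]

/-- Balanced decision tree querying variables `lo, lo+1, ..., lo+t-1`,
with leaves labelled by `b` xor (parity of right turns). -/
def bal {n : ℕ} (b : Bool) (lo t : ℕ) (h : lo + t ≤ n) : DTree n :=
  match t with
  | 0 => .leaf b
  | s + 1 =>
    .node ⟨lo, by omega⟩
      (bal b (lo + 1) ((s + 1) / 2) (by omega))
      (bal (!b) (lo + 1 + (s + 1) / 2) (s - (s + 1) / 2) (by omega))
termination_by t
decreasing_by all_goals omega

lemma depth_bal {n : ℕ} (t : ℕ) : ∀ (b : Bool) (lo : ℕ) (h : lo + t ≤ n),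
    (bal b lo t h).depth = Nat.clog 2 (t + 1) := by
  induction t using Nat.strong_induction_on with
  | _ t ih =>
    intro b lo h
    match t with
    | 0 => simp [bal, DTree.depth]
    | s + 1 =>
      rw [bal]
      simp only [DTree.depth]
      rw [ih ((s+1)/2) (by omega), ih (s - (s+1)/2) (by omega)]
      have hle : Nat.clog 2 (s - (s+1)/2 + 1) ≤ Nat.clog 2 ((s+1)/2 + 1) :=
        Nat.clog_mono_right _ (by omega)
      rw [max_eq_left hle]
      have hc := Nat.clog_of_two_le (b := 2) (n := s + 2) (by norm_num) (by omega)
      have h2 : (s + 2 + 2 - 1) / 2 = (s + 1) / 2 + 1 := by omega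
      rw [h2] at hc
      rw [show s + 1 + 1 = s + 2 from rfl, hc]

lemma eval_bal_congr {n : ℕ} (t : ℕ) : ∀ (b : Bool) (lo : ℕ) (h : lo + t ≤ n)
    (x y : Fin n → Bool), (∀ j : Fin n, lo ≤ j.val → j.val < lo + t → x j = y j) →
    (bal b lo t h).eval x = (bal b lo t h).eval y := by
  induction t using Nat.strong_induction_on with
  | _ t ih =>
    intro b lo h x y hxy
    match t with
    | 0 => rw [bal]; rfl
    | s + 1 =>
      rw [bal]
      simp only [DTree.eval]
      have hroot : x ⟨lo, by omega⟩ = y ⟨lo, by omega⟩ := hxy ⟨lo, by omega⟩ le_rfl (Nat.lt_add_of_pos_right (by omega))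
      rw [hroot]
      by_cases hy : y ⟨lo, by omega⟩
      · simp only [hy, if_true]
        exact ih _ (by omega) _ _ _ x y (fun j h1 h2 => hxy j (by omega) (by omega))
      · simp only [hy, if_false]
        exact ih _ (by omega) _ _ _ x y (fun j h1 h2 => hxy j (by omega) (by omega))

lemma eval_bal_false {n : ℕ} (t : ℕ) : ∀ (b : Bool) (lo : ℕ) (h : lo + t ≤ n)
    (x : Fin n → Bool), (∀ j : Fin n, lo ≤ j.val → j.val < lo + t → x j = false) →
    (bal b lo t h).eval x = b := by
  induction t using Nat.strong_induction_on with
  | _ t ih =>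
    intro b lo h x hx
    match t with
    | 0 => rw [bal]; rfl
    | s + 1 =>
      rw [bal]
      simp only [DTree.eval]
      have hroot : x ⟨lo, by omega⟩ = false := hx ⟨lo, by omega⟩ le_rfl (Nat.lt_add_of_pos_right (by omega))
      rw [hroot]
      simp only [Bool.false_eq_true, if_false]
      exact ih _ (by omega) _ _ _ x (fun j h1 h2 => hx j (by omega) (by omega))

lemma influences_bal {n : ℕ} (t : ℕ) : ∀ (b : Bool) (lo : ℕ) (h : lo + t ≤ n)
    (i : Fin n), lo ≤ i.val → i.val < lo + t →
    ∃ x x' : Fin n → Bool, (∀ j, j ≠ i → x j = x' j) ∧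
      (bal b lo t h).eval x ≠ (bal b lo t h).eval x' := by
  induction t using Nat.strong_induction_on with
  | _ t ih =>
    intro b lo h i hi1 hi2
    match t with
    | 0 => omega
    | s + 1 =>
      have hroot : (⟨lo, by omega⟩ : Fin n).val = lo := rfl
      by_cases hil : i.val = lo
      · -- i is the root variable
        have hieq : i = ⟨lo, by omega⟩ := Fin.ext hil
        refine ⟨fun _ => false, Function.update (fun _ => false) i true, ?_, ?_⟩
        · intro j hj; rw [Function.update_of_ne hj]
        · rw [bal]
          have e1 : (bal (n := n) b (lo+1) ((s+1)/2) (by omega)).eval (fun _ => false) = b :=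
            eval_bal_false _ _ _ _ _ (fun j _ _ => rfl)
          have e2 : (bal (n := n) (!b) (lo+1+(s+1)/2) (s-(s+1)/2) (by omega)).eval
              (Function.update (fun _ => false) i true) = !b := by
            apply eval_bal_false
            intro j hj1 hj2
            rw [Function.update_of_ne]
            intro hji
            rw [hji, hieq] at hj1
            exact absurd hj1 (by omega : ¬ (lo + 1 + (s+1)/2 ≤ lo))
          simp only [DTree.eval]
          simp only [show (Function.update (fun _ : Fin n => false) i true) ⟨lo, by omega⟩ = true from
            by rw [← hieq]; simp]
          simp only [Bool.false_eq_true, if_false, if_true, e1, e2]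
          simp
      · by_cases hileft : i.val < lo + 1 + (s + 1) / 2
        · -- i in left subtree
          obtain ⟨x, x', hxx, hne⟩ := ih ((s+1)/2) (by omega) b (lo+1) (by omega) i (by omega) (by omega)
          refine ⟨Function.update x ⟨lo, by omega⟩ false,
                  Function.update x' ⟨lo, by omega⟩ false, ?_, ?_⟩
          · intro j hj
            by_cases hjl : j = ⟨lo, by omega⟩
            · subst hjl; simp
            · rw [Function.update_of_ne hjl, Function.update_of_ne hjl]; exact hxx j hj
          · rw [bal]
            simp only [DTree.eval, Function.update_self, Bool.false_eq_true, if_false]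
            have e1 : (bal b (lo+1) ((s+1)/2) (by omega)).eval (Function.update x ⟨lo, by omega⟩ false)
                = (bal b (lo+1) ((s+1)/2) (by omega)).eval x := by
              apply eval_bal_congr
              intro j hj1 hj2
              rw [Function.update_of_ne]
              intro hjl
              rw [hjl] at hj1
              exact absurd hj1 (by omega)
            have e2 : (bal b (lo+1) ((s+1)/2) (by omega)).eval (Function.update x' ⟨lo, by omega⟩ false)
                = (bal b (lo+1) ((s+1)/2) (by omega)).eval x' := by
              apply eval_bal_congr
              intro j hj1 hj2
              rw [Function.update_of_ne]
              intro hjl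
              rw [hjl] at hj1
              exact absurd hj1 (by omega)
            rw [e1, e2]; exact hne
        · -- i in right subtree
          obtain ⟨x, x', hxx, hne⟩ := ih (s - (s+1)/2) (by omega) (!b) (lo+1+(s+1)/2) (by omega) i (by omega) (by omega)
          refine ⟨Function.update x ⟨lo, by omega⟩ true,
                  Function.update x' ⟨lo, by omega⟩ true, ?_, ?_⟩
          · intro j hj
            by_cases hjl : j = ⟨lo, by omega⟩
            · subst hjl; simp
            · rw [Function.update_of_ne hjl, Function.update_of_ne hjl]; exact hxx j hj
          · rw [bal]
            simp only [DTree.eval, Function.update_self, if_true]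
            
            have e1 : (bal (!b) (lo+1+(s+1)/2) (s-(s+1)/2) (by omega)).eval (Function.update x ⟨lo, by omega⟩ true)
                = (bal (!b) (lo+1+(s+1)/2) (s-(s+1)/2) (by omega)).eval x := by
              apply eval_bal_congr
              intro j hj1 hj2
              rw [Function.update_of_ne]
              intro hjl
              rw [hjl] at hj1
              exact absurd hj1 (by omega)
            have e2 : (bal (!b) (lo+1+(s+1)/2) (s-(s+1)/2) (by omega)).eval (Function.update x' ⟨lo, by omega⟩ true)
                = (bal (!b) (lo+1+(s+1)/2) (s-(s+1)/2) (by omega)).eval x' := by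
              apply eval_bal_congr
              intro j hj1 hj2
              rw [Function.update_of_ne]
              intro hjl
              rw [hjl] at hj1
              exact absurd hj1 (by omega)
            rw [e1, e2]; exact hne

end Aux

/-- (a) any function with `n` influencing variables needs decision
trees of depth at least `⌈log₂ (n+1)⌉ = Nat.clog 2 (n+1)`, and (b) some
function on `n` variables, all influencing, is computed by a decision tree of
exactly this depth.  Hence `DQ_n = ⌈log₂ (n+1)⌉`. -/
theorem stmt2 (n : ℕ) (hn : 1 ≤ n) :
    (∀ f : (Fin n → Bool) → Bool, (∀ i, Influences f i) →
      ∀ T : DTree n, T.Computes f → Nat.clog 2 (n + 1) ≤ T.depth) ∧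
    (∃ f : (Fin n → Bool) → Bool, (∀ i, Influences f i) ∧
      ∃ T : DTree n, T.Computes f ∧ T.depth = Nat.clog 2 (n + 1)) := by
  constructor
  · -- lower bound
    intro f hf T hT
    have hsub : (Finset.univ : Finset (Fin n)) ⊆ Aux.vars T := by
      intro i _
      by_contra hi
      obtain ⟨x, x', hxx, hne⟩ := hf i
      have hx' : x' = Function.update x i (x' i) := by
        funext j
        by_cases hj : j = i
        · subst hj; simp
        · rw [Function.update_of_ne hj]; exact (hxx j hj).symm
      have : T.eval x' = T.eval x := by
        rw [hx']; exact Aux.eval_update_not_mem T hi x (x' i)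
      rw [hT x, hT x'] at this
      exact hne this.symm
    have hcard : n ≤ (Aux.vars T).card := by
      have := Finset.card_le_card hsub
      simpa using this
    have h2 : n + 1 ≤ 2 ^ T.depth := le_trans (by omega) (Aux.card_vars_add_one_le T)
    exact (Nat.clog_le_iff_le_pow (by norm_num)).mpr h2
  · -- upper bound
    refine ⟨(Aux.bal false 0 n (by omega)).eval, ?_, Aux.bal false 0 n (by omega),
      fun x => rfl, Aux.depth_bal n false 0 (by omega)⟩
    intro i
    exact Aux.influences_bal n false 0 (by omega) i (by omega) (by omega)
end

section
/- Let k ≥ 1 and let f be a Boolean function on 2^k − 1 variables, all of whose variables are influencing, that is computed by a decision tree of depth k. Then there exist k distinct indices i_1, …, i_k, a Boolean e, and an assignment of constant Boolean values to the remaining 2^k − 1 − k variables such that the corresponding restriction of f equals the function z ↦ e XOR (z_{i_1} AND z_{i_2} AND … AND z_{i_k}); that is, f restricts to the k-variable AND function or its negation (the k-variable OR up to relabelling). -/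
namespace DTree

/-- List of variables queried in the tree (with multiplicity). -/
def varsList {n : ℕ} : DTree n → List (Fin n)
  | leaf _ => []
  | node i t0 t1 => i :: (varsList t0 ++ varsList t1)

lemma eval_congr {n : ℕ} (T : DTree n) {x x' : Fin n → Bool}
    (h : ∀ j ∈ T.varsList, x j = x' j) : T.eval x = T.eval x' := by
  induction T with
  | leaf b => rfl
  | node i t0 t1 ih0 ih1 =>
    have hi : x i = x' i := h i (by simp [varsList])
    simp only [eval, hi]
    cases x' i with
    | false => exact ih0 fun j hj => h j (by simp [varsList, hj])
    | true => exact ih1 fun j hj => h j (by simp [varsList, hj])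

lemma mem_varsList_of_influences {n : ℕ} (T : DTree n) (i : Fin n)
    (h : Influences T.eval i) : i ∈ T.varsList := by
  by_contra hi
  obtain ⟨x, x', hagree, hne⟩ := h
  exact hne (eval_congr T fun j hj => hagree j (fun hji => hi (hji ▸ hj)))

lemma length_varsList_le {n : ℕ} (T : DTree n) :
    T.varsList.length ≤ 2 ^ T.depth - 1 := by
  induction T with
  | leaf b => simp [varsList, depth]
  | node i t0 t1 ih0 ih1 =>
    have h0 : 2 ^ t0.depth ≤ 2 ^ (max t0.depth t1.depth) :=
      Nat.pow_le_pow_right (by norm_num) (le_max_left _ _)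
    have h1 : 2 ^ t1.depth ≤ 2 ^ (max t0.depth t1.depth) :=
      Nat.pow_le_pow_right (by norm_num) (le_max_right _ _)
    have hp0 : 1 ≤ 2 ^ t0.depth := Nat.one_le_two_pow
    have hp1 : 1 ≤ 2 ^ t1.depth := Nat.one_le_two_pow
    simp only [varsList, depth, List.length_cons, List.length_append, pow_succ]
    omega

/-- Perfect tree of given depth: all leaves at the same depth. -/
inductive IsPerfect {n : ℕ} : DTree n → ℕ → Prop
  | leaf (b : Bool) : IsPerfect (.leaf b) 0
  | node (i : Fin n) (t0 t1 : DTree n) (k : ℕ) :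
      IsPerfect t0 k → IsPerfect t1 k → IsPerfect (.node i t0 t1) (k + 1)

lemma isPerfect_of_count {n : ℕ} (T : DTree n) :
    ∀ k : ℕ, T.depth ≤ k → T.varsList.length = 2 ^ k - 1 → IsPerfect T k := by
  induction T with
  | leaf b =>
    intro k _ hl
    have : 2 ^ k = 1 := by
      have : 1 ≤ 2 ^ k := Nat.one_le_two_pow
      simp [varsList] at hl; omega
    have hk : k = 0 := by
      rcases Nat.eq_zero_or_pos k with h | h
      · exact h
      · exfalso; have := Nat.one_lt_two_pow_iff.2 (show k ≠ 0 by omega); omega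
    subst hk; exact .leaf b
  | node i t0 t1 ih0 ih1 =>
    intro k hd hl
    simp only [depth] at hd
    obtain ⟨m, rfl⟩ : ∃ m, k = m + 1 := ⟨k - 1, by omega⟩
    have hd0 : t0.depth ≤ m := by omega
    have hd1 : t1.depth ≤ m := by omega
    have hl0 : t0.varsList.length ≤ 2 ^ m - 1 :=
      le_trans (length_varsList_le t0) (by
        have := Nat.pow_le_pow_right (show 1 ≤ 2 by norm_num) hd0; omega)
    have hl1 : t1.varsList.length ≤ 2 ^ m - 1 :=
      le_trans (length_varsList_le t1) (by
        have := Nat.pow_le_pow_right (show 1 ≤ 2 by norm_num) hd1; omega)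
    have hp : 1 ≤ 2 ^ m := Nat.one_le_two_pow
    simp only [varsList, List.length_cons, List.length_append, pow_succ] at hl
    have he0 : t0.varsList.length = 2 ^ m - 1 := by omega
    have he1 : t1.varsList.length = 2 ^ m - 1 := by omega
    exact .node i t0 t1 m (ih0 m hd0 he0) (ih1 m hd1 he1)

lemma nodup_node {n : ℕ} {j : Fin n} {t0 t1 : DTree n}
    (hnd : (DTree.node j t0 t1).varsList.Nodup) :
    j ∉ t0.varsList ∧ j ∉ t1.varsList ∧ t0.varsList.Nodup ∧ t1.varsList.Nodup ∧
      ∀ a ∈ t0.varsList, a ∉ t1.varsList := by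
  simp only [varsList, List.nodup_cons, List.nodup_append, List.mem_append] at hnd
  exact ⟨fun h => hnd.1 (Or.inl h), fun h => hnd.1 (Or.inr h),
    hnd.2.1, hnd.2.2.1, fun a ha hb => hnd.2.2.2 a ha a hb rfl⟩

lemma influences_left {n : ℕ} {j : Fin n} {t0 t1 : DTree n}
    (hnd : (DTree.node j t0 t1).varsList.Nodup)
    {i : Fin n} (hi : i ∈ t0.varsList)
    (h : Influences (DTree.node j t0 t1).eval i) : Influences t0.eval i := by
  obtain ⟨hj0, hj1, _, _, hdisj⟩ := nodup_node hnd
  obtain ⟨x, x', hagree, hne⟩ := h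
  have hij : j ≠ i := by rintro rfl; exact hj0 hi
  have hj : x j = x' j := hagree j hij
  simp only [eval] at hne
  cases hxj : x j with
  | false =>
    rw [hxj] at hne; rw [hxj] at hj; rw [← hj] at hne
    simp only [if_false, Bool.false_eq_true] at hne
    exact ⟨x, x', hagree, hne⟩
  | true =>
    exfalso
    rw [hxj] at hne; rw [hxj] at hj; rw [← hj] at hne
    simp only [if_true] at hne
    exact hne (eval_congr t1 fun v hv => hagree v (fun hvi => (hdisj i hi) (hvi ▸ hv)))

lemma influences_right {n : ℕ} {j : Fin n} {t0 t1 : DTree n}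
    (hnd : (DTree.node j t0 t1).varsList.Nodup)
    {i : Fin n} (hi : i ∈ t1.varsList)
    (h : Influences (DTree.node j t0 t1).eval i) : Influences t1.eval i := by
  obtain ⟨hj0, hj1, _, _, hdisj⟩ := nodup_node hnd
  obtain ⟨x, x', hagree, hne⟩ := h
  have hij : j ≠ i := by rintro rfl; exact hj1 hi
  have hj : x j = x' j := hagree j hij
  simp only [eval] at hne
  cases hxj : x j with
  | true =>
    rw [hxj] at hne; rw [hxj] at hj; rw [← hj] at hne
    simp only [if_true] at hne
    exact ⟨x, x', hagree, hne⟩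
  | false =>
    exfalso
    rw [hxj] at hne; rw [hxj] at hj; rw [← hj] at hne
    simp only [if_false, Bool.false_eq_true] at hne
    exact hne (eval_congr t0 fun v hv =>
      hagree v (fun hvi => (hdisj v hv) (hvi ▸ hi)))

/-- A perfect tree of positive depth, all of whose variables influence it,
can be steered to any value by fixing its variables. -/
lemma steer {n : ℕ} : ∀ (k : ℕ) (T : DTree n), IsPerfect T (k + 1) →
    T.varsList.Nodup → (∀ i ∈ T.varsList, Influences T.eval i) → ∀ e : Bool,
    ∃ c : Fin n → Bool, ∀ x, (∀ v ∈ T.varsList, x v = c v) → T.eval x = e := by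
  intro k
  induction k with
  | zero =>
    intro T hp hnd hinf e
    rcases hp with ⟨⟩ | ⟨i, t0, t1, _, hp0, hp1⟩
    rcases hp0 with ⟨b0⟩
    rcases hp1 with ⟨b1⟩
    have hne : b0 ≠ b1 := by
      rintro rfl
      obtain ⟨x, x', _, hne⟩ := hinf i (by simp [varsList])
      exact hne (by simp [eval])
    refine ⟨fun _ => (b1 == e), fun x hx => ?_⟩
    have hxi : x i = (b1 == e) := hx i (by simp [varsList])
    cases b0 <;> cases b1 <;> cases e <;> simp_all [eval]
  | succ k ih =>
    intro T hp hnd hinf e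
    rcases hp with ⟨⟩ | ⟨i, t0, t1, _, hp0, hp1⟩
    obtain ⟨hj0, hj1, hnd0, hnd1, hdisj⟩ := nodup_node hnd
    have hinf0 : ∀ v ∈ t0.varsList, Influences t0.eval v := fun v hv =>
      influences_left hnd hv (hinf v (by simp [varsList, hv]))
    obtain ⟨c0, hc0⟩ := ih t0 hp0 hnd0 hinf0 e
    refine ⟨Function.update c0 i false, fun x hx => ?_⟩
    have hxi : x i = false := by
      have := hx i (by simp [varsList]); simpa using this
    simp only [eval, hxi, if_false, Bool.false_eq_true]
    refine hc0 x fun v hv => ?_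
    have hvi : v ≠ i := fun h => hj0 (h ▸ hv)
    have := hx v (by simp [varsList, hv])
    rwa [Function.update_of_ne hvi] at this

/-- Main induction: a perfect tree of depth `k+1` with nodup variables, all
influencing, restricts to an AND (up to XOR) on some path. -/
lemma main {n : ℕ} : ∀ (k : ℕ) (T : DTree n), IsPerfect T (k + 1) →
    T.varsList.Nodup → (∀ i ∈ T.varsList, Influences T.eval i) →
    ∃ idx : Fin (k + 1) → Fin n, Function.Injective idx ∧
      (∀ t, idx t ∈ T.varsList) ∧
      ∃ (e : Bool) (c : Fin n → Bool),
        ∀ x, (∀ v ∈ T.varsList, (∀ t, idx t ≠ v) → x v = c v) →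
          T.eval x = xor e (decide (∀ t, x (idx t) = true)) := by
  intro k
  induction k with
  | zero =>
    intro T hp hnd hinf
    rcases hp with ⟨⟩ | ⟨i, t0, t1, _, hp0, hp1⟩
    rcases hp0 with ⟨b0⟩
    rcases hp1 with ⟨b1⟩
    have hne : b0 ≠ b1 := by
      rintro rfl
      obtain ⟨x, x', _, hne⟩ := hinf i (by simp [varsList])
      exact hne (by simp [eval])
    refine ⟨fun _ => i, fun a b _ => by fin_cases a <;> fin_cases b <;> rfl,
      fun t => by simp [varsList], b0, fun _ => false, fun x _ => ?_⟩
    have : (∀ t : Fin 1, x i = true) ↔ x i = true := ⟨fun h => h 0, fun h _ => h⟩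
    rw [show (decide (∀ t : Fin 1, x i = true)) = decide (x i = true) by
      simp [this]]
    cases hxi : x i <;> cases b0 <;> cases b1 <;> simp_all [eval]
  | succ k ih =>
    intro T hp hnd hinf
    rcases hp with ⟨⟩ | ⟨j, t0, t1, _, hp0, hp1⟩
    obtain ⟨hj0, hj1, hnd0, hnd1, hdisj⟩ := nodup_node hnd
    have hinf1 : ∀ v ∈ t1.varsList, Influences t1.eval v := fun v hv =>
      influences_right hnd hv (hinf v (by simp [varsList, hv]))
    have hinf0 : ∀ v ∈ t0.varsList, Influences t0.eval v := fun v hv =>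
      influences_left hnd hv (hinf v (by simp [varsList, hv]))
    obtain ⟨idx1, hinj1, hmem1, e1, c1, h1⟩ := ih t1 hp1 hnd1 hinf1
    obtain ⟨c0, hc0⟩ := steer k t0 hp0 hnd0 hinf0 e1
    refine ⟨(Fin.cons j idx1 : Fin (k + 2) → Fin n), ?_, ?_, e1,
      fun v => if v ∈ t0.varsList then c0 v else c1 v, ?_⟩
    · refine Fin.cons_injective_of_injective ?_ hinj1
      rintro ⟨t, rfl⟩
      exact hj1 (hmem1 t)
    · intro t
      refine Fin.cases ?_ (fun s => ?_) t
      · simp [varsList]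
      · simp only [Fin.cons_succ]
        simp [varsList, hmem1 s]
    · intro x hx
      have hforall : (∀ t : Fin (k + 2), x ((Fin.cons j idx1 : Fin (k + 2) → Fin n) t) = true) ↔
          (x j = true ∧ ∀ s : Fin (k + 1), x (idx1 s) = true) := by
        rw [Fin.forall_fin_succ]
        simp [Fin.cons_succ]
      cases hxj : x j with
      | false =>
        -- goes into t0; steered to e1
        have he : t0.eval x = e1 := by
          refine hc0 x fun v hv => ?_
          have hxv : x v = (if v ∈ t0.varsList then c0 v else c1 v) := by
            refine hx v (by simp [varsList, hv]) ?_
            intro t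
            refine Fin.cases ?_ (fun s => ?_) t
            · simp only [Fin.cons_zero]; rintro rfl; exact hj0 hv
            · simp only [Fin.cons_succ]; intro h; exact hdisj v hv (h ▸ hmem1 s)
          rwa [if_pos hv] at hxv
        simp only [eval, hxj, if_false, Bool.false_eq_true, he]
        have : ¬ (∀ t : Fin (k + 2), x ((Fin.cons j idx1 : Fin (k + 2) → Fin n) t) = true) := by
          rw [hforall]; rintro ⟨h, -⟩; rw [hxj] at h; exact absurd h (by simp)
        simp [this]
      | true =>
        have he : t1.eval x = xor e1 (decide (∀ s, x (idx1 s) = true)) := by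
          refine h1 x fun v hv hvt => ?_
          have hv0 : v ∉ t0.varsList := fun h => hdisj v h hv
          have hxv : x v = (if v ∈ t0.varsList then c0 v else c1 v) := by
            refine hx v (by simp [varsList, hv]) ?_
            intro t
            refine Fin.cases ?_ (fun s => ?_) t
            · simp only [Fin.cons_zero]; rintro rfl; exact hj1 hv
            · simp only [Fin.cons_succ]; exact hvt s
          rwa [if_neg hv0] at hxv
        simp only [eval, hxj, if_true, he]
        congr 1
        rw [decide_eq_decide, hforall]
        simp [hxj]

end DTree

/-- any Boolean function on `2^k - 1` variables, all influencing,
computed by a depth-`k` decision tree, restricts (after fixing the remaining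
variables to constants `c`) to `z ↦ e XOR (z_{i_1} AND ... AND z_{i_k})` on
some `k` distinct variables. -/
theorem stmt3 (k : ℕ) (hk : 1 ≤ k) (f : (Fin (2 ^ k - 1) → Bool) → Bool)
    (hinf : ∀ i, Influences f i)
    (T : DTree (2 ^ k - 1)) (hdepth : T.depth = k) (hcomp : T.Computes f) :
    ∃ idx : Fin k → Fin (2 ^ k - 1), Function.Injective idx ∧
      ∃ (e : Bool) (c : Fin (2 ^ k - 1) → Bool),
        ∀ x : Fin (2 ^ k - 1) → Bool,
          (∀ v, (∀ t, idx t ≠ v) → x v = c v) →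
          f x = xor e (decide (∀ t, x (idx t) = true)) := by
  have hfe : T.eval = f := funext hcomp
  have hinfT : ∀ i, Influences T.eval i := by rw [hfe]; exact hinf
  have hmem : ∀ i, i ∈ T.varsList := fun i =>
    T.mem_varsList_of_influences i (hinfT i)
  have hle : T.varsList.length ≤ 2 ^ k - 1 := by
    have := T.length_varsList_le; rwa [hdepth] at this
  have htf : T.varsList.toFinset = Finset.univ :=
    Finset.eq_univ_iff_forall.2 fun i => List.mem_toFinset.2 (hmem i)
  have hge : 2 ^ k - 1 ≤ T.varsList.length := by
    have h1 : T.varsList.toFinset.card = 2 ^ k - 1 := by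
      rw [htf, Finset.card_univ, Fintype.card_fin]
    have := List.toFinset_card_le T.varsList
    omega
  have hlen : T.varsList.length = 2 ^ k - 1 := le_antisymm hle hge
  have hnd : T.varsList.Nodup := by
    rw [← Multiset.coe_nodup, ← Multiset.toFinset_card_eq_card_iff_nodup]
    show T.varsList.toFinset.card = _
    rw [htf, Finset.card_univ, Fintype.card_fin, Multiset.coe_card, hlen]
  obtain ⟨m, rfl⟩ : ∃ m, k = m + 1 := ⟨k - 1, by omega⟩
  have hperf : DTree.IsPerfect T (m + 1) :=
    T.isPerfect_of_count (m + 1) (le_of_eq hdepth) hlen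
  obtain ⟨idx, hinj, -, e, c, hmain⟩ := DTree.main m T hperf hnd
    (fun i _ => hinfT i)
  refine ⟨idx, hinj, e, c, fun x hx => ?_⟩
  rw [← hcomp x]
  exact hmain x fun v _ hvt => hx v hvt
end

section
/- For every k ≥ 2 and every n with 2^{k−1} − 1 < n < 2^k − 1, there exists a Boolean function f on n variables, all of whose variables are influencing, such that f is computed by a decision tree of depth k and there exist k distinct indices i_1, …, i_k, Booleans d_1, …, d_k, and an assignment of constants to the remaining n − k variables such that the corresponding restriction of f equals z ↦ ⋀_{t=1}^{k} (z_{i_t} XOR d_t); that is, f restricts to a function isomorphic to the k-variable AND. -/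
def Htree {n : ℕ} (var : ℕ → Fin n) (s : ℕ) : ℕ → ℕ → Bool → DTree n
  | 0, _, b => .leaf b
  | d+1, i, b =>
    if i < s then .node (var i) (Htree var s d (2*i+1) b) (Htree var s d (2*i+2) (!b))
    else .leaf b

lemma Htree_depth {n : ℕ} (var : ℕ → Fin n) (s : ℕ) :
    ∀ (d i : ℕ) (b : Bool), (Htree var s d i b).depth ≤ d := by
  intro d
  induction d with
  | zero => intro i b; simp [Htree, DTree.depth]
  | succ d ih =>
    intro i b
    by_cases h : i < s
    · simp only [Htree, if_pos h, DTree.depth]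
      have := ih (2*i+1) b
      have := ih (2*i+2) (!b)
      omega
    · simp [Htree, if_neg h, DTree.depth]

/-- If all block variables (with heap index ≥ i) are false, evaluation is b. -/
lemma Htree_eval_false {n : ℕ} (var : ℕ → Fin n) (s : ℕ) :
    ∀ (d i : ℕ) (b : Bool) (x : Fin n → Bool),
      (∀ m, i ≤ m → m < s → x (var m) = false) →
      (Htree var s d i b).eval x = b := by
  intro d
  induction d with
  | zero => intro i b x _; simp [Htree, DTree.eval]
  | succ d ih =>
    intro i b x hx
    by_cases h : i < s
    · simp only [Htree, if_pos h, DTree.eval]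
      rw [hx i le_rfl h]
      simp only [Bool.false_eq_true, if_false]
      exact ih (2*i+1) b x (fun m hm hms => hx m (by omega) hms)
    · simp [Htree, if_neg h, DTree.eval]

/-- Evaluation only depends on block variables with heap index ≥ i. -/
lemma Htree_eval_congr {n : ℕ} (var : ℕ → Fin n) (s : ℕ) :
    ∀ (d i : ℕ) (b : Bool) (x y : Fin n → Bool),
      (∀ m, i ≤ m → m < s → x (var m) = y (var m)) →
      (Htree var s d i b).eval x = (Htree var s d i b).eval y := by
  intro d
  induction d with
  | zero => intro i b x y _; simp [Htree, DTree.eval]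
  | succ d ih =>
    intro i b x y hxy
    by_cases h : i < s
    · simp only [Htree, if_pos h, DTree.eval]
      rw [hxy i le_rfl h]
      by_cases hv : y (var i) = true
      · rw [hv]; simp only [if_true]
        exact ih (2*i+2) (!b) x y (fun m hm hms => hxy m (by omega) hms)
      · simp only [Bool.not_eq_true] at hv
        rw [hv]; simp only [Bool.false_eq_true, if_false]
        exact ih (2*i+1) b x y (fun m hm hms => hxy m (by omega) hms)
    · simp [Htree, if_neg h, DTree.eval]

/-- Influence inside the parity tree. -/
lemma Htree_influence {n : ℕ} (var : ℕ → Fin n) (s : ℕ)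
    (inj : ∀ a b, a < s → b < s → var a = var b → a = b) :
    ∀ (t d i : ℕ) (b : Bool) (j : ℕ), t < d → j < s → (j+1) / 2^t = i+1 →
    ∃ x : Fin n → Bool,
      (∀ v, (∀ m, m < s → v ≠ var m) → x v = false) ∧
      (∀ m, m < s → m < i → x (var m) = false) ∧
      x (var j) = false ∧
      (Htree var s d i b).eval x ≠
        (Htree var s d i b).eval (Function.update x (var j) true) := by
  intro t
  induction t with
  | zero =>
    intro d i b j htd hjs hdiv
    obtain ⟨d, rfl⟩ : ∃ d', d = d' + 1 := ⟨d - 1, by omega⟩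
    simp only [pow_zero, Nat.div_one] at hdiv
    have hij : i = j := by omega
    subst hij
    refine ⟨fun _ => false, fun _ _ => rfl, fun _ _ _ => rfl, rfl, ?_⟩
    have h1 : (Htree var s (d+1) i b).eval (fun _ => false) = b := by
      apply Htree_eval_false; intro m _ _; rfl
    have h2 : (Htree var s (d+1) i b).eval (Function.update (fun _ => false) (var i) true) = !b := by
      simp only [Htree, if_pos hjs, DTree.eval, Function.update_self, if_true]
      apply Htree_eval_false
      intro m hm hms
      rw [Function.update_of_ne]
      intro hvm
      exact absurd (inj m i hms hjs hvm) (by omega)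
    rw [h1, h2]
    simp
  | succ t ih =>
    intro d i b j htd hjs hdiv
    obtain ⟨d, rfl⟩ : ∃ d', d = d' + 1 := ⟨d - 1, by omega⟩
    -- q = (j+1)/2^t, q/2 = i+1
    set q := (j+1) / 2^t with hq
    have hq2 : q / 2 = i + 1 := by
      rw [hq, Nat.div_div_eq_div_mul, ← pow_succ]; exact hdiv
    have hij : i < j := by
      have h2le : 2 ≤ 2^(t+1) := by
        have := Nat.one_lt_two_pow (n := t+1) (by omega); omega
      have : i + 1 ≤ (j+1) / 2 := by
        calc i + 1 = (j+1) / 2^(t+1) := hdiv.symm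
        _ ≤ (j+1) / 2 := Nat.div_le_div_left h2le (by omega)
      omega
    have his : i < s := by omega
    -- determine the child i'
    have hq' : q = 2*i+2 ∨ q = 2*i+3 := by omega
    rcases hq' with hq' | hq'
    · -- left child i' = 2i+1
      obtain ⟨x, hoff, hlow, hxj, hne⟩ := ih d (2*i+1) b j (by omega) hjs (by omega)
      refine ⟨x, hoff, fun m hms hmi => hlow m hms (by omega), hxj, ?_⟩
      have hxi : x (var i) = false := hlow i his (by omega)
      have hx'i : Function.update x (var j) true (var i) = false := by
        rw [Function.update_of_ne, hxi]
        intro h; exact absurd (inj i j his hjs h) (by omega)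
      simp only [Htree, if_pos his, DTree.eval, hxi, hx'i, Bool.false_eq_true, if_false]
      exact hne
    · -- right child i' = 2i+2
      obtain ⟨x, hoff, hlow, hxj, hne⟩ := ih d (2*i+2) (!b) j (by omega) hjs (by omega)
      have hvij : var i ≠ var j := by
        intro h; exact absurd (inj i j his hjs h) (by omega)
      refine ⟨Function.update x (var i) true, ?_, ?_, ?_, ?_⟩
      · intro v hv
        rw [Function.update_of_ne (hv i his), hoff v hv]
      · intro m hms hmi
        rw [Function.update_of_ne, hlow m hms (by omega)]
        intro h; exact absurd (inj m i hms his h) (by omega)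
      · rw [Function.update_of_ne hvij.symm, hxj]
      · have hu1 : Function.update x (var i) true (var i) = true := Function.update_self _ _ _
        have hu2 : Function.update (Function.update x (var i) true) (var j) true (var i) = true := by
          rw [Function.update_of_ne hvij]; exact hu1
        simp only [Htree, if_pos his, DTree.eval, hu1, hu2, if_true]
        have e1 : (Htree var s d (2*i+2) (!b)).eval (Function.update x (var i) true)
            = (Htree var s d (2*i+2) (!b)).eval x := by
          apply Htree_eval_congr
          intro m hm hms
          rw [Function.update_of_ne]
          intro h; exact absurd (inj m i hms his h) (by omega)
        have e2 : (Htree var s d (2*i+2) (!b)).eval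
              (Function.update (Function.update x (var i) true) (var j) true)
            = (Htree var s d (2*i+2) (!b)).eval (Function.update x (var j) true) := by
          apply Htree_eval_congr
          intro m hm hms
          by_cases hmj : m = j
          · subst hmj; rw [Function.update_self, Function.update_self]
          · have hvmj : var m ≠ var j := fun h => hmj (inj m j hms hjs h)
            rw [Function.update_of_ne hvmj, Function.update_of_ne hvmj, Function.update_of_ne]
            intro h; exact absurd (inj m i hms his h) (by omega)
        rw [e1, e2]
        exact hne

/-- Size of the side block at the root of the main chain with `r+1` steps left
and `m` variables to place. -/
def blkS (r m : ℕ) : ℕ := min (2^r - 1) (m - (r+1))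

/-- The main tree: a chain of `r` queries; each false-branch holds a parity
block; the all-true leaf is `true`. -/
def buildT {n : ℕ} (var : ℕ → Fin n) : ℕ → ℕ → ℕ → DTree n
  | 0, _, _ => .leaf true
  | r+1, m, p =>
    .node (var p)
      (Htree (fun i => var (p+1+i)) (blkS r m) r 0 false)
      (buildT var r (m - 1 - blkS r m) (p + 1 + blkS r m))

/-- Positions of the main-chain variables. -/
def posF : ℕ → ℕ → ℕ → ℕ → ℕ
  | 0, _, p, _ => p
  | _+1, _, p, 0 => p
  | r+1, m, p, t+1 => posF r (m - 1 - blkS r m) (p + 1 + blkS r m) t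

lemma blkS_facts (r m : ℕ) (h1 : r + 1 ≤ m) (h2 : m < 2^(r+1)) :
    blkS r m + (r + 1) ≤ m ∧ r ≤ m - 1 - blkS r m ∧ m - 1 - blkS r m < 2^r ∧
    blkS r m < 2^r := by
  have hp : 1 ≤ 2^r := Nat.one_le_two_pow
  have hr : r < 2^r := Nat.lt_two_pow_self
  have h2' : m < 2^r + 2^r := by rw [pow_succ] at h2; omega
  unfold blkS
  rcases le_total (2^r - 1) (m - (r+1)) with h | h
  · rw [min_eq_left h]; omega
  · rw [min_eq_right h]; omega

lemma buildT_depth {n : ℕ} (var : ℕ → Fin n) :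
    ∀ (r m p : ℕ), (buildT var r m p).depth = r := by
  intro r
  induction r with
  | zero => intro m p; simp [buildT, DTree.depth]
  | succ r ih =>
    intro m p
    simp only [buildT, DTree.depth]
    rw [ih]
    have := Htree_depth (fun i => var (p+1+i)) (blkS r m) r 0 false
    omega

lemma posF_ge {r m p t : ℕ} : p ≤ posF r m p t := by
  induction r generalizing m p t with
  | zero => simp [posF]
  | succ r ih =>
    cases t with
    | zero => simp [posF]
    | succ t => exact le_trans (by omega) (ih (m := m - 1 - blkS r m) (p := p + 1 + blkS r m) (t := t))

lemma posF_mono {r m p : ℕ} : ∀ {a b : ℕ}, a < b → b < r → posF r m p a < posF r m p b := by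
  induction r generalizing m p with
  | zero => intro a b _ h; omega
  | succ r ih =>
    intro a b hab hbr
    cases a with
    | zero =>
      obtain ⟨b, rfl⟩ : ∃ b', b = b' + 1 := ⟨b - 1, by omega⟩
      show posF (r+1) m p 0 < posF (r+1) m p (b+1)
      simp only [posF]
      exact lt_of_lt_of_le (by omega) posF_ge
    | succ a =>
      obtain ⟨b, rfl⟩ : ∃ b', b = b' + 1 := ⟨b - 1, by omega⟩
      show posF (r+1) m p (a+1) < posF (r+1) m p (b+1)
      simp only [posF]
      exact ih (by omega) (by omega)

lemma posF_lt {r m p t : ℕ} (h1 : r ≤ m) (h2 : m < 2^r) (ht : t < r) :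
    posF r m p t < p + m := by
  induction r generalizing m p t with
  | zero => omega
  | succ r ih =>
    cases t with
    | zero => simp only [posF]; omega
    | succ t =>
      obtain ⟨hs1, hs2, hs3, _⟩ := blkS_facts r m h1 h2
      have hkey := ih (m := m - 1 - blkS r m) (p := p + 1 + blkS r m) (t := t) hs2 hs3 (by omega)
      have : posF (r+1) m p (t+1) = posF r (m - 1 - blkS r m) (p + 1 + blkS r m) t := rfl
      rw [this]
      generalize hB : blkS r m = B at *
      omega

lemma buildT_eval_congr {n : ℕ} (var : ℕ → Fin n) :
    ∀ (r m p : ℕ), r ≤ m → ∀ (x y : Fin n → Bool),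
      (∀ i, p ≤ i → i < p + m → x (var i) = y (var i)) →
      (buildT var r m p).eval x = (buildT var r m p).eval y := by
  intro r
  induction r with
  | zero => intro m p _ x y _; simp [buildT, DTree.eval]
  | succ r ih =>
    intro m p h1 x y hxy
    have hs : blkS r m + (r + 1) ≤ m := by
      have : blkS r m ≤ m - (r+1) := min_le_right _ _
      omega
    simp only [buildT, DTree.eval]
    rw [hxy p (le_refl p) (by omega)]
    by_cases hv : y (var p) = true
    · rw [hv]; simp only [if_true]
      exact ih (m - 1 - blkS r m) (p + 1 + blkS r m) (by omega) x y
        (fun i hi1 hi2 => hxy i (by omega) (by omega))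
    · simp only [Bool.not_eq_true] at hv
      rw [hv]; simp only [Bool.false_eq_true, if_false]
      exact Htree_eval_congr _ _ r 0 false x y
        (fun m' _ hm's => hxy (p+1+m') (by omega) (by omega))

lemma buildT_eval_AND {n : ℕ} (var : ℕ → Fin n) :
    ∀ (r m p : ℕ), r ≤ m → m < 2^r → ∀ (x : Fin n → Bool),
      (∀ i, p ≤ i → i < p + m → (∀ t, t < r → posF r m p t ≠ i) → x (var i) = false) →
      (buildT var r m p).eval x = decide (∀ t, t < r → x (var (posF r m p t)) = true) := by
  intro r
  induction r with
  | zero => intro m p _ _ x _; simp [buildT, DTree.eval]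
  | succ r ih =>
    intro m p h1 h2 x hx
    obtain ⟨hs1, hs2, hs3, hs4⟩ := blkS_facts r m h1 h2
    simp only [buildT, DTree.eval]
    by_cases hv : x (var p) = true
    · rw [hv]; simp only [if_true]
      have heq : (buildT var r (m - 1 - blkS r m) (p + 1 + blkS r m)).eval x
          = decide (∀ t, t < r →
              x (var (posF r (m - 1 - blkS r m) (p + 1 + blkS r m) t)) = true) := by
        apply ih _ _ hs2 hs3
        intro i hi1 hi2 hi3
        apply hx i (by omega) (by omega)
        intro t ht
        cases t with
        | zero => simp only [posF]; omega
        | succ t =>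
          show posF r (m - 1 - blkS r m) (p + 1 + blkS r m) t ≠ i
          exact hi3 t (by omega)
      rw [heq]
      apply decide_eq_decide.mpr
      constructor
      · intro h t ht
        cases t with
        | zero => simpa [posF] using hv
        | succ t => exact h t (by omega)
      · intro h t ht
        exact h (t+1) (by omega)
    · simp only [Bool.not_eq_true] at hv
      rw [hv]; simp only [Bool.false_eq_true, if_false]
      have hL : (Htree (fun i => var (p+1+i)) (blkS r m) r 0 false).eval x = false := by
        apply Htree_eval_false
        intro m' _ hm'
        apply hx (p+1+m') (by omega) (by omega)
        intro t ht
        cases t with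
        | zero => simp only [posF]; omega
        | succ t =>
          show posF r (m - 1 - blkS r m) (p + 1 + blkS r m) t ≠ p + 1 + m'
          have := posF_ge (r := r) (m := m - 1 - blkS r m) (p := p + 1 + blkS r m) (t := t)
          omega
      rw [hL]
      symm
      rw [decide_eq_false_iff_not]
      intro h
      have := h 0 (by omega)
      simp only [posF] at this
      rw [hv] at this
      exact Bool.false_ne_true this

lemma buildT_influence {n : ℕ} (var : ℕ → Fin n)
    (inj : ∀ a b, a < n → b < n → var a = var b → a = b) :
    ∀ (r m p : ℕ), r ≤ m → m < 2^r → p + m ≤ n → ∀ i, p ≤ i → i < p + m →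
    ∃ x : Fin n → Bool, x (var i) = false ∧
      (buildT var r m p).eval x ≠ (buildT var r m p).eval (Function.update x (var i) true) := by
  intro r
  induction r with
  | zero => intro m p h1 h2 _ i hi1 hi2; omega
  | succ r ih =>
    intro m p h1 h2 hpn i hi1 hi2
    obtain ⟨hs1, hs2, hs3, hs4⟩ := blkS_facts r m h1 h2
    set s := blkS r m with hsdef
    set p' := p + 1 + s with hp'def
    set m' := m - 1 - s with hm'def
    have hpm : p' + m' = p + m := by omega
    rcases Nat.lt_or_ge i p' with hcase | hcase
    · rcases Nat.lt_or_ge i (p+1) with hcase2 | hcase2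
      · -- i = p : the main variable at the root
        have hip : i = p := by omega
        rw [hip]
        -- x is true exactly on the main positions of the right subtree
        refine ⟨fun v => decide (∃ t, t < r ∧ var (posF r m' p' t) = v), ?_, ?_⟩
        · rw [decide_eq_false_iff_not]
          rintro ⟨t, ht, hvt⟩
          have hlt := posF_lt (r := r) (m := m') (p := p') (t := t) hs2 hs3 ht
          have hge := posF_ge (r := r) (m := m') (p := p') (t := t)
          have := inj _ _ (by omega) (by omega) hvt
          omega
        · set x : Fin n → Bool := fun v => decide (∃ t, t < r ∧ var (posF r m' p' t) = v) with hxdef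
          have hxblk : ∀ m'', m'' < s → x (var (p+1+m'')) = false := by
            intro m'' hm''
            rw [hxdef]
            simp only [decide_eq_false_iff_not]
            rintro ⟨t, ht, hvt⟩
            have hlt := posF_lt (r := r) (m := m') (p := p') (t := t) hs2 hs3 ht
            have hge := posF_ge (r := r) (m := m') (p := p') (t := t)
            have := inj _ _ (by omega) (by omega) hvt
            omega
          have hxp : x (var p) = false := by
            rw [hxdef]
            simp only [decide_eq_false_iff_not]
            rintro ⟨t, ht, hvt⟩
            have hlt := posF_lt (r := r) (m := m') (p := p') (t := t) hs2 hs3 ht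
            have hge := posF_ge (r := r) (m := m') (p := p') (t := t)
            have := inj _ _ (by omega) (by omega) hvt
            omega
          have hupd : Function.update x (var p) true (var p) = true := Function.update_self _ _ _
          simp only [buildT, DTree.eval, hxp, hupd, if_true, Bool.false_eq_true, if_false]
          have hL : (Htree (fun i => var (p+1+i)) s r 0 false).eval x = false :=
            Htree_eval_false _ _ r 0 false x (fun m'' _ h2'' => hxblk m'' h2'')
          have hR1 : (buildT var r m' p').eval (Function.update x (var p) true)
              = (buildT var r m' p').eval x := by
            apply buildT_eval_congr var r m' p' hs2
            intro q hq1 hq2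
            rw [Function.update_of_ne]
            intro h
            have := inj _ _ (by omega) (by omega) h
            omega
          have hR2 : (buildT var r m' p').eval x = true := by
            rw [buildT_eval_AND var r m' p' hs2 hs3 x ?_]
            · rw [decide_eq_true_iff]
              intro t ht
              rw [hxdef]
              simp only [decide_eq_true_iff]
              exact ⟨t, ht, rfl⟩
            · intro q hq1 hq2 hq3
              rw [hxdef]
              simp only [decide_eq_false_iff_not]
              rintro ⟨t, ht, hvt⟩
              exact hq3 t ht (inj _ _ (posF_lt hs2 hs3 ht |>.trans_le (by omega))
                (by omega) hvt)
          rw [hL, hR1, hR2]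
          simp
      · -- p+1 ≤ i < p+1+s : a block variable
        set j := i - (p+1) with hjdef
        have hjs : j < s := by omega
        have hij : i = p + 1 + j := by omega
        have hinj' : ∀ a b, a < s → b < s → var (p+1+a) = var (p+1+b) → a = b := by
          intro a b ha hb h
          have := inj (p+1+a) (p+1+b) (by omega) (by omega) h
          omega
        -- the log₂ depth of j in the heap
        set t := Nat.log 2 (j+1) with htdef
        have ht1 : 2^t ≤ j + 1 := Nat.pow_log_le_self 2 (by omega)
        have ht2 : j + 1 < 2^(t+1) := Nat.lt_pow_succ_log_self (by omega) _
        have ht2' : j + 1 < 2 * 2^t := by rw [pow_succ] at ht2; omega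
        have htr : t < r := by
          have h2t : 2^t < 2^r :=
            calc 2^t ≤ j + 1 := ht1
            _ ≤ s := by omega
            _ < 2^r := hs4
          exact (Nat.pow_lt_pow_iff_right (by omega)).mp h2t
        have hdiv : (j+1) / 2^t = 0 + 1 :=
          Nat.div_eq_of_lt_le (by omega) (by omega)
        obtain ⟨x, hoff, _, hxj, hne⟩ :=
          Htree_influence (fun i => var (p+1+i)) s hinj' t r 0 false j htr hjs hdiv
        have hxp : x (var p) = false := by
          apply hoff
          intro m'' hm'' h
          have := inj _ _ (by omega) (by omega) h
          omega
        refine ⟨x, by rw [hij]; exact hxj, ?_⟩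
        have hup : Function.update x (var i) true (var p) = false := by
          rw [Function.update_of_ne, hxp]
          intro h
          have := inj _ _ (by omega) (by omega) h
          omega
        simp only [buildT, DTree.eval, hxp, hup, Bool.false_eq_true, if_false]
        rw [hij]
        exact hne
    · -- i in the right subtree: lift the inductive witness
      obtain ⟨x, hxi, hne⟩ := ih m' p' hs2 hs3 (by omega) i (by omega) (by omega)
      have hvpi : var p ≠ var i := by
        intro h
        have := inj _ _ (by omega) (by omega) h
        omega
      refine ⟨Function.update x (var p) true, ?_, ?_⟩
      · rw [Function.update_of_ne hvpi.symm]; exact hxi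
      · have hu1 : Function.update x (var p) true (var p) = true := Function.update_self _ _ _
        have hu2 : Function.update (Function.update x (var p) true) (var i) true (var p) = true := by
          rw [Function.update_of_ne hvpi]; exact hu1
        simp only [buildT, DTree.eval, hu1, hu2, if_true]
        have e1 : (buildT var r m' p').eval (Function.update x (var p) true)
            = (buildT var r m' p').eval x := by
          apply buildT_eval_congr var r m' p' hs2
          intro q hq1 hq2
          rw [Function.update_of_ne]
          intro h
          have := inj _ _ (by omega) (by omega) h
          omega
        have e2 : (buildT var r m' p').eval
              (Function.update (Function.update x (var p) true) (var i) true)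
            = (buildT var r m' p').eval (Function.update x (var i) true) := by
          apply buildT_eval_congr var r m' p' hs2
          intro q hq1 hq2
          by_cases hqi : q = i
          · subst hqi; rw [Function.update_self, Function.update_self]
          · have hvqi : var q ≠ var i := fun h => hqi (inj _ _ (by omega) (by omega) h)
            rw [Function.update_of_ne hvqi, Function.update_of_ne hvqi,
              Function.update_of_ne]
            intro h
            have := inj _ _ (by omega) (by omega) h
            omega
        rw [e1, e2]
        exact hne

/-- for `2^(k-1) - 1 < n < 2^k - 1` there is a Boolean function on
`n` variables, all influencing, computed by a depth-`k` decision tree, which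
restricts to `z ↦ ⋀ t, (z_{i_t} XOR d_t)` on `k` distinct variables. -/
theorem stmt4 (k n : ℕ) (hk : 2 ≤ k)
    (h1 : 2 ^ (k - 1) - 1 < n) (h2 : n < 2 ^ k - 1) :
    ∃ f : (Fin n → Bool) → Bool,
      (∀ i, Influences f i) ∧
      (∃ T : DTree n, T.depth = k ∧ T.Computes f) ∧
      ∃ idx : Fin k → Fin n, Function.Injective idx ∧
        ∃ (d : Fin k → Bool) (c : Fin n → Bool),
          ∀ x : Fin n → Bool,
            (∀ v, (∀ t, idx t ≠ v) → x v = c v) →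
            f x = decide (∀ t, xor (x (idx t)) (d t) = true) := by
  have hk1 : k - 1 < 2 ^ (k-1) := Nat.lt_two_pow_self
  have hkn : k ≤ n := by omega
  have hn : 0 < n := by omega
  have hn2 : n < 2 ^ k := by
    have : 1 ≤ 2 ^ k := Nat.one_le_two_pow
    omega
  set var : ℕ → Fin n := fun a => ⟨a % n, Nat.mod_lt _ hn⟩ with hvar
  have inj : ∀ a b, a < n → b < n → var a = var b → a = b := by
    intro a b ha hb h
    rw [hvar] at h
    simp only [Fin.mk.injEq, Nat.mod_eq_of_lt ha, Nat.mod_eq_of_lt hb] at h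
    exact h
  have hvi : ∀ i : Fin n, var i.val = i := by
    intro i
    rw [hvar]
    exact Fin.ext (Nat.mod_eq_of_lt i.isLt)
  refine ⟨(buildT var k n 0).eval, ?_, ⟨buildT var k n 0, buildT_depth var k n 0, fun _ => rfl⟩, ?_⟩
  · -- all variables influencing
    intro i
    obtain ⟨x, hxi, hne⟩ := buildT_influence var inj k n 0 hkn hn2 (by omega) i.val
      (by omega) (by omega)
    rw [hvi i] at hne
    exact ⟨x, Function.update x i true,
      fun j hj => (Function.update_of_ne hj _ _).symm, hne⟩
  · refine ⟨fun t => var (posF k n 0 t.val), ?_, fun _ => false, fun _ => false, ?_⟩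
    · -- injectivity
      intro a b h
      have ha := posF_lt (r := k) (m := n) (p := 0) (t := a.val) hkn hn2 a.isLt
      have hb := posF_lt (r := k) (m := n) (p := 0) (t := b.val) hkn hn2 b.isLt
      have heq := inj _ _ (by omega) (by omega) h
      by_contra hab
      rcases lt_trichotomy a.val b.val with hlt | hlt | hlt
      · have := posF_mono (r := k) (m := n) (p := 0) hlt b.isLt; omega
      · exact hab (Fin.ext hlt)
      · have := posF_mono (r := k) (m := n) (p := 0) hlt a.isLt; omega
    · -- the AND restriction
      intro x hx
      rw [buildT_eval_AND var k n 0 hkn hn2 x ?_]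
      · apply decide_eq_decide.mpr
        constructor
        · intro h t
          rw [Bool.xor_false]
          exact h t.val t.isLt
        · intro h t ht
          have := h ⟨t, ht⟩
          rwa [Bool.xor_false] at this
      · intro i _ hi2 hi3
        apply hx (var i)
        intro t h
        have hlt := posF_lt (r := k) (m := n) (p := 0) (t := t.val) hkn hn2 t.isLt
        exact hi3 t.val t.isLt (inj _ _ (by omega) (by omega) h)
end

section
/- For every k ≥ 1 there exists a Boolean function f on 2^{k+1} − 2 variables, all of whose variables are influencing, such that f is computed by a parity decision tree of depth k and f admits a restriction (fixing all but k variables to constants) that is isomorphic to the k-variable AND. -/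
/-- A parity decision tree over `n` Boolean variables: either a leaf labelled
by a `Bool`, or an internal node querying a single variable `x i` or the
parity `x i XOR x j` of two variables, with two subtrees. -/
inductive PDTree (n : ℕ) where
  | leaf : Bool → PDTree n
  | node1 : Fin n → PDTree n → PDTree n → PDTree n
  | node2 : Fin n → Fin n → PDTree n → PDTree n → PDTree n

namespace PDTree

/-- Evaluation of a parity decision tree on an input. -/
def eval {n : ℕ} : PDTree n → (Fin n → Bool) → Bool
  | leaf b, _ => b
  | node1 i t0 t1, x => if x i then eval t1 x else eval t0 x
  | node2 i j t0 t1, x => if xor (x i) (x j) then eval t1 x else eval t0 x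

/-- The depth of a parity decision tree. -/
def depth {n : ℕ} : PDTree n → ℕ
  | leaf _ => 0
  | node1 _ t0 t1 => max (depth t0) (depth t1) + 1
  | node2 _ _ t0 t1 => max (depth t0) (depth t1) + 1

/-- A parity decision tree computes `f` if its evaluation agrees with `f`. -/
def Computes {n : ℕ} (P : PDTree n) (f : (Fin n → Bool) → Bool) : Prop :=
  ∀ x, P.eval x = f x

end PDTree




namespace Stmt6Aux

def W : ℕ → ℕ → (ℕ → Bool) → Bool
  | 0, v, x => xor (x (2*v)) (x (2*v+1))
  | d+1, v, x => if xor (x (2*v)) (x (2*v+1)) then W d (2*v+2) x else W d (2*v+1) x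

def Desc (d v m : ℕ) : Prop := ∃ j, j ≤ d ∧ (m/2+1)/2^j = v+1

lemma desc_self_l (d v : ℕ) : Desc d v (2*v) :=
  ⟨0, Nat.zero_le _, by simp only [pow_zero, Nat.div_one]; omega⟩

lemma desc_self_r (d v : ℕ) : Desc d v (2*v+1) :=
  ⟨0, Nat.zero_le _, by simp only [pow_zero, Nat.div_one]; omega⟩

lemma desc_child {d v c m : ℕ} (hc : c = 2*v+1 ∨ c = 2*v+2) (h : Desc d c m) :
    Desc (d+1) v m := by
  obtain ⟨j, hj, hdiv⟩ := h
  refine ⟨j+1, by omega, ?_⟩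
  rw [pow_succ, ← Nat.div_div_eq_div_mul, hdiv]
  omega

lemma Wcongr : ∀ d v (x x' : ℕ → Bool), (∀ m, Desc d v m → x m = x' m) →
    W d v x = W d v x'
  | 0, v, x, x', h => by
      simp only [W, h _ (desc_self_l 0 v), h _ (desc_self_r 0 v)]
  | d+1, v, x, x', h => by
      simp only [W, h _ (desc_self_l _ v), h _ (desc_self_r _ v)]
      split
      · exact Wcongr d (2*v+2) x x' fun m hm => h m (desc_child (Or.inr rfl) hm)
      · exact Wcongr d (2*v+1) x x' fun m hm => h m (desc_child (Or.inl rfl) hm)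

lemma Wfalse : ∀ d v, W d v (fun _ => false) = false
  | 0, _ => by simp [W]
  | d+1, v => by simp [W, Wfalse d]

lemma Wfalse' {d v : ℕ} {x : ℕ → Bool} (h : ∀ m, Desc d v m → x m = false) :
    W d v x = false := by
  rw [Wcongr d v x (fun _ => false) h]; exact Wfalse d v

lemma Wone : ∀ d c, W d c (fun m => decide (m = 2*((c+1)*2^d - 1))) = true
  | 0, c => by
      simp only [W, pow_zero, mul_one, Nat.add_sub_cancel]
      simp [show 2*c+1 ≠ 2*c by omega]
  | d+1, c => by
      have hpos : 1 ≤ 2^d := Nat.one_le_two_pow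
      have hpos1 : 1 ≤ 2^(d+1) := Nat.one_le_two_pow
      have h2 : (c+1)*2 ≤ (c+1)*2^(d+1) := by
        have h21 : (2:ℕ) ≤ 2^(d+1) := by rw [pow_succ]; omega
        exact Nat.mul_le_mul_left _ h21
      have e1 : ¬ (2*c = 2*((c+1)*2^(d+1) - 1)) := by omega
      have e2 : ¬ (2*c+1 = 2*((c+1)*2^(d+1) - 1)) := by omega
      simp only [W, decide_eq_false e1, decide_eq_false e2, Bool.xor_false]
      rw [if_neg (by simp)]
      have hone := Wone d (2*c+1)
      have hmul : (2*c+1+1)*2^d = (c+1)*2^(d+1) := by rw [pow_succ]; ring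
      rw [hmul] at hone
      exact hone

lemma pdiv (a j : ℕ) : (2^a - 1) / 2^j = 2^(a-j) - 1 := by
  induction j with
  | zero => simp
  | succ j ih =>
      have half : ∀ b : ℕ, (2^b - 1) / 2 = 2^(b-1) - 1 := by
        intro b
        cases b with
        | zero => simp
        | succ b =>
            have hb : 1 ≤ 2^b := Nat.one_le_two_pow
            have hh : 2^(b+1) - 1 = 2*(2^b - 1) + 1 := by
              have : 2^(b+1) = 2*2^b := by ring
              omega
            rw [hh, Nat.mul_add_div (by norm_num)]
            simp
      rw [pow_succ, ← Nat.div_div_eq_div_mul, ih, half]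
      rw [Nat.sub_sub]

lemma IL : ∀ d v i, Desc d v i →
    ∃ x x' : ℕ → Bool, (∀ m, m ≠ i → x m = x' m) ∧ W d v x ≠ W d v x'
  | 0, v, i, ⟨j, hj, hdiv⟩ => by
      have hj0 : j = 0 := by omega
      subst hj0
      simp only [pow_zero, Nat.div_one] at hdiv
      have hi : i = 2*v ∨ i = 2*v+1 := by omega
      refine ⟨fun _ => false, fun m => decide (m = i), fun m hm => by simp [hm], ?_⟩
      rw [Wfalse 0 v]
      have h1 : W 0 v (fun m => decide (m = i)) = true := by
        rcases hi with hi | hi <;> subst hi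
        · simp only [W]
          simp [show 2*v+1 ≠ 2*v by omega]
        · simp only [W]
          simp [show 2*v ≠ 2*v+1 by omega]
      rw [h1]; simp
  | d+1, v, i, ⟨j, hj, hdiv⟩ => by
      cases j with
      | zero =>
          simp only [pow_zero, Nat.div_one] at hdiv
          have hi : i = 2*v ∨ i = 2*v+1 := by omega
          have hpos : 1 ≤ 2^d := Nat.one_le_two_pow
          have hf : 2*v+3 ≤ (2*v+3)*2^d := Nat.le_mul_of_pos_right _ (by omega)
          set u : ℕ := (2*v+3)*2^d - 1 with hu
          have hularge : 2*v+1 < 2*u := by omega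
          set x : ℕ → Bool := fun m => decide (m = 2*u) with hx
          set x' : ℕ → Bool := fun m => if m = i then true else x m with hx'
          refine ⟨x, x', fun m hm => by simp [hx', hm], ?_⟩
          have hxl : x (2*v) = false := by
            simp only [hx, decide_eq_false_iff_not]; omega
          have hxr : x (2*v+1) = false := by
            simp only [hx, decide_eq_false_iff_not]; omega
          have hWx : W (d+1) v x = false := by
            simp only [W, hxl, hxr]
            rw [if_neg (by simp)]
            apply Wfalse'
            intro m hm
            obtain ⟨j', hj', hdiv'⟩ := hm
            simp only [hx, decide_eq_false_iff_not]
            intro hm2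
            have hm3 : m/2 + 1 = (2*v+3)*2^d := by omega
            rw [hm3] at hdiv'
            have hq : (2*v+3)*2^d / 2^j' = (2*v+3)*2^(d-j') := by
              rcases Nat.exists_eq_add_of_le hj' with ⟨e, rfl⟩
              rw [show j'+e-j' = e by omega, pow_add,
                show (2*v+3)*(2^j'*2^e) = ((2*v+3)*2^e)*2^j' by ring,
                Nat.mul_div_cancel _ (by positivity)]
            rw [hq] at hdiv'
            nlinarith [Nat.one_le_two_pow (n := d - j')]
          have hpar : xor (x' (2*v)) (x' (2*v+1)) = true := by
            rcases hi with hi | hi <;> subst hi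
            · have a1 : x' (2*v) = true := by simp [hx']
              have a2 : x' (2*v+1) = false := by
                simp only [hx']; rw [if_neg (by omega)]; exact hxr
              simp [a1, a2]
            · have a1 : x' (2*v) = false := by
                simp only [hx']; rw [if_neg (by omega)]; exact hxl
              have a2 : x' (2*v+1) = true := by simp [hx']
              simp [a1, a2]
          have hcong : W d (2*v+2) x' = W d (2*v+2) x := by
            apply Wcongr
            intro m hm
            obtain ⟨j', hj', hdiv'⟩ := hm
            have hle : 2*v+2+1 ≤ m/2+1 := hdiv' ▸ Nat.div_le_self _ _
            have hne : m ≠ i := by omega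
            simp only [hx']
            rw [if_neg hne]
          have hWx' : W (d+1) v x' = true := by
            simp only [W, hpar]
            rw [if_pos trivial, hcong]
            have hone := Wone d (2*v+2)
            have h3 : 2*v+2+1 = 2*v+3 := by omega
            rw [h3, ← hu] at hone
            rw [hx]
            exact hone
          rw [hWx, hWx']
          simp
      | succ j' =>
          set w : ℕ := (i/2+1)/2^j' with hw
          have hw2 : w / 2 = v + 1 := by
            rw [hw, Nat.div_div_eq_div_mul, ← pow_succ]
            exact hdiv
          have hwle : w ≤ i/2+1 := hw ▸ Nat.div_le_self _ _
          have hwval : w = 2*v+2 ∨ w = 2*v+3 := by omega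
          set c : ℕ := w - 1 with hc
          have hcd : Desc d c i := ⟨j', by omega, by rw [← hw]; omega⟩
          obtain ⟨x, x', hagree, hW⟩ := IL d c i hcd
          have higt : 2*v+1 < i := by omega
          set bit : Bool := decide (c = 2*v+2) with hbit
          set y : ℕ → Bool :=
            fun m => if m = 2*v then bit else if m = 2*v+1 then false else x m with hy
          set y' : ℕ → Bool :=
            fun m => if m = 2*v then bit else if m = 2*v+1 then false else x' m with hy'
          refine ⟨y, y', ?_, ?_⟩
          · intro m hm
            simp only [hy, hy']
            split
            · rfl
            · split
              · rfl
              · exact hagree m hm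
          · have hnotdesc : ∀ m, Desc d c m → m ≠ 2*v ∧ m ≠ 2*v+1 := by
              intro m hm
              obtain ⟨t, ht, hdt⟩ := hm
              have hle : c+1 ≤ m/2+1 := hdt ▸ Nat.div_le_self _ _
              omega
            have hcy : W d c y = W d c x := by
              apply Wcongr
              intro m hm
              obtain ⟨hm1, hm2⟩ := hnotdesc m hm
              simp only [hy]
              rw [if_neg hm1, if_neg hm2]
            have hcy' : W d c y' = W d c x' := by
              apply Wcongr
              intro m hm
              obtain ⟨hm1, hm2⟩ := hnotdesc m hm
              simp only [hy']
              rw [if_neg hm1, if_neg hm2]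
            have hyl : y (2*v) = bit := by simp only [hy]; rw [if_pos trivial]
            have hyr : y (2*v+1) = false := by
              simp only [hy]; rw [if_neg (by omega), if_pos trivial]
            have hyl' : y' (2*v) = bit := by simp only [hy']; rw [if_pos trivial]
            have hyr' : y' (2*v+1) = false := by
              simp only [hy']; rw [if_neg (by omega), if_pos trivial]
            simp only [W, hyl, hyr, hyl', hyr', Bool.xor_false]
            rcases hwval with hww | hww
            · have hcv : c = 2*v+1 := by omega
              have hbf : bit = false := by
                simp only [hbit, decide_eq_false_iff_not]; omega
              rw [hbf]
              rw [if_neg (by simp), if_neg (by simp)]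
              rw [hcv] at hcy hcy' hW
              rw [hcy, hcy']
              exact hW
            · have hcv : c = 2*v+2 := by omega
              have hbt : bit = true := by simp [hbit, hcv]
              rw [hbt]; rw [if_pos rfl, if_pos rfl]
              rw [hcv] at hcy hcy' hW
              rw [hcy, hcy']
              exact hW


lemma two_le_pow_succ (s : ℕ) : 2 ≤ 2^(s+1) := by
  have h1 : 1 ≤ 2^s := Nat.one_le_two_pow
  have : 2^(s+1) = 2*2^s := by ring
  omega

/-- Restriction lemma: if the input is `false` outside the rightmost-path
variables `2*(2^(t+1)-2)`, then the walk computes the AND of those variables. -/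
lemma Wand (k : ℕ) (y : ℕ → Bool)
    (hy : ∀ m, (∀ t, m ≠ 2*(2^(t+1)-2)) → y m = false) :
    ∀ d s, d + s + 1 = k →
      W d (2^(s+1)-2) y
        = decide (∀ t, s ≤ t → t < k → y (2*(2^(t+1)-2)) = true) := by
  intro d
  induction d with
  | zero =>
      intro s hs
      have hv2 : 2 ≤ 2^(s+1) := two_le_pow_succ s
      have hodd : y (2*(2^(s+1)-2)+1) = false := by
        apply hy; intro t; omega
      simp only [W, hodd, Bool.xor_false]
      cases hyv : y (2*(2^(s+1)-2)) with
      | true =>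
          symm
          apply decide_eq_true
          intro t ht1 ht2
          have : t = s := by omega
          rw [this]
          exact hyv
      | false =>
          symm
          apply decide_eq_false
          intro hP
          have := hP s le_rfl (by omega)
          rw [hyv] at this
          exact Bool.false_ne_true this
  | succ d ih =>
      intro s hs
      have hv2 : 2 ≤ 2^(s+1) := two_le_pow_succ s
      have hv2' : 4 ≤ 2^(s+2) := by
        have := two_le_pow_succ s
        have h : 2^(s+2) = 2*2^(s+1) := by ring
        omega
      have hodd : y (2*(2^(s+1)-2)+1) = false := by
        apply hy; intro t; omega
      simp only [W, hodd, Bool.xor_false]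
      cases hyv : y (2*(2^(s+1)-2)) with
      | true =>
          rw [if_pos rfl]
          have hch : 2*(2^(s+1)-2)+2 = 2^(s+1+1)-2 := by
            have h : 2^(s+2) = 2*2^(s+1) := by ring
            omega
          rw [hch, ih (s+1) (by omega)]
          apply decide_eq_decide.mpr
          constructor
          · intro h t ht1 ht2
            rcases Nat.eq_or_lt_of_le ht1 with h' | h'
            · rw [← h']; exact hyv
            · exact h t h' ht2
          · intro h t ht1 ht2
            exact h t (by omega) ht2
      | false =>
          rw [if_neg (by simp)]
          have hleft : W d (2*(2^(s+1)-2)+1) y = false := by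
            apply Wfalse'
            intro m hm
            obtain ⟨j, hj, hdiv⟩ := hm
            apply hy
            intro t hmt
            have ht2 : 2 ≤ 2^(t+1) := two_le_pow_succ t
            have hm2 : m/2 + 1 = 2^(t+1) - 1 := by omega
            rw [hm2, pdiv] at hdiv
            -- hdiv : 2^(t+1-j) - 1 = 2*(2^(s+1)-2)+1+1
            have ha : 1 ≤ 2^(t+1-j) := Nat.one_le_two_pow
            rcases Nat.eq_zero_or_pos (t+1-j) with h0 | h0
            · rw [h0] at hdiv
              simp only [pow_zero] at hdiv
              omega
            · have : 2^(t+1-j) = 2*2^(t+1-j-1) := by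
                rw [← pow_succ']
                congr 1
                omega
              omega
          rw [hleft]
          symm
          apply decide_eq_false
          intro hP
          have := hP s le_rfl (by omega)
          rw [hyv] at this
          exact Bool.false_ne_true this

end Stmt6Aux

namespace Stmt6Aux

def extN (n : ℕ) (x : Fin n → Bool) (m : ℕ) : Bool :=
  if h : m < n then x ⟨m, h⟩ else false

lemma extN_lt {n : ℕ} (x : Fin n → Bool) {m : ℕ} (h : m < n) :
    extN n x m = x ⟨m, h⟩ := dif_pos h

def build (n : ℕ) (hn : 0 < n) : ℕ → ℕ → PDTree n
  | 0, v => .node2 ⟨2*v % n, Nat.mod_lt _ hn⟩ ⟨(2*v+1) % n, Nat.mod_lt _ hn⟩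
      (.leaf false) (.leaf true)
  | d+1, v => .node2 ⟨2*v % n, Nat.mod_lt _ hn⟩ ⟨(2*v+1) % n, Nat.mod_lt _ hn⟩
      (build n hn d (2*v+1)) (build n hn d (2*v+2))

lemma build_depth (n : ℕ) (hn : 0 < n) : ∀ d v, (build n hn d v).depth = d + 1
  | 0, v => by simp [build, PDTree.depth]
  | d+1, v => by
      simp [build, PDTree.depth, build_depth n hn d]

lemma build_eval (n k : ℕ) (hn : 0 < n) (hnk : n + 2 = 2^(k+1)) (X : Fin n → Bool) :
    ∀ d v, (v+2)*2^d ≤ 2^k → (build n hn d v).eval X = W d v (extN n X) := by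
  have hXmod : ∀ (m : ℕ), m < n → X ⟨m % n, Nat.mod_lt _ hn⟩ = extN n X m := by
    intro m hm
    rw [extN_lt X hm]
    congr 1
    exact Fin.ext (Nat.mod_eq_of_lt hm)
  have h2k : 2^(k+1) = 2*2^k := by ring
  intro d
  induction d with
  | zero =>
      intro v hv
      have h1 : 1 ≤ 2^(0:ℕ) := Nat.one_le_two_pow
      have hb : 2*v + 1 < n := by
        simp only [pow_zero, mul_one] at hv
        omega
      simp only [build, PDTree.eval, hXmod (2*v) (by omega), hXmod (2*v+1) (by omega)]
      simp only [W]
      cases (xor (extN n X (2*v)) (extN n X (2*v+1))) <;> simp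
  | succ d ih =>
      intro v hv
      have h1 : 1 ≤ 2^(d+1) := Nat.one_le_two_pow
      have hvk : v + 2 ≤ 2^k := by
        have : (v+2)*1 ≤ (v+2)*2^(d+1) := Nat.mul_le_mul_left _ h1
        omega
      have hb : 2*v + 1 < n := by omega
      have hps : (2:ℕ)^(d+1) = 2^d*2 := pow_succ 2 d
      have hc1 : (2*v+1+2)*2^d ≤ 2^k := by
        calc (2*v+1+2)*2^d ≤ (v+2)*2*2^d := by
              apply Nat.mul_le_mul_right
              omega
          _ = (v+2)*2^(d+1) := by rw [hps]; ring
          _ ≤ 2^k := hv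
      have hc2 : (2*v+2+2)*2^d ≤ 2^k := by
        calc (2*v+2+2)*2^d = (v+2)*2*2^d := by ring
          _ = (v+2)*2^(d+1) := by rw [hps]; ring
          _ ≤ 2^k := hv
      simp only [build, PDTree.eval, hXmod (2*v) (by omega), hXmod (2*v+1) (by omega)]
      simp only [W]
      split
      · exact ih (2*v+2) hc2
      · exact ih (2*v+1) hc1

end Stmt6Aux

/-- for every `k ≥ 1` there is a Boolean function on
`2^(k+1) - 2` variables, all influencing, computed by a parity decision tree
of depth `k`, which admits a restriction isomorphic to `AND_k`. -/
theorem stmt6 (k : ℕ) (hk : 1 ≤ k) :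
    ∃ f : (Fin (2 ^ (k + 1) - 2) → Bool) → Bool,
      (∀ i, Influences f i) ∧
      (∃ P : PDTree (2 ^ (k + 1) - 2), P.depth = k ∧ P.Computes f) ∧
      ∃ idx : Fin k → Fin (2 ^ (k + 1) - 2), Function.Injective idx ∧
        ∃ (e : Bool) (d : Fin k → Bool) (c : Fin (2 ^ (k + 1) - 2) → Bool),
          ∀ x : Fin (2 ^ (k + 1) - 2) → Bool,
            (∀ v, (∀ t, idx t ≠ v) → x v = c v) →
            f x = xor e (decide (∀ t, xor (x (idx t)) (d t) = true)) := by
  classical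
  set n : ℕ := 2^(k+1) - 2 with hn0
  have h4 : 4 ≤ 2^(k+1) := by
    calc (4:ℕ) = 2^2 := rfl
      _ ≤ 2^(k+1) := Nat.pow_le_pow_right (by norm_num) (by omega)
  have hn2 : n + 2 = 2^(k+1) := by omega
  have hn : 0 < n := by omega
  have hpk : (2:ℕ)^k ≥ 2 := by
    calc (2:ℕ) = 2^1 := rfl
      _ ≤ 2^k := Nat.pow_le_pow_right (by norm_num) hk
  have hkk : 2^(k+1) = 2*2^k := by ring
  refine ⟨fun X => Stmt6Aux.W (k-1) 0 (Stmt6Aux.extN n X), ?_, ?_, ?_⟩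
  · -- all variables influence
    intro i
    have hiv : (i : ℕ) < n := i.isLt
    set u : ℕ := (i : ℕ)/2 + 1 with hu
    have hu1 : u ≠ 0 := by omega
    set j : ℕ := Nat.log2 u with hj
    have hj1 : 2^j ≤ u := Nat.log2_self_le hu1
    have hj2 : u < 2^(j+1) := Nat.lt_log2_self
    have hdivu : u / 2^j = 1 := by
      apply Nat.div_eq_of_lt_le
      · simpa using hj1
      · have : 2^(j+1) = 2*2^j := by ring
        omega
    have huk : u < 2^k := by omega
    have hjk : j < k := by
      have := lt_of_le_of_lt hj1 huk
      exact (Nat.pow_lt_pow_iff_right (by norm_num)).mp this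
    obtain ⟨x, x', hagree, hW⟩ := Stmt6Aux.IL (k-1) 0 (i : ℕ) ⟨j, by omega, by
      rw [← hu]; omega⟩
    have hdescn : ∀ m, Stmt6Aux.Desc (k-1) 0 m → m < n := by
      intro m hm
      obtain ⟨j', hj', hdiv'⟩ := hm
      have hq2 : (m/2+1)/2^j' < 2 := by omega
      have := (Nat.div_lt_iff_lt_mul (by positivity : 0 < 2^j')).mp hq2
      have hpj : 2^(j'+1) ≤ 2^k := Nat.pow_le_pow_right (by norm_num) (by omega)
      have hps : 2^(j'+1) = 2*2^j' := by ring
      omega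
    refine ⟨fun m => x m.val, fun m => x' m.val, ?_, ?_⟩
    · intro jj hjj
      exact hagree jj.val (fun h => hjj (Fin.ext h))
    · have e1 : Stmt6Aux.W (k-1) 0 (Stmt6Aux.extN n (fun m => x m.val))
          = Stmt6Aux.W (k-1) 0 x := by
        apply Stmt6Aux.Wcongr
        intro m hm
        rw [Stmt6Aux.extN_lt _ (hdescn m hm)]
      have e2 : Stmt6Aux.W (k-1) 0 (Stmt6Aux.extN n (fun m => x' m.val))
          = Stmt6Aux.W (k-1) 0 x' := by
        apply Stmt6Aux.Wcongr
        intro m hm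
        rw [Stmt6Aux.extN_lt _ (hdescn m hm)]
      simpa [e1, e2] using hW
  · -- the parity decision tree
    refine ⟨Stmt6Aux.build n hn (k-1) 0, ?_, ?_⟩
    · rw [Stmt6Aux.build_depth]; omega
    · intro X
      apply Stmt6Aux.build_eval n k hn hn2 X (k-1) 0
      have : (2:ℕ)^(k-1)*2 = 2^(k-1+1) := (pow_succ 2 (k-1)).symm
      have hk1 : k - 1 + 1 = k := by omega
      rw [hk1] at this
      omega
  · -- the AND restriction
    have hidx : ∀ t : Fin k, 2*(2^((t : ℕ)+1)-2) < n := by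
      intro t
      have h1 : 2^((t : ℕ)+1) ≤ 2^k := Nat.pow_le_pow_right (by norm_num) (by omega)
      have h2 : 2 ≤ 2^((t : ℕ)+1) := Stmt6Aux.two_le_pow_succ _
      omega
    refine ⟨fun t => ⟨2*(2^((t : ℕ)+1)-2), hidx t⟩, ?_, false, fun _ => false,
      fun _ => false, ?_⟩
    · intro a b hab
      have hval : 2*(2^((a : ℕ)+1)-2) = 2*(2^((b : ℕ)+1)-2) := congrArg Fin.val hab
      have h2a : 2 ≤ 2^((a : ℕ)+1) := Stmt6Aux.two_le_pow_succ _
      have h2b : 2 ≤ 2^((b : ℕ)+1) := Stmt6Aux.two_le_pow_succ _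
      have : 2^((a : ℕ)+1) = 2^((b : ℕ)+1) := by omega
      have := Nat.pow_right_injective (le_refl 2) this
      exact Fin.ext (by omega)
    · intro X hX
      have hy : ∀ m, (∀ t, m ≠ 2*(2^(t+1)-2)) → Stmt6Aux.extN n X m = false := by
        intro m hm
        by_cases h : m < n
        · rw [Stmt6Aux.extN_lt X h]
          apply hX
          intro t ht
          exact hm (t : ℕ) (congrArg Fin.val ht).symm
        · exact dif_neg h
      have hand := Stmt6Aux.Wand k (Stmt6Aux.extN n X) hy (k-1) 0 (by omega)
      beta_reduce
      rw [show (2:ℕ)^(0+1)-2 = 0 by norm_num] at hand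
      rw [hand, Bool.false_xor]
      apply decide_eq_decide.mpr
      constructor
      · intro h t
        have := h (t : ℕ) (Nat.zero_le _) t.isLt
        rw [Stmt6Aux.extN_lt X (hidx t)] at this
        rw [Bool.xor_false]
        exact this
      · intro h t ht0 htk
        have := h ⟨t, htk⟩
        rw [Bool.xor_false] at this
        rw [Stmt6Aux.extN_lt X (hidx ⟨t, htk⟩)]
        exact this
end

section
/- For every k ≥ 2 and every n with 2^{k−1} − 1 < n < 2^k − 1, there exists a Boolean function f on n variables, all of whose variables are influencing, that is computed by a parity decision tree of depth k − 1 (while, since n > 2^{k−1} − 1, every deterministic decision tree computing f has depth at least k). -/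
namespace Stmt8Aux


inductive PT where
  | leaf : Bool → PT
  | node1 : ℕ → PT → PT → PT
  | node2 : ℕ → ℕ → PT → PT → PT

namespace PT

def eval : PT → (ℕ → Bool) → Bool
  | leaf b, _ => b
  | node1 i t0 t1, x => if x i then eval t1 x else eval t0 x
  | node2 i j t0 t1, x => if xor (x i) (x j) then eval t1 x else eval t0 x

def depth : PT → ℕ
  | leaf _ => 0
  | node1 _ t0 t1 => max (depth t0) (depth t1) + 1
  | node2 _ _ t0 t1 => max (depth t0) (depth t1) + 1

def UsesIn : PT → ℕ → ℕ → Prop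
  | leaf _, _, _ => True
  | node1 i t0 t1, s, t => s ≤ i ∧ i < t ∧ UsesIn t0 s t ∧ UsesIn t1 s t
  | node2 i j t0 t1, s, t => s ≤ i ∧ i < t ∧ s ≤ j ∧ j < t ∧ UsesIn t0 s t ∧ UsesIn t1 s t

lemma usesIn_mono {T : PT} {s t s' t' : ℕ} (h : UsesIn T s t) (hs : s' ≤ s) (ht : t ≤ t') :
    UsesIn T s' t' := by
  induction T with
  | leaf b => trivial
  | node1 i t0 t1 ih0 ih1 =>
    obtain ⟨h1, h2, h3, h4⟩ := h
    exact ⟨hs.trans h1, h2.trans_le ht, ih0 h3, ih1 h4⟩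
  | node2 i j t0 t1 ih0 ih1 =>
    obtain ⟨h1, h2, h3, h4, h5, h6⟩ := h
    exact ⟨hs.trans h1, h2.trans_le ht, hs.trans h3, h4.trans_le ht, ih0 h5, ih1 h6⟩

lemma eval_congr {T : PT} {s t : ℕ} (hT : UsesIn T s t) {x y : ℕ → Bool}
    (h : ∀ j, s ≤ j → j < t → x j = y j) : eval T x = eval T y := by
  induction T with
  | leaf b => rfl
  | node1 i t0 t1 ih0 ih1 =>
    obtain ⟨h1, h2, h3, h4⟩ := hT
    simp only [eval, h i h1 h2]
    split
    · exact ih1 h4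
    · exact ih0 h3
  | node2 i j t0 t1 ih0 ih1 =>
    obtain ⟨h1, h2, h3, h4, h5, h6⟩ := hT
    simp only [eval, h i h1 h2, h j h3 h4]
    split
    · exact ih1 h6
    · exact ih0 h5

def build : ℕ → ℕ → ℕ → Bool → PT
  | 0, _, _, b => .leaf b
  | 1, n, s, b =>
      if n = 2 then .node2 s (s+1) (.leaf b) (.leaf (!b))
      else .node1 s (.leaf b) (.leaf (!b))
  | d+2, n, s, b =>
      if n = 2^(d+3) - 2 then
        .node2 s (s+1) (build (d+1) (2^(d+2)-2) (s+2) b)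
                        (build (d+1) (2^(d+2)-2) (s+2+(2^(d+2)-2)) (!b))
      else
        .node1 s (build (d+1) (min (2^(d+2)-2) ((n-1) - (2^(d+1)-1))) (s+1) b)
                 (build (d+1) ((n-1) - min (2^(d+2)-2) ((n-1) - (2^(d+1)-1)))
                    (s+1+(min (2^(d+2)-2) ((n-1) - (2^(d+1)-1)))) (!b))


theorem build_spec_base (n s : ℕ) (b : Bool) (hlo : 1 ≤ n) (hhi : n ≤ 2) :
    depth (build 1 n s b) = 1 ∧
    UsesIn (build 1 n s b) s (s+n) ∧
    (∀ x : ℕ → Bool, (∀ j, s ≤ j → j < s + n → x j = false) → eval (build 1 n s b) x = b) ∧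
    (∀ i, s ≤ i → i < s + n → ∃ x : ℕ → Bool,
       (∀ j, (j < s ∨ s + n ≤ j) → x j = false) ∧
       eval (build 1 n s b) x ≠ eval (build 1 n s b) (Function.update x i (!x i))) := by
  have hn : n = 1 ∨ n = 2 := by omega
  rcases hn with rfl | rfl
  · have hb : build 1 1 s b = .node1 s (.leaf b) (.leaf (!b)) := by
      simp [build]
    rw [hb]
    refine ⟨rfl, ⟨le_rfl, by omega, trivial, trivial⟩, ?_, ?_⟩
    · intro x hx
      have hxs : x s = false := hx s le_rfl (by omega)
      simp [eval, hxs]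
    · intro i his hit
      have hi : i = s := by omega
      subst hi
      refine ⟨fun _ => false, fun j _ => rfl, ?_⟩
      simp [eval, Function.update_self]
  · have hb : build 1 2 s b = .node2 s (s+1) (.leaf b) (.leaf (!b)) := by
      simp [build]
    rw [hb]
    refine ⟨rfl, ⟨le_rfl, by omega, by omega, by omega, trivial, trivial⟩, ?_, ?_⟩
    · intro x hx
      have hxs : x s = false := hx s le_rfl (by omega)
      have hxs1 : x (s+1) = false := hx (s+1) (by omega) (by omega)
      simp [eval, hxs, hxs1]
    · intro i his hit
      refine ⟨fun _ => false, fun j _ => rfl, ?_⟩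
      have hi : i = s ∨ i = s + 1 := by omega
      rcases hi with rfl | rfl
      · simp [eval, Function.update_self, Function.update_of_ne (by omega : i + 1 ≠ i)]
      · simp [eval, Function.update_self, Function.update_of_ne (by omega : s ≠ s + 1)]


theorem build_spec_step (e : ℕ)
    (IH : ∀ m, m < e + 2 → ∀ n s b, 1 ≤ m → 2^m - 1 ≤ n → n ≤ 2^(m+1) - 2 →
      depth (build m n s b) = m ∧
      UsesIn (build m n s b) s (s+n) ∧
      (∀ x : ℕ → Bool, (∀ j, s ≤ j → j < s + n → x j = false) → eval (build m n s b) x = b) ∧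
      (∀ i, s ≤ i → i < s + n → ∃ x : ℕ → Bool,
         (∀ j, (j < s ∨ s + n ≤ j) → x j = false) ∧
         eval (build m n s b) x ≠ eval (build m n s b) (Function.update x i (!x i))))
    (n s : ℕ) (b : Bool) (hlo : 2^(e+2) - 1 ≤ n) (hhi : n ≤ 2^(e+3) - 2) :
    depth (build (e+2) n s b) = e+2 ∧
    UsesIn (build (e+2) n s b) s (s+n) ∧
    (∀ x : ℕ → Bool, (∀ j, s ≤ j → j < s + n → x j = false) → eval (build (e+2) n s b) x = b) ∧
    (∀ i, s ≤ i → i < s + n → ∃ x : ℕ → Bool,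
       (∀ j, (j < s ∨ s + n ≤ j) → x j = false) ∧
       eval (build (e+2) n s b) x ≠ eval (build (e+2) n s b) (Function.update x i (!x i))) := by
  have hP : 2 ≤ 2^(e+1) := by
    calc (2:ℕ) = 2^1 := rfl
    _ ≤ 2^(e+1) := Nat.pow_le_pow_right (by norm_num) (by omega)
  have h2P : (2:ℕ)^(e+2) = 2*2^(e+1) := by ring
  have h3P : (2:ℕ)^(e+3) = 4*2^(e+1) := by ring
  by_cases hif : n = 2^(e+3) - 2
  · -- root queries a parity of two variables
    set m := 2^(e+2) - 2 with hm
    have hb : build (e+2) n s b = .node2 s (s+1) (build (e+1) m (s+2) b)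
        (build (e+1) m (s+2+m) (!b)) := by
      simp only [build, if_pos hif, hm]
    have hsum : n = 2 + m + m := by omega
    obtain ⟨D0, U0, E0, I0⟩ := IH (e+1) (by omega) m (s+2) b (by omega) (by omega)
      (show m ≤ 2^(e+2)-2 from le_rfl)
    obtain ⟨D1, U1, E1, I1⟩ := IH (e+1) (by omega) m (s+2+m) (!b) (by omega) (by omega)
      (show m ≤ 2^(e+2)-2 from le_rfl)
    refine ⟨?_, ?_, ?_, ?_⟩
    · rw [hb]; simp [depth, D0, D1]
    · rw [hb]
      exact ⟨by omega, by omega, by omega, by omega,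
        usesIn_mono U0 (by omega) (by omega), usesIn_mono U1 (by omega) (by omega)⟩
    · intro x hx
      rw [hb]
      have hxs : x s = false := hx s le_rfl (by omega)
      have hxs1 : x (s+1) = false := hx (s+1) (by omega) (by omega)
      have e0 : eval (build (e+1) m (s+2) b) x = b :=
        E0 x (fun j h1 h2 => hx j (by omega) (by omega))
      simp [eval, hxs, hxs1, e0]
    · intro i his hit
      have hcase : i = s ∨ i = s+1 ∨ (s+2 ≤ i ∧ i < s+2+m) ∨ (s+2+m ≤ i ∧ i < s+2+m+m) := by
        omega
      rcases hcase with rfl | rfl | ⟨hi1, hi2⟩ | ⟨hi1, hi2⟩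
      · refine ⟨fun _ => false, fun j _ => rfl, ?_⟩
        rw [hb]
        have e0 : eval (build (e+1) m (i+2) b) (fun _ => false) = b := E0 _ (fun _ _ _ => rfl)
        have e1 : eval (build (e+1) m (i+2+m) (!b))
            (Function.update (fun _ => false : ℕ → Bool) i true) = !b :=
          E1 _ (fun j h1 h2 => by rw [Function.update_of_ne (by omega : j ≠ i)])
        simp [eval, e0, e1, Function.update_self,
          Function.update_of_ne (by omega : i+1 ≠ i)]
      · refine ⟨fun _ => false, fun j _ => rfl, ?_⟩
        rw [hb]
        have e0 : eval (build (e+1) m (s+2) b) (fun _ => false) = b := E0 _ (fun _ _ _ => rfl)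
        have e1 : eval (build (e+1) m (s+2+m) (!b))
            (Function.update (fun _ => false : ℕ → Bool) (s+1) true) = !b :=
          E1 _ (fun j h1 h2 => by rw [Function.update_of_ne (by omega : j ≠ s+1)])
        simp [eval, e0, e1, Function.update_self,
          Function.update_of_ne (by omega : s ≠ s+1)]
      · obtain ⟨x, hsupp, hne⟩ := I0 i hi1 hi2
        refine ⟨x, fun j hj => hsupp j (by omega), ?_⟩
        rw [hb]
        have hxs : x s = false := hsupp s (by omega)
        have hxs1 : x (s+1) = false := hsupp (s+1) (by omega)
        have hus : Function.update x i (!x i) s = x s :=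
          Function.update_of_ne (by omega : s ≠ i) _ _
        have hus1 : Function.update x i (!x i) (s+1) = x (s+1) :=
          Function.update_of_ne (by omega : s+1 ≠ i) _ _
        simp only [eval, hus, hus1, hxs, hxs1]
        simpa using hne
      · obtain ⟨x, hsupp, hne⟩ := I1 i hi1 hi2
        refine ⟨Function.update x s true, ?_, ?_⟩
        · intro j hj
          rw [Function.update_of_ne (by omega : j ≠ s)]
          exact hsupp j (by omega)
        · rw [hb]
          set y := Function.update x s true with hy
          have q1 : y s = true := Function.update_self _ _ _
          have q2 : y (s+1) = false := by
            rw [hy, Function.update_of_ne (by omega : s+1 ≠ s)]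
            exact hsupp (s+1) (by omega)
          have q1' : Function.update y i (!y i) s = true := by
            rw [Function.update_of_ne (by omega : s ≠ i)]; exact q1
          have q2' : Function.update y i (!y i) (s+1) = false := by
            rw [Function.update_of_ne (by omega : s+1 ≠ i)]; exact q2
          have hyx : eval (build (e+1) m (s+2+m) (!b)) y
              = eval (build (e+1) m (s+2+m) (!b)) x :=
            eval_congr U1 (fun j h1 h2 => by
              rw [hy, Function.update_of_ne (by omega : j ≠ s)])
          have hyx' : eval (build (e+1) m (s+2+m) (!b)) (Function.update y i (!y i))
              = eval (build (e+1) m (s+2+m) (!b)) (Function.update x i (!x i)) := by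
            apply eval_congr U1
            intro j h1 h2
            rcases eq_or_ne j i with rfl | hji
            · rw [Function.update_self, Function.update_self, hy,
                Function.update_of_ne (by omega : j ≠ s)]
            · rw [Function.update_of_ne hji, Function.update_of_ne hji, hy,
                Function.update_of_ne (by omega : j ≠ s)]
          simp only [eval, q1, q2, q1', q2']
          simpa [hyx, hyx'] using hne
  · -- root queries a single variable
    set n1 := min (2^(e+2)-2) ((n-1) - (2^(e+1)-1)) with hn1
    set n2 := (n-1) - n1 with hn2
    have hb : build (e+2) n s b = .node1 s (build (e+1) n1 (s+1) b)
        (build (e+1) n2 (s+1+n1) (!b)) := by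
      simp only [build, if_neg hif, hn2, hn1]
    have ha1 : 2^(e+1)-1 ≤ n1 ∧ n1 ≤ 2^(e+2)-2 := by omega
    have ha2 : 2^(e+1)-1 ≤ n2 ∧ n2 ≤ 2^(e+2)-2 := by omega
    have hsum : n = 1 + n1 + n2 := by omega
    obtain ⟨D0, U0, E0, I0⟩ := IH (e+1) (by omega) n1 (s+1) b (by omega) ha1.1
      (show n1 ≤ 2^(e+2)-2 from ha1.2)
    obtain ⟨D1, U1, E1, I1⟩ := IH (e+1) (by omega) n2 (s+1+n1) (!b) (by omega) ha2.1
      (show n2 ≤ 2^(e+2)-2 from ha2.2)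
    refine ⟨?_, ?_, ?_, ?_⟩
    · rw [hb]; simp [depth, D0, D1]
    · rw [hb]
      exact ⟨by omega, by omega,
        usesIn_mono U0 (by omega) (by omega), usesIn_mono U1 (by omega) (by omega)⟩
    · intro x hx
      rw [hb]
      have hxs : x s = false := hx s le_rfl (by omega)
      have e0 : eval (build (e+1) n1 (s+1) b) x = b :=
        E0 x (fun j h1 h2 => hx j (by omega) (by omega))
      simp [eval, hxs, e0]
    · intro i his hit
      have hcase : i = s ∨ (s+1 ≤ i ∧ i < s+1+n1) ∨ (s+1+n1 ≤ i ∧ i < s+1+n1+n2) := by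
        omega
      rcases hcase with rfl | ⟨hi1, hi2⟩ | ⟨hi1, hi2⟩
      · refine ⟨fun _ => false, fun j _ => rfl, ?_⟩
        rw [hb]
        have e0 : eval (build (e+1) n1 (i+1) b) (fun _ => false) = b := E0 _ (fun _ _ _ => rfl)
        have e1 : eval (build (e+1) n2 (i+1+n1) (!b))
            (Function.update (fun _ => false : ℕ → Bool) i true) = !b :=
          E1 _ (fun j h1 h2 => by rw [Function.update_of_ne (by omega : j ≠ i)])
        simp [eval, e0, e1, Function.update_self]
      · obtain ⟨x, hsupp, hne⟩ := I0 i hi1 hi2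
        refine ⟨x, fun j hj => hsupp j (by omega), ?_⟩
        rw [hb]
        have hxs : x s = false := hsupp s (by omega)
        have hus : Function.update x i (!x i) s = x s :=
          Function.update_of_ne (by omega : s ≠ i) _ _
        simp only [eval, hus, hxs]
        simpa using hne
      · obtain ⟨x, hsupp, hne⟩ := I1 i hi1 hi2
        refine ⟨Function.update x s true, ?_, ?_⟩
        · intro j hj
          rw [Function.update_of_ne (by omega : j ≠ s)]
          exact hsupp j (by omega)
        · rw [hb]
          set y := Function.update x s true with hy
          have q1 : y s = true := Function.update_self _ _ _
          have q1' : Function.update y i (!y i) s = true := by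
            rw [Function.update_of_ne (by omega : s ≠ i)]; exact q1
          have hyx : eval (build (e+1) n2 (s+1+n1) (!b)) y
              = eval (build (e+1) n2 (s+1+n1) (!b)) x :=
            eval_congr U1 (fun j h1 h2 => by
              rw [hy, Function.update_of_ne (by omega : j ≠ s)])
          have hyx' : eval (build (e+1) n2 (s+1+n1) (!b)) (Function.update y i (!y i))
              = eval (build (e+1) n2 (s+1+n1) (!b)) (Function.update x i (!x i)) := by
            apply eval_congr U1
            intro j h1 h2
            rcases eq_or_ne j i with rfl | hji
            · rw [Function.update_self, Function.update_self, hy,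
                Function.update_of_ne (by omega : j ≠ s)]
            · rw [Function.update_of_ne hji, Function.update_of_ne hji, hy,
                Function.update_of_ne (by omega : j ≠ s)]
          simp only [eval, q1, q1']
          simpa [hyx, hyx'] using hne


theorem build_spec : ∀ d n s b, 1 ≤ d → 2^d - 1 ≤ n → n ≤ 2^(d+1) - 2 →
    depth (build d n s b) = d ∧
    UsesIn (build d n s b) s (s+n) ∧
    (∀ x : ℕ → Bool, (∀ j, s ≤ j → j < s + n → x j = false) → eval (build d n s b) x = b) ∧
    (∀ i, s ≤ i → i < s + n → ∃ x : ℕ → Bool,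
       (∀ j, (j < s ∨ s + n ≤ j) → x j = false) ∧
       eval (build d n s b) x ≠ eval (build d n s b) (Function.update x i (!x i))) := by
  intro d
  induction d using Nat.strong_induction_on with
  | _ d IH =>
  rcases d with _ | (_ | e)
  · intro n s b h; omega
  · intro n s b _ hlo hhi
    norm_num at hlo hhi
    exact build_spec_base n s b hlo hhi
  · intro n s b _ hlo hhi
    exact build_spec_step e IH n s b hlo hhi

def extend (n : ℕ) (x : Fin n → Bool) : ℕ → Bool := fun j => if h : j < n then x ⟨j, h⟩ else false

def toP (n : ℕ) (hn : 0 < n) : PT → PDTree n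
  | .leaf b => .leaf b
  | .node1 i t0 t1 => .node1 ⟨i % n, Nat.mod_lt _ hn⟩ (toP n hn t0) (toP n hn t1)
  | .node2 i j t0 t1 => .node2 ⟨i % n, Nat.mod_lt _ hn⟩ ⟨j % n, Nat.mod_lt _ hn⟩
      (toP n hn t0) (toP n hn t1)

lemma depth_toP (n : ℕ) (hn : 0 < n) : ∀ T : PT, (toP n hn T).depth = T.depth := by
  intro T
  induction T with
  | leaf b => rfl
  | node1 i t0 t1 ih0 ih1 => simp [toP, depth, PDTree.depth, ih0, ih1]
  | node2 i j t0 t1 ih0 ih1 => simp [toP, depth, PDTree.depth, ih0, ih1]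

lemma eval_toP (n : ℕ) (hn : 0 < n) : ∀ T : PT, UsesIn T 0 n → ∀ x : Fin n → Bool,
    (toP n hn T).eval x = T.eval (extend n x) := by
  intro T
  induction T with
  | leaf b => intro _ x; rfl
  | node1 i t0 t1 ih0 ih1 =>
    rintro ⟨_, h2, h3, h4⟩ x
    have hfi : (⟨i % n, Nat.mod_lt _ hn⟩ : Fin n) = ⟨i, h2⟩ := Fin.ext (Nat.mod_eq_of_lt h2)
    have hext : extend n x i = x ⟨i, h2⟩ := dif_pos h2
    simp only [toP, PDTree.eval, eval, hfi, hext]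
    split
    · exact ih1 h4 x
    · exact ih0 h3 x
  | node2 i j t0 t1 ih0 ih1 =>
    rintro ⟨_, h2, _, h4, h5, h6⟩ x
    have hfi : (⟨i % n, Nat.mod_lt _ hn⟩ : Fin n) = ⟨i, h2⟩ := Fin.ext (Nat.mod_eq_of_lt h2)
    have hfj : (⟨j % n, Nat.mod_lt _ hn⟩ : Fin n) = ⟨j, h4⟩ := Fin.ext (Nat.mod_eq_of_lt h4)
    have hexti : extend n x i = x ⟨i, h2⟩ := dif_pos h2
    have hextj : extend n x j = x ⟨j, h4⟩ := dif_pos h4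
    simp only [toP, PDTree.eval, eval, hfi, hfj, hexti, hextj]
    split
    · exact ih1 h6 x
    · exact ih0 h5 x

end PT

def dvars {n : ℕ} : DTree n → Finset (Fin n)
  | .leaf _ => ∅
  | .node i t0 t1 => insert i (dvars t0 ∪ dvars t1)

lemma card_dvars_le {n : ℕ} (T : DTree n) : (dvars T).card ≤ 2 ^ T.depth - 1 := by
  induction T with
  | leaf b => simp [dvars, DTree.depth]
  | node i t0 t1 ih0 ih1 =>
    have h0 : (2:ℕ)^t0.depth ≤ 2 ^ (max t0.depth t1.depth) :=
      Nat.pow_le_pow_right (by norm_num) (le_max_left _ _)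
    have h1 : (2:ℕ)^t1.depth ≤ 2 ^ (max t0.depth t1.depth) :=
      Nat.pow_le_pow_right (by norm_num) (le_max_right _ _)
    have hp0 : 0 < (2:ℕ)^t0.depth := Nat.pow_pos (by norm_num)
    have hp1 : 0 < (2:ℕ)^t1.depth := Nat.pow_pos (by norm_num)
    have hc : (dvars (DTree.node i t0 t1)).card ≤ (dvars t0).card + (dvars t1).card + 1 := by
      simp only [dvars]
      calc (insert i (dvars t0 ∪ dvars t1)).card ≤ (dvars t0 ∪ dvars t1).card + 1 :=
            Finset.card_insert_le _ _
      _ ≤ ((dvars t0).card + (dvars t1).card) + 1 := by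
            gcongr
            exact Finset.card_union_le _ _
    have hd : DTree.depth (DTree.node i t0 t1) = max t0.depth t1.depth + 1 := rfl
    rw [hd, pow_succ]
    omega

lemma deval_congr {n : ℕ} (T : DTree n) (x y : Fin n → Bool) (h : ∀ i ∈ dvars T, x i = y i) :
    T.eval x = T.eval y := by
  induction T with
  | leaf b => rfl
  | node i t0 t1 ih0 ih1 =>
    have hi : x i = y i := h i (by simp [dvars])
    simp only [DTree.eval, hi]
    split
    · exact ih1 (fun j hj => h j (by simp [dvars]; tauto))
    · exact ih0 (fun j hj => h j (by simp [dvars]; tauto))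

lemma mem_dvars {n : ℕ} (T : DTree n) (f : (Fin n → Bool) → Bool) (hT : T.Computes f)
    (i : Fin n) (hi : Influences f i) : i ∈ dvars T := by
  by_contra hmem
  obtain ⟨x, x', hagree, hne⟩ := hi
  apply hne
  rw [← hT x, ← hT x']
  exact deval_congr T x x' (fun j hj => hagree j (fun hji => hmem (hji ▸ hj)))

end Stmt8Aux


/-- for `2^(k-1) - 1 < n < 2^k - 1` there is a Boolean function on
`n` variables, all influencing, computed by a parity decision tree of depth
`k - 1`, while every deterministic decision tree computing it has depth at
least `k`. -/
theorem stmt8 (k n : ℕ) (hk : 2 ≤ k)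
    (h1 : 2 ^ (k - 1) - 1 < n) (h2 : n < 2 ^ k - 1) :
    ∃ f : (Fin n → Bool) → Bool,
      (∀ i, Influences f i) ∧
      (∃ P : PDTree n, P.depth = k - 1 ∧ P.Computes f) ∧
      (∀ T : DTree n, T.Computes f → k ≤ T.depth) := by
  classical
  set d := k - 1 with hd
  have hd1 : 1 ≤ d := by omega
  have hk' : k = d + 1 := by omega
  have hone : 0 < (2:ℕ)^d := Nat.pow_pos (by norm_num)
  rw [hk'] at h2
  have hlo : 2^d - 1 ≤ n := by omega
  have hhi : n ≤ 2^(d+1) - 2 := by omega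
  have hn0 : 0 < n := by omega
  obtain ⟨D, U, E, I⟩ := Stmt8Aux.PT.build_spec d n 0 false hd1 hlo hhi
  rw [Nat.zero_add] at U
  set T := Stmt8Aux.PT.build d n 0 false with hT
  have hinf : ∀ i : Fin n, Influences (fun x => T.eval (Stmt8Aux.PT.extend n x)) i := by
    intro i
    obtain ⟨x, hsupp, hne⟩ := I i.val (Nat.zero_le _) (by simpa using i.isLt)
    refine ⟨fun j => x j.val, fun j => Function.update x i.val (!x i.val) j.val, ?_, ?_⟩
    · intro j hj
      show x j.val = Function.update x (i.val) (!x i.val) j.val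
      rw [Function.update_of_ne (fun h => hj (Fin.ext h))]
    · have h1 : Stmt8Aux.PT.extend n (fun j => x j.val) = x := by
        funext j
        unfold Stmt8Aux.PT.extend
        split
        · rfl
        · exact (hsupp j (by omega)).symm
      have h2 : Stmt8Aux.PT.extend n (fun j => Function.update x i.val (!x i.val) j.val)
          = Function.update x i.val (!x i.val) := by
        funext j
        unfold Stmt8Aux.PT.extend
        split
        · rfl
        · next hjn =>
          rw [Function.update_of_ne (by have := i.isLt; omega : j ≠ i.val)]
          exact (hsupp j (by omega)).symm
      simp only [h1, h2]
      exact hne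
  refine ⟨fun x => T.eval (Stmt8Aux.PT.extend n x), hinf, ?_, ?_⟩
  · refine ⟨Stmt8Aux.PT.toP n hn0 T, ?_, ?_⟩
    · rw [Stmt8Aux.PT.depth_toP, D]
    · intro x
      exact Stmt8Aux.PT.eval_toP n hn0 T U x
  · intro T' hT'
    have hall : ∀ i : Fin n, i ∈ Stmt8Aux.dvars T' :=
      fun i => Stmt8Aux.mem_dvars T' _ hT' i (hinf i)
    have huniv : (Stmt8Aux.dvars T').card = n := by
      have : Stmt8Aux.dvars T' = Finset.univ := Finset.eq_univ_iff_forall.mpr hall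
      rw [this, Finset.card_univ, Fintype.card_fin]
    have hcard := Stmt8Aux.card_dvars_le T'
    rw [huniv] at hcard
    have hone' : 0 < (2:ℕ)^T'.depth := Nat.pow_pos (by norm_num)
    have hlt : 2^d < 2^(T'.depth) := by omega
    have : d < T'.depth := (Nat.pow_lt_pow_iff_right (by norm_num : 1 < 2)).mp hlt
    omega
end

section
/- For every k ≥ 2 and every n with 2^{k−1} − 1 < n ≤ 2^{k−1} + 2^{k−2} − 1, there exists a Boolean function f on n variables, all of whose variables are influencing, such that: f is computed by a parity decision tree of depth k − 1; f is computed by a deterministic decision tree of depth k; and f admits a restriction (fixing all but k − 1 of its variables to constants) isomorphic to the (k−1)-variable AND. In particular every deterministic decision tree computing f has depth exactly k while f has a depth-(k−1) parity decision tree. -/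
namespace S10

inductive NP where
  | leaf : Bool → NP
  | node1 : ℕ → NP → NP → NP
  | node2 : ℕ → ℕ → NP → NP → NP

namespace NP
def eval : NP → (ℕ → Bool) → Bool
  | leaf b, _ => b
  | node1 i t0 t1, x => if x i then eval t1 x else eval t0 x
  | node2 i j t0 t1, x => if xor (x i) (x j) then eval t1 x else eval t0 x
def depth : NP → ℕ
  | leaf _ => 0
  | node1 _ t0 t1 => max (depth t0) (depth t1) + 1
  | node2 _ _ t0 t1 => max (depth t0) (depth t1) + 1
end NP

def sz (d m : ℕ) : ℕ := 2 ^ d - 1 + m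

def bP : ℕ → ℕ → ℕ → NP
  | 0, _, _ => .leaf false
  | 1, 0, s => .node1 s (.leaf false) (.leaf true)
  | 1, _+1, s => .node2 s (s+1) (.leaf false) (.leaf true)
  | e+2, m, s =>
      .node1 s (bP (e+1) (min m (2^e)) (s+1))
        (bP (e+1) (m - min m (2^e)) (s + 1 + sz (e+1) (min m (2^e))))

lemma sz_split (e m : ℕ) :
    sz (e+1+1) m = 1 + sz (e+1) (min m (2^e)) + sz (e+1) (m - min m (2^e)) := by
  have h : 1 ≤ 2 ^ e := Nat.one_le_two_pow
  simp only [sz, pow_succ]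
  omega

lemma sz_one (m : ℕ) : sz (0+1) m = 1 + m := by simp [sz]

lemma sz_ge (d m : ℕ) : d + 1 ≤ sz (d+1) m := by
  have h : d + 1 < 2 ^ (d+1) := Nat.lt_two_pow_self (n := _)
  simp only [sz]; omega

lemma evalP_congr (d : ℕ) : ∀ m s (x y : ℕ → Bool),
    (∀ i, s ≤ i → i < s + sz (d+1) m → x i = y i) →
    (bP (d+1) m s).eval x = (bP (d+1) m s).eval y := by
  induction d with
  | zero =>
    intro m s x y h
    have h1 := sz_one m
    match m with
    | 0 =>
      have := h s le_rfl (by omega)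
      simp [bP, NP.eval, this]
    | m+1 =>
      have e1 := h s le_rfl (by omega)
      have e2 := h (s+1) (by omega) (by omega)
      simp [bP, NP.eval, e1, e2]
  | succ e ih =>
    intro m s x y h
    have hsplit := sz_split e m
    have hx : x s = y s := h s le_rfl (by omega)
    simp only [bP, NP.eval, hx]
    by_cases hy : y s = true
    · simp only [hy, if_true]
      exact ih _ _ x y (fun i h1 h2 => h i (by omega) (by omega))
    · simp only [Bool.not_eq_true] at hy
      simp only [hy, if_false]
      exact ih _ _ x y (fun i h1 h2 => h i (by omega) (by omega))

lemma evalP_point (d : ℕ) : ∀ m s (x : ℕ → Bool),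
    (∀ i, s ≤ i → i < s + sz (d+1) m → i ≠ s + d → x i = false) →
    (bP (d+1) m s).eval x = x (s + d) := by
  induction d with
  | zero =>
    intro m s x h
    have h1 := sz_one m
    match m with
    | 0 =>
      cases hx : x s <;> simp [bP, NP.eval, hx]
    | m+1 =>
      have e2 : x (s+1) = false := h (s+1) (by omega) (by omega) (by omega)
      cases hx : x s <;> simp [bP, NP.eval, hx, e2]
  | succ e ih =>
    intro m s x h
    have hsplit := sz_split e m
    have hx : x s = false := h s le_rfl (by omega) (by omega)
    simp only [bP, NP.eval, hx, if_false, Bool.false_eq_true]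
    have heq : s + 1 + e = s + (e + 1) := by omega
    rw [ih _ (s+1) x (fun i h1 h2 h3 => h i (by omega) (by omega) (by omega)), heq]

lemma evalP_false (d m s : ℕ) (x : ℕ → Bool)
    (h : ∀ i, s ≤ i → i < s + sz (d+1) m → x i = false) :
    (bP (d+1) m s).eval x = false := by
  have hg := sz_ge d m
  rw [evalP_point d m s x (fun i h1 h2 _ => h i h1 h2)]
  exact h (s+d) (by omega) (by omega)

lemma evalP_set (d m s : ℕ) (x : ℕ → Bool) (b : Bool) :
    ∃ y : ℕ → Bool, (∀ i, (i < s ∨ s + sz (d+1) m ≤ i) → y i = x i) ∧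
      (bP (d+1) m s).eval y = b := by
  have hg := sz_ge d m
  refine ⟨fun i => if i = s + d then b
      else if s ≤ i ∧ i < s + sz (d+1) m then false else x i, ?_, ?_⟩
  · intro i hi
    have hne : i ≠ s + d := by omega
    simp only [hne, if_false]
    have : ¬ (s ≤ i ∧ i < s + sz (d+1) m) := by omega
    simp [this]
  · rw [evalP_point]
    · simp
    · intro i h1 h2 h3
      simp [h3, h1, h2]


lemma influence (d : ℕ) : ∀ m s, m ≤ 2^d → ∀ i, s ≤ i → i < s + sz (d+1) m →
    ∃ x y : ℕ → Bool, (∀ j, j ≠ i → x j = y j) ∧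
      (bP (d+1) m s).eval x ≠ (bP (d+1) m s).eval y := by
  induction d with
  | zero =>
    intro m s hm i hi1 hi2
    have h1 := sz_one m
    match m, hm with
    | 0, _ =>
      have his : i = s := by omega
      refine ⟨fun _ => false, fun j => decide (j = i), fun j hj => by simp [hj], ?_⟩
      subst his
      simp [bP, NP.eval]
    | 1, _ =>
      refine ⟨fun _ => false, fun j => decide (j = i), fun j hj => by simp [hj], ?_⟩
      have : i = s ∨ i = s + 1 := by omega
      rcases this with h | h <;> subst h <;> simp [bP, NP.eval]
  | succ e ih =>
    intro m s hm i hi1 hi2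
    have hsplit := sz_split e m
    have hp : 1 ≤ 2 ^ e := Nat.one_le_two_pow
    have hm1 : min m (2^e) ≤ 2^e := min_le_right _ _
    have hm2 : m - min m (2^e) ≤ 2^e := by omega
    set m1 := min m (2^e) with hm1def
    set s2 := s + 1 + sz (e+1) m1 with hs2def
    have hgL := sz_ge e m1
    have hgR := sz_ge e (m - m1)
    rcases show i = s ∨ (s + 1 ≤ i ∧ i < s2) ∨ (s2 ≤ i ∧ i < s2 + sz (e+1) (m - m1))
        from by omega with hc | hc | hc
    · -- root variable
      set pR := s2 + e with hpR
      refine ⟨fun j => decide (j = pR), fun j => (decide (j = pR) || decide (j = s)),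
        fun j hj => ?_, ?_⟩
      · have hjs : j ≠ s := by omega
        simp [hjs]
      have hL : (bP (e+1) m1 (s+1)).eval (fun j => decide (j = pR)) = false := by
        apply evalP_false
        intro j hj1 hj2
        have : j ≠ pR := by omega
        simp [this]
      have hR : (bP (e+1) (m - m1) s2).eval (fun j => (decide (j = pR) || decide (j = s))) = true := by
        rw [evalP_point e (m - m1) s2 _ ?_]
        · simp [hpR]
        · intro j hj1 hj2 hj3
          have h4 : ¬ (j = pR) := by omega
          have h5 : ¬ (j = s) := by omega
          simp [h4, h5]
      have hs1 : ¬ (s = pR) := by omega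
      simp only [bP, NP.eval]
      simp [hs1, hL, hR, ← hm1def, ← hs2def]
    · -- left subtree
      obtain ⟨x, y, hxy, hne⟩ := ih m1 (s+1) hm1 i (by omega) (by omega)
      refine ⟨Function.update x s false, Function.update y s false, fun j hj => ?_, ?_⟩
      · by_cases h : j = s
        · subst h; simp
        · rw [Function.update_of_ne h, Function.update_of_ne h]; exact hxy j hj
      simp only [bP, NP.eval, Function.update_self, Bool.false_eq_true, if_false]
      have cx : (bP (e+1) m1 (s+1)).eval (Function.update x s false)
          = (bP (e+1) m1 (s+1)).eval x := by
        apply evalP_congr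
        intro j hj1 hj2
        exact Function.update_of_ne (by omega) _ _
      have cy : (bP (e+1) m1 (s+1)).eval (Function.update y s false)
          = (bP (e+1) m1 (s+1)).eval y := by
        apply evalP_congr
        intro j hj1 hj2
        exact Function.update_of_ne (by omega) _ _
      rw [cx, cy]
      exact hne
    · -- right subtree
      obtain ⟨x, y, hxy, hne⟩ := ih (m - m1) s2 hm2 i (by omega) (by omega)
      refine ⟨Function.update x s true, Function.update y s true, fun j hj => ?_, ?_⟩
      · by_cases h : j = s
        · subst h; simp
        · rw [Function.update_of_ne h, Function.update_of_ne h]; exact hxy j hj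
      simp only [bP, NP.eval, Function.update_self, if_true]
      have cx : (bP (e+1) (m - m1) s2).eval (Function.update x s true)
          = (bP (e+1) (m - m1) s2).eval x := by
        apply evalP_congr
        intro j hj1 hj2
        exact Function.update_of_ne (by omega) _ _
      have cy : (bP (e+1) (m - m1) s2).eval (Function.update y s true)
          = (bP (e+1) (m - m1) s2).eval y := by
        apply evalP_congr
        intro j hj1 hj2
        exact Function.update_of_ne (by omega) _ _
      rw [cx, cy]
      exact hne


lemma cert (d : ℕ) : ∀ m s (x : ℕ → Bool), 1 ≤ m → m ≤ 2^d →
    (∀ t, t < d → x (s+t) = false) →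
    ∀ S : Finset ℕ, S.card ≤ d + 1 →
    ∃ y : ℕ → Bool, (∀ i ∈ S, y i = x i) ∧
      (∀ i, (i < s ∨ s + sz (d+1) m ≤ i) → y i = x i) ∧
      (bP (d+1) m s).eval y ≠ (bP (d+1) m s).eval x := by
  induction d with
  | zero =>
    intro m s x hm1 hm2 _ S hS
    have h1 := sz_one m
    interval_cases m
    have hmiss : s ∉ S ∨ s + 1 ∉ S := by
      by_contra h
      push_neg at h
      have hsub : ({s, s+1} : Finset ℕ) ⊆ S := by
        intro j hj; simp at hj; rcases hj with rfl | rfl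
        · exact h.1
        · exact h.2
      have := Finset.card_le_card hsub
      rw [Finset.card_pair (by omega)] at this
      omega
    rcases hmiss with hmiss | hmiss
    · refine ⟨Function.update x s (!(x s)), fun i hi => ?_, fun i hi => ?_, ?_⟩
      · exact Function.update_of_ne (by rintro rfl; exact hmiss hi) _ _
      · exact Function.update_of_ne (by omega) _ _
      · simp only [bP, NP.eval, Function.update_self, Function.update_of_ne
          (show s + 1 ≠ s by omega)]
        cases hx : x s <;> cases hy : x (s+1) <;> simp [hx, hy]
    · refine ⟨Function.update x (s+1) (!(x (s+1))), fun i hi => ?_, fun i hi => ?_, ?_⟩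
      · exact Function.update_of_ne (by rintro rfl; exact hmiss hi) _ _
      · exact Function.update_of_ne (by omega) _ _
      · simp only [bP, NP.eval, Function.update_self, Function.update_of_ne
          (show s ≠ s + 1 by omega)]
        cases hx : x s <;> cases hy : x (s+1) <;> simp [hx, hy]
  | succ e ih =>
    intro m s x hm1 hm2 hx S hS
    have hsplit := sz_split e m
    have hp : 1 ≤ 2 ^ e := Nat.one_le_two_pow
    have hmm1 : 1 ≤ min m (2^e) := by omega
    have hmb1 : min m (2^e) ≤ 2^e := min_le_right _ _
    set m1 := min m (2^e) with hm1def
    set s2 := s + 1 + sz (e+1) m1 with hs2def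
    have hgL := sz_ge e m1
    have hgR := sz_ge e (m - m1)
    have hxs : x s = false := by have := hx 0 (by omega); simpa using this
    have hevx : (bP (e+1+1) m s).eval x = (bP (e+1) m1 (s+1)).eval x := by
      simp [bP, NP.eval, hxs, ← hm1def, ← hs2def]
    set SL := S.filter (fun i => s + 1 ≤ i ∧ i < s2) with hSL
    by_cases hcard : SL.card ≤ e + 1
    · obtain ⟨y, hy1, hy2, hy3⟩ := ih m1 (s+1) x hmm1 hmb1
        (fun t ht => by have := hx (t+1) (by omega); rwa [show s+(t+1) = s+1+t by omega] at this)
        SL hcard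
      refine ⟨y, fun i hi => ?_, fun i hi => ?_, ?_⟩
      · by_cases hin : s + 1 ≤ i ∧ i < s2
        · exact hy1 i (by rw [hSL]; exact Finset.mem_filter.mpr ⟨hi, hin⟩)
        · exact hy2 i (by omega)
      · exact hy2 i (by omega)
      · have hys : y s = x s := hy2 s (by omega)
        have hevy : (bP (e+1+1) m s).eval y = (bP (e+1) m1 (s+1)).eval y := by
          simp [bP, NP.eval, hys, hxs, ← hm1def, ← hs2def]
        rw [hevy, hevx]
        exact hy3
    · -- S is entirely inside the left block
      have hsub : SL ⊆ S := Finset.filter_subset _ _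
      have hcard2 : S.card ≤ SL.card := by omega
      have hSeq : SL = S := Finset.eq_of_subset_of_card_le hsub hcard2
      have hmemS : ∀ i ∈ S, s + 1 ≤ i ∧ i < s2 := by
        intro i hi
        rw [← hSeq] at hi
        exact (Finset.mem_filter.mp hi).2
      obtain ⟨y, hy1, hy2⟩ := evalP_set e (m - m1) s2 (Function.update x s true)
        (!((bP (e+1) m1 (s+1)).eval x))
      have hyoffR : ∀ i, (i < s2 ∨ s2 + sz (e+1) (m - m1) ≤ i) → y i = Function.update x s true i :=
        hy1
      refine ⟨y, fun i hi => ?_, fun i hi => ?_, ?_⟩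
      · have hb := hmemS i hi
        rw [hyoffR i (by omega), Function.update_of_ne (by omega)]
      · rw [hyoffR i (by omega), Function.update_of_ne (by omega)]
      · have hys : y s = true := by
          rw [hyoffR s (by omega), Function.update_self]
        have hevy : (bP (e+1+1) m s).eval y = (bP (e+1) (m - m1) s2).eval y := by
          simp [bP, NP.eval, hys, ← hm1def, ← hs2def]
        rw [hevy, hevx, hy2]
        simp

lemma evalP_and (d : ℕ) : ∀ m s (x : ℕ → Bool), 1 ≤ m →
    (∀ i, s ≤ i → i < s + sz (d+1) m → ¬ i < s + (d+1) → x i = false) →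
    (bP (d+1) m s).eval x =
      decide ((∀ t, t < d → x (s+t) = false) ∧ x (s+d) = true) := by
  induction d with
  | zero =>
    intro m s x hm h
    have h1 := sz_one m
    match m, hm with
    | m+1, _ =>
      have e2 : x (s+1) = false := h (s+1) (by omega) (by omega) (by omega)
      cases hx : x s <;> simp [bP, NP.eval, e2, hx]
  | succ e ih =>
    intro m s x hm h
    have hsplit := sz_split e m
    have hp : 1 ≤ 2 ^ e := Nat.one_le_two_pow
    have hmm1 : 1 ≤ min m (2^e) := by omega
    set m1 := min m (2^e) with hm1def
    set s2 := s + 1 + sz (e+1) m1 with hs2def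
    have hgL := sz_ge e m1
    have hgR := sz_ge e (m - m1)
    cases hxs : x s with
    | true =>
      have hevx : (bP (e+1+1) m s).eval x = (bP (e+1) (m - m1) s2).eval x := by
        simp [bP, NP.eval, hxs, ← hm1def, ← hs2def]
      rw [hevx, evalP_false e (m - m1) s2 x ?_]
      · symm
        rw [decide_eq_false_iff_not]
        rintro ⟨hA, -⟩
        have := hA 0 (by omega)
        simp [hxs] at this
      · intro i h1 h2
        exact h i (by omega) (by omega) (by omega)
    | false =>
      have hevx : (bP (e+1+1) m s).eval x = (bP (e+1) m1 (s+1)).eval x := by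
        simp [bP, NP.eval, hxs, ← hm1def, ← hs2def]
      rw [hevx, ih m1 (s+1) x hmm1 (fun i h1 h2 h3 => h i (by omega) (by omega) (by omega))]
      rw [decide_eq_decide]
      constructor
      · rintro ⟨hA, hB⟩
        refine ⟨fun t ht => ?_, ?_⟩
        · match t, ht with
          | 0, _ => simpa using hxs
          | t+1, ht => have := hA t (by omega); rwa [show s+1+t = s+(t+1) by omega] at this
        · rwa [show s+1+e = s+(e+1) by omega] at hB
      · rintro ⟨hA, hB⟩
        refine ⟨fun t ht => ?_, ?_⟩
        · have := hA (t+1) (by omega); rwa [show s+(t+1) = s+1+t by omega] at this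
        · rwa [show s+(e+1) = s+1+e by omega] at hB


inductive ND where
  | leaf : Bool → ND
  | node : ℕ → ND → ND → ND

namespace ND
def eval : ND → (ℕ → Bool) → Bool
  | leaf b, _ => b
  | node i t0 t1, x => if x i then eval t1 x else eval t0 x
def depth : ND → ℕ
  | leaf _ => 0
  | node _ t0 t1 => max (depth t0) (depth t1) + 1
end ND

def bD : ℕ → ℕ → ℕ → ND
  | 0, _, _ => .leaf false
  | 1, 0, s => .node s (.leaf false) (.leaf true)
  | 1, _+1, s => .node s (.node (s+1) (.leaf false) (.leaf true))
      (.node (s+1) (.leaf true) (.leaf false))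
  | e+2, m, s =>
      .node s (bD (e+1) (min m (2^e)) (s+1))
        (bD (e+1) (m - min m (2^e)) (s + 1 + sz (e+1) (min m (2^e))))

lemma bD_eval (d : ℕ) : ∀ m s x, (bD (d+1) m s).eval x = (bP (d+1) m s).eval x := by
  induction d with
  | zero =>
    intro m s x
    match m with
    | 0 => cases hx : x s <;> simp [bD, bP, ND.eval, NP.eval, hx]
    | m+1 => cases hx : x s <;> cases hy : x (s+1) <;> simp [bD, bP, ND.eval, NP.eval, hx, hy]
  | succ e ih =>
    intro m s x
    simp only [bD, bP, ND.eval, NP.eval, ih]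

lemma bP_depth (d : ℕ) : ∀ m s, (bP (d+1) m s).depth = d + 1 := by
  induction d with
  | zero =>
    intro m s
    match m with
    | 0 => rfl
    | m+1 => rfl
  | succ e ih =>
    intro m s
    simp [bP, NP.depth, ih]

lemma bD_depth0 (d : ℕ) : ∀ s, (bD (d+1) 0 s).depth = d + 1 := by
  induction d with
  | zero => intro s; rfl
  | succ e ih => intro s; simp [bD, ND.depth, Nat.zero_min, ih]

lemma bD_depth (d : ℕ) : ∀ m s, 1 ≤ m → m ≤ 2^d → (bD (d+1) m s).depth = d + 2 := by
  induction d with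
  | zero =>
    intro m s hm1 hm2
    interval_cases m
    rfl
  | succ e ih =>
    intro m s hm1 hm2
    have hp : 1 ≤ 2 ^ e := Nat.one_le_two_pow
    have hmm1 : 1 ≤ min m (2^e) := by omega
    have hmb1 : min m (2^e) ≤ 2^e := min_le_right _ _
    have hL := ih (min m (2^e)) (s+1) hmm1 hmb1
    simp only [bD, ND.depth, hL]
    have hRb : ∀ m' s', m' ≤ 2^e → (bD (e+1) m' s').depth ≤ e + 2 := by
      intro m' s' hm'
      match m', hm' with
      | 0, _ => rw [bD_depth0]; omega
      | m'+1, hm' => rw [ih (m'+1) s' (by omega) hm']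
    have hR := hRb (m - min m (2^e)) (s + 1 + sz (e+1) (min m (2^e))) (by omega)
    omega


def NP.toP {n : ℕ} (g : ℕ → Fin n) : NP → PDTree n
  | .leaf b => .leaf b
  | .node1 i t0 t1 => .node1 (g i) (t0.toP g) (t1.toP g)
  | .node2 i j t0 t1 => .node2 (g i) (g j) (t0.toP g) (t1.toP g)

lemma NP.toP_eval {n : ℕ} (g : ℕ → Fin n) : ∀ (T : NP) (x : Fin n → Bool),
    (T.toP g).eval x = T.eval (fun i => x (g i)) := by
  intro T
  induction T with
  | leaf b => intro x; rfl
  | node1 i t0 t1 ih0 ih1 => intro x; simp [NP.toP, PDTree.eval, NP.eval, ih0, ih1]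
  | node2 i j t0 t1 ih0 ih1 => intro x; simp [NP.toP, PDTree.eval, NP.eval, ih0, ih1]

lemma NP.toP_depth {n : ℕ} (g : ℕ → Fin n) : ∀ T : NP, (T.toP g).depth = T.depth := by
  intro T
  induction T with
  | leaf b => rfl
  | node1 i t0 t1 ih0 ih1 => simp [NP.toP, PDTree.depth, NP.depth, ih0, ih1]
  | node2 i j t0 t1 ih0 ih1 => simp [NP.toP, PDTree.depth, NP.depth, ih0, ih1]

def ND.toD {n : ℕ} (g : ℕ → Fin n) : ND → DTree n
  | .leaf b => .leaf b
  | .node i t0 t1 => .node (g i) (t0.toD g) (t1.toD g)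

lemma ND.toD_eval {n : ℕ} (g : ℕ → Fin n) : ∀ (T : ND) (x : Fin n → Bool),
    (T.toD g).eval x = T.eval (fun i => x (g i)) := by
  intro T
  induction T with
  | leaf b => intro x; rfl
  | node i t0 t1 ih0 ih1 => intro x; simp [ND.toD, DTree.eval, ND.eval, ih0, ih1]

lemma ND.toD_depth {n : ℕ} (g : ℕ → Fin n) : ∀ T : ND, (T.toD g).depth = T.depth := by
  intro T
  induction T with
  | leaf b => rfl
  | node i t0 t1 ih0 ih1 => simp [ND.toD, DTree.depth, ND.depth, ih0, ih1]

lemma dtree_path {n : ℕ} (T : DTree n) : ∀ x : Fin n → Bool,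
    ∃ S : Finset (Fin n), S.card ≤ T.depth ∧
      ∀ y, (∀ i ∈ S, y i = x i) → T.eval y = T.eval x := by
  induction T with
  | leaf b => intro x; exact ⟨∅, by simp [DTree.depth], fun y _ => rfl⟩
  | node i t0 t1 ih0 ih1 =>
    intro x
    cases hxi : x i with
    | false =>
      obtain ⟨S, hc, hS⟩ := ih0 x
      refine ⟨insert i S, ?_, ?_⟩
      · have := Finset.card_insert_le i S
        simp only [DTree.depth]
        omega
      · intro y hy
        have hyi : y i = x i := hy i (Finset.mem_insert_self _ _)
        simp only [DTree.eval, hyi, hxi, Bool.false_eq_true, if_false]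
        exact hS y (fun j hj => hy j (Finset.mem_insert_of_mem hj))
    | true =>
      obtain ⟨S, hc, hS⟩ := ih1 x
      refine ⟨insert i S, ?_, ?_⟩
      · have := Finset.card_insert_le i S
        simp only [DTree.depth]
        omega
      · intro y hy
        have hyi : y i = x i := hy i (Finset.mem_insert_self _ _)
        simp only [DTree.eval, hyi, hxi, if_true]
        exact hS y (fun j hj => hy j (Finset.mem_insert_of_mem hj))

end S10

open S10 in
/-- for `2^(k-1) - 1 < n ≤ 2^(k-1) + 2^(k-2) - 1` there is a
Boolean function on `n` variables, all influencing, computed by a parity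
decision tree of depth `k - 1` and by a deterministic decision tree of depth
`k`, admitting a restriction isomorphic to `AND_(k-1)`; moreover every
deterministic decision tree computing it has depth at least `k` (hence the
deterministic complexity is exactly `k`). -/
theorem stmt10 (k n : ℕ) (hk : 2 ≤ k)
    (h1 : 2 ^ (k - 1) - 1 < n) (h2 : n ≤ 2 ^ (k - 1) + 2 ^ (k - 2) - 1) :
    ∃ f : (Fin n → Bool) → Bool,
      (∀ i, Influences f i) ∧
      (∃ P : PDTree n, P.depth = k - 1 ∧ P.Computes f) ∧
      (∃ T : DTree n, T.depth = k ∧ T.Computes f) ∧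
      (∃ idx : Fin (k - 1) → Fin n, Function.Injective idx ∧
        ∃ (e : Bool) (d : Fin (k - 1) → Bool) (c : Fin n → Bool),
          ∀ x : Fin n → Bool,
            (∀ v, (∀ t, idx t ≠ v) → x v = c v) →
            f x = xor e (decide (∀ t, xor (x (idx t)) (d t) = true))) ∧
      (∀ T : DTree n, T.Computes f → k ≤ T.depth) := by
  have hK2 : k - 2 + 1 = k - 1 := by omega
  set K := k - 2 with hK
  have hp1 : 1 ≤ (2:ℕ)^(K+1) := Nat.one_le_two_pow
  have hpK : 1 ≤ (2:ℕ)^K := Nat.one_le_two_pow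
  have h1' : 2^(K+1) - 1 < n := by rw [hK2]; exact h1
  have h2' : n ≤ 2^(K+1) + 2^K - 1 := by rw [hK2, hK]; exact h2
  set m := n - (2 ^ (K+1) - 1) with hmdef
  have hm1 : 1 ≤ m := by omega
  have hm2 : m ≤ 2^K := by omega
  have hn : n = sz (K+1) m := by simp only [sz]; omega
  have hnpos : 0 < n := by omega
  have hKn : K + 1 < n := by
    have := Nat.lt_two_pow_self (n := K+1)
    omega
  set g : ℕ → Fin n := fun i => ⟨i % n, Nat.mod_lt _ hnpos⟩ with hg
  set lift : (Fin n → Bool) → (ℕ → Bool) :=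
    fun x i => if h : i < n then x ⟨i, h⟩ else false with hlift
  set f : (Fin n → Bool) → Bool := fun x => (bP (K+1) m 0).eval (lift x) with hf
  have hlx : ∀ (x : Fin n → Bool) (j : ℕ) (hj : j < n), lift x j = x ⟨j, hj⟩ := by
    intro x j hj; simp [hlift, hj]
  have transfer : ∀ (x : Fin n → Bool) (X : ℕ → Bool),
      (∀ (i : ℕ) (hi : i < n), X i = x ⟨i, hi⟩) → (bP (K+1) m 0).eval X = f x := by
    intro x X hX
    apply evalP_congr
    intro i hi1 hi2
    have hin : i < n := by omega
    rw [hX i hin, hlx x i hin]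
  have key : ∀ x : Fin n → Bool, (bP (K+1) m 0).eval (fun i => x (g i)) = f x := by
    intro x
    apply transfer
    intro i hi
    have : g i = ⟨i, hi⟩ := by
      apply Fin.ext
      simpa [hg] using Nat.mod_eq_of_lt hi
    rw [this]
  refine ⟨f, ?_, ?_, ?_, ?_, ?_⟩
  · -- all variables influencing
    intro i
    obtain ⟨X, Y, hXY, hne⟩ := influence K m 0 hm2 i.val (Nat.zero_le _) (by omega)
    refine ⟨fun v => X v.val, fun v => Y v.val, ?_, ?_⟩
    · intro j hj
      exact hXY j.val (fun hc => hj (Fin.ext hc))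
    · have e1 : (bP (K+1) m 0).eval X = f (fun v => X v.val) :=
        transfer (fun v => X v.val) X (fun i hi => rfl)
      have e2 : (bP (K+1) m 0).eval Y = f (fun v => Y v.val) :=
        transfer (fun v => Y v.val) Y (fun i hi => rfl)
      rw [← e1, ← e2]
      exact hne
  · -- parity decision tree of depth k-1
    refine ⟨(bP (K+1) m 0).toP g, ?_, ?_⟩
    · rw [NP.toP_depth, bP_depth]; omega
    · intro x
      rw [NP.toP_eval]
      exact key x
  · -- decision tree of depth k
    refine ⟨(bD (K+1) m 0).toD g, ?_, ?_⟩
    · rw [ND.toD_depth, bD_depth K m 0 hm1 hm2]; omega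
    · intro x
      rw [ND.toD_eval, bD_eval]
      exact key x
  · -- restriction isomorphic to AND_{k-1}
    refine ⟨fun t => ⟨t.val, by have := t.2; omega⟩, ?_, false,
      fun t => decide (t.val < K), fun _ => false, ?_⟩
    · intro a b hab
      apply Fin.ext
      simpa using congrArg Fin.val hab
    · intro x hx
      have hxf : ∀ (j : ℕ) (hj : j < n), ¬ j < K + 1 → x ⟨j, hj⟩ = false := by
        intro j hj hjK
        apply hx
        intro t ht
        have hv : (t : ℕ) = j := by simpa using congrArg Fin.val ht
        have := t.2
        omega
      have hcond : ∀ i, 0 ≤ i → i < 0 + sz (K+1) m → ¬ i < 0 + (K+1) → lift x i = false := by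
        intro i _ hi2 hiK
        by_cases hin : i < n
        · rw [hlx x i hin]
          exact hxf i hin (by omega)
        · simp [hlift, hin]
      show (bP (K+1) m 0).eval (lift x) = _
      rw [evalP_and K m 0 (lift x) hm1 hcond, Bool.false_xor, decide_eq_decide]
      have hxeq : ∀ (j1 j2 : ℕ) (hj1 : j1 < n) (hj2 : j2 < n), j1 = j2 →
          x ⟨j1, hj1⟩ = x ⟨j2, hj2⟩ := by
        intro j1 j2 hj1 hj2 h
        subst h
        rfl
      constructor
      · rintro ⟨hA, hB⟩ t
        have ht2 := t.2
        by_cases htK : t.val < K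
        · have hv := hA t.val htK
          rw [show (0 + t.val) = t.val from by omega, hlx x t.val (by omega)] at hv
          simp [htK, hv]
        · have hv : t.val = K := by omega
          rw [show (0 + K) = K from by omega, hlx x K (by omega)] at hB
          simp only [decide_eq_false htK, Bool.xor_false]
          exact (hxeq t.val K (by omega) (by omega) hv).trans hB
      · intro hAll
        constructor
        · intro t ht
          have h := hAll ⟨t, by omega⟩
          simp [ht] at h
          rw [show (0 + t) = t from by omega, hlx x t (by omega)]
          exact h
        · have h := hAll ⟨K, by omega⟩
          have hKK : ¬ (K < K) := lt_irrefl K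
          simp only [decide_eq_false hKK, Bool.xor_false] at h
          rw [show (0 + K) = K from by omega, hlx x K (by omega)]
          exact h
  · -- lower bound
    intro T hT
    by_contra hlt
    push_neg at hlt
    obtain ⟨S, hSc, hSpath⟩ := dtree_path T (fun _ => false)
    obtain ⟨Y, hY1, hY2, hY3⟩ := cert K m 0 (fun _ => false) hm1 hm2 (fun t ht => rfl)
      (S.image Fin.val) (by have := Finset.card_image_le (f := Fin.val) (s := S); omega)
    have hfy : f (fun v => Y v.val) = (bP (K+1) m 0).eval Y :=
      (transfer (fun v => Y v.val) Y (fun i hi => rfl)).symm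
    have hfx : f (fun _ => false) = (bP (K+1) m 0).eval (fun _ => false) :=
      (transfer (fun _ => false) (fun _ => false) (fun i hi => rfl)).symm
    have hagree : ∀ i ∈ S, (fun v : Fin n => Y v.val) i = (fun _ : Fin n => false) i := by
      intro i hi
      exact hY1 i.val (Finset.mem_image_of_mem _ hi)
    have := hSpath (fun v => Y v.val) hagree
    rw [hT, hT] at this
    rw [hfy, hfx] at this
    exact hY3 this
end

section
/- Let k ≥ 2 and let n satisfy 2^{k−1} + 2^{k−2} − 1 < n ≤ 2^k − 1. Then every Boolean function f on n variables, all of whose variables are influencing, that is computed by a decision tree of depth k has GF(2) algebraic degree at least k; that is, every multilinear polynomial over ZMod 2 (degree at most 1 in each variable) that agrees with f on all Boolean inputs has total degree at least k. -/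
namespace DTree

variable {n : ℕ}

/-- variables queried anywhere in the tree -/
def vars : DTree n → Finset (Fin n)
  | leaf _ => ∅
  | node i t0 t1 => insert i (vars t0 ∪ vars t1)

/-- restriction: substitute x i := b, removing all queries to i -/
def restrict (i : Fin n) (b : Bool) : DTree n → DTree n
  | leaf c => leaf c
  | node j t0 t1 =>
      if j = i then (if b then restrict i b t1 else restrict i b t0)
      else node j (restrict i b t0) (restrict i b t1)

theorem depth_restrict (i : Fin n) (b : Bool) :
    ∀ t : DTree n, (restrict i b t).depth ≤ t.depth
  | leaf _ => le_refl _
  | node j t0 t1 => by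
      have h0 := depth_restrict i b t0
      have h1 := depth_restrict i b t1
      simp only [restrict]
      split
      · split <;> simp [depth] <;> omega
      · simp [depth]; omega

theorem eval_restrict (i : Fin n) (b : Bool) (x : Fin n → Bool) (hx : x i = b) :
    ∀ t : DTree n, (restrict i b t).eval x = t.eval x
  | leaf _ => rfl
  | node j t0 t1 => by
      have h0 := eval_restrict i b x hx t0
      have h1 := eval_restrict i b x hx t1
      simp only [restrict]
      split
      · rename_i hj
        subst hj
        cases b <;> simp [eval, hx, h0, h1]
      · simp [eval, h0, h1]

theorem not_mem_vars_restrict (i : Fin n) (b : Bool) :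
    ∀ t : DTree n, i ∉ vars (restrict i b t)
  | leaf _ => by simp [restrict, vars]
  | node j t0 t1 => by
      have h0 := not_mem_vars_restrict i b t0
      have h1 := not_mem_vars_restrict i b t1
      simp only [restrict]
      split
      · split <;> assumption
      · rename_i hj
        simp [vars, h0, h1]
        exact fun h => hj h.symm

theorem vars_restrict_subset (i : Fin n) (b : Bool) :
    ∀ t : DTree n, vars (restrict i b t) ⊆ vars t
  | leaf _ => by simp [restrict, vars]
  | node j t0 t1 => by
      have h0 := vars_restrict_subset i b t0
      have h1 := vars_restrict_subset i b t1
      simp only [restrict]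
      split
      · split
        · exact subset_trans h1 (by intro a ha; simp [vars]; exact Or.inr (Or.inr ha))
        · exact subset_trans h0 (by intro a ha; simp [vars]; exact Or.inr (Or.inl ha))
      · intro a ha
        simp [vars] at ha ⊢
        rcases ha with h | h | h
        · exact Or.inl h
        · exact Or.inr (Or.inl (h0 h))
        · exact Or.inr (Or.inr (h1 h))

def reduce : DTree n → DTree n
  | leaf b => leaf b
  | node i t0 t1 => node i (reduce (restrict i false t0)) (reduce (restrict i true t1))
termination_by t => t.depth
decreasing_by
  · exact lt_of_le_of_lt (depth_restrict _ false t0) (by simp [depth])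
  · exact lt_of_le_of_lt (depth_restrict _ true t1) (by simp [depth])

end DTree

namespace DTree

theorem eval_reduce (t : DTree n) (x : Fin n → Bool) : (reduce t).eval x = t.eval x := by
  induction t using reduce.induct with
  | case1 b => rw [reduce]
  | case2 i t0 t1 ih0 ih1 =>
    rw [reduce]
    by_cases hx : x i
    · simp [eval, hx, ih1, eval_restrict i true x hx]
    · simp only [Bool.not_eq_true] at hx
      simp [eval, hx, ih0, eval_restrict i false x hx]

theorem depth_reduce (t : DTree n) : (reduce t).depth ≤ t.depth := by
  induction t using reduce.induct with
  | case1 b => simp [reduce]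
  | case2 i t0 t1 ih0 ih1 =>
    rw [reduce]
    have h0 := depth_restrict i false t0
    have h1 := depth_restrict i true t1
    simp [depth] at *
    omega

theorem vars_reduce_subset (t : DTree n) : vars (reduce t) ⊆ vars t := by
  induction t using reduce.induct with
  | case1 b => simp [reduce]
  | case2 i t0 t1 ih0 ih1 =>
    rw [reduce]
    intro a ha
    simp [vars] at ha ⊢
    rcases ha with h | h | h
    · exact Or.inl h
    · exact Or.inr (Or.inl (vars_restrict_subset i false t0 (ih0 h)))
    · exact Or.inr (Or.inr (vars_restrict_subset i true t1 (ih1 h)))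

/-- A tree is reduced if no node's variable reappears in its subtrees. -/
inductive Reduced : DTree n → Prop
  | leaf (b : Bool) : Reduced (leaf b)
  | node {i : Fin n} {t0 t1 : DTree n} :
      i ∉ vars t0 → i ∉ vars t1 → Reduced t0 → Reduced t1 → Reduced (node i t0 t1)

theorem reduced_reduce (t : DTree n) : Reduced (reduce t) := by
  induction t using reduce.induct with
  | case1 b => rw [reduce]; exact Reduced.leaf b
  | case2 i t0 t1 ih0 ih1 =>
    rw [reduce]
    exact Reduced.node
      (fun h => not_mem_vars_restrict i false t0 (vars_reduce_subset _ h))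
      (fun h => not_mem_vars_restrict i true t1 (vars_reduce_subset _ h))
      ih0 ih1

end DTree

namespace DTree

/-- Variables queried at some level `< m`. -/
def Qset : ℕ → DTree n → Finset (Fin n)
  | 0, _ => ∅
  | _ + 1, leaf _ => ∅
  | m + 1, node i t0 t1 => insert i (Qset m t0 ∪ Qset m t1)

/-- Number of nodes at level exactly `m` querying `v`. -/
def cnt : ℕ → DTree n → Fin n → ℕ
  | _, leaf _, _ => 0
  | 0, node i _ _, v => if i = v then 1 else 0
  | m + 1, node _ t0 t1, v => cnt m t0 v + cnt m t1 v

def diffLeaf : DTree n → DTree n → Bool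
  | leaf b0, leaf b1 => b0 != b1
  | _, _ => false

/-- Number of nodes at level exactly `m` querying `v` whose children are leaves
with differing labels. -/
def cntd : ℕ → DTree n → Fin n → ℕ
  | _, leaf _, _ => 0
  | 0, node i t0 t1, v => if i = v ∧ diffLeaf t0 t1 then 1 else 0
  | m + 1, node _ t0 t1, v => cntd m t0 v + cntd m t1 v

theorem cntd_le_cnt (m : ℕ) (t : DTree n) (v : Fin n) : cntd m t v ≤ cnt m t v := by
  induction t generalizing m with
  | leaf b => cases m <;> simp [cnt, cntd]
  | node i t0 t1 ih0 ih1 =>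
    cases m with
    | zero =>
      simp only [cnt, cntd]
      split
      · rename_i h; simp [h.1]
      · split <;> simp
    | succ m => simpa [cnt, cntd] using Nat.add_le_add (ih0 m) (ih1 m)

theorem card_Qset (m : ℕ) (t : DTree n) : (Qset m t).card + 1 ≤ 2 ^ m := by
  induction m generalizing t with
  | zero => simp [Qset]
  | succ m ih =>
    cases t with
    | leaf b => simp [Qset]; exact Nat.one_le_two_pow
    | node i t0 t1 =>
      have h0 := ih t0
      have h1 := ih t1
      have : (Qset (m+1) (node i t0 t1)).card ≤ 1 + ((Qset m t0).card + (Qset m t1).card) := by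
        simp only [Qset]
        exact le_trans (Finset.card_insert_le _ _)
          (by have := Finset.card_union_le (Qset m t0) (Qset m t1); omega)
      have hp : 2 ^ (m + 1) = 2 ^ m + 2 ^ m := by ring
      omega

theorem sum_cnt (m : ℕ) (t : DTree n) : ∑ v : Fin n, cnt m t v ≤ 2 ^ m := by
  induction t generalizing m with
  | leaf b => simp [cnt]
  | node i t0 t1 ih0 ih1 =>
    cases m with
    | zero =>
      simp only [cnt]
      rw [Finset.sum_ite_eq (Finset.univ) i (fun _ => 1)]
      simp
    | succ m =>
      have h0 := ih0 m
      have h1 := ih1 m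
      have : ∑ v : Fin n, cnt (m+1) (node i t0 t1) v
          = (∑ v : Fin n, cnt m t0 v) + ∑ v : Fin n, cnt m t1 v := by
        simp [cnt, Finset.sum_add_distrib]
      have hp : 2 ^ (m + 1) = 2 ^ m + 2 ^ m := by ring
      omega

theorem depth_eq_zero {t : DTree n} (h : t.depth = 0) : ∃ b, t = leaf b := by
  cases t with
  | leaf b => exact ⟨b, rfl⟩
  | node i t0 t1 => simp [depth] at h

/-- Every variable of a tree of depth ≤ m+1 is queried at a level < m or at level m. -/
theorem mem_Q_or_cnt {v : Fin n} : ∀ (t : DTree n) (m : ℕ), t.depth ≤ m + 1 → v ∈ vars t →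
    v ∈ Qset m t ∨ 1 ≤ cnt m t v := by
  intro t
  induction t with
  | leaf b => intro m _ hv; simp [vars] at hv
  | node i t0 t1 ih0 ih1 =>
    intro m hd hv
    cases m with
    | zero =>
      have hd' : t0.depth = 0 ∧ t1.depth = 0 := by simp [depth] at hd; omega
      obtain ⟨b0, rfl⟩ := depth_eq_zero hd'.1
      obtain ⟨b1, rfl⟩ := depth_eq_zero hd'.2
      simp [vars] at hv
      right
      simp [cnt, hv]
    | succ m =>
      have hd0 : t0.depth ≤ m + 1 := by simp [depth] at hd; omega
      have hd1 : t1.depth ≤ m + 1 := by simp [depth] at hd; omega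
      simp [vars] at hv
      rcases hv with rfl | hv | hv
      · left; simp [Qset]
      · rcases ih0 m hd0 hv with h | h
        · left; simp [Qset]; tauto
        · right; simp [cnt]; omega
      · rcases ih1 m hd1 hv with h | h
        · left; simp [Qset]; tauto
        · right; simp [cnt]; omega

theorem eval_congr_vars {x x' : Fin n → Bool} : ∀ t : DTree n,
    (∀ j ∈ vars t, x j = x' j) → t.eval x = t.eval x'
  | leaf b, _ => rfl
  | node i t0 t1, h => by
      have hi : x i = x' i := h i (by simp [vars])
      have h0 := eval_congr_vars t0 (fun j hj => h j (by simp [vars]; tauto))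
      have h1 := eval_congr_vars t1 (fun j hj => h j (by simp [vars]; tauto))
      simp [eval, hi, h0, h1]

/-- If every bottom-level occurrence of `v` has equal leaf children and `v` is not queried
above, then the tree's value does not depend on `v`. -/
theorem eval_indep {v : Fin n} : ∀ (t : DTree n) (m : ℕ), t.depth ≤ m + 1 →
    v ∉ Qset m t → cntd m t v = 0 →
    ∀ x x' : Fin n → Bool, (∀ j, j ≠ v → x j = x' j) → t.eval x = t.eval x' := by
  intro t
  induction t with
  | leaf b => intros; rfl
  | node i t0 t1 ih0 ih1 =>
    intro m hd hq hc x x' hxx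
    cases m with
    | zero =>
      have hd' : t0.depth = 0 ∧ t1.depth = 0 := by simp [depth] at hd; omega
      obtain ⟨b0, rfl⟩ := depth_eq_zero hd'.1
      obtain ⟨b1, rfl⟩ := depth_eq_zero hd'.2
      by_cases hiv : i = v
      · subst hiv
        simp [cntd, diffLeaf] at hc
        have : b0 = b1 := by
          by_contra hne
          simp [hne] at hc
        subst this
        simp [eval]
      · have := hxx i hiv
        simp [eval, this]
    | succ m =>
      have hd0 : t0.depth ≤ m + 1 := by simp [depth] at hd; omega
      have hd1 : t1.depth ≤ m + 1 := by simp [depth] at hd; omega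
      have hiv : i ≠ v := by intro h; exact hq (by simp [Qset, h])
      have hq0 : v ∉ Qset m t0 := fun h => hq (by simp [Qset]; tauto)
      have hq1 : v ∉ Qset m t1 := fun h => hq (by simp [Qset]; tauto)
      have hc' : cntd m t0 v = 0 ∧ cntd m t1 v = 0 := by simp [cntd] at hc; omega
      have hxi := hxx i hiv
      simp only [eval, hxi]
      by_cases h : x' i
      · simp [h, ih1 m hd1 hq1 hc'.2 x x' hxx]
      · simp [h, ih0 m hd0 hq0 hc'.1 x x' hxx]

end DTree

namespace DTree

/-- Boolean indicator input of a finset. -/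
def chi (T : Finset (Fin n)) : Fin n → Bool := fun i => decide (i ∈ T)

/-- Parity of the tree's values over all inputs supported in `S`. -/
def gpar (t : DTree n) (S : Finset (Fin n)) : ZMod 2 :=
  ∑ T ∈ S.powerset, (if t.eval (chi T) then 1 else 0)

theorem sum_powerset_split {M : Type*} [AddCommMonoid M] (S : Finset (Fin n)) (i : Fin n)
    (hi : i ∈ S) (F : Finset (Fin n) → M) :
    ∑ T ∈ S.powerset, F T = ∑ T ∈ (S.erase i).powerset, (F T + F (insert i T)) := by
  have hni : i ∉ S.erase i := Finset.notMem_erase i S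
  have hdis : Disjoint (S.erase i).powerset (Finset.image (insert i) (S.erase i).powerset) := by
    rw [Finset.disjoint_left]
    intro T hT hT'
    simp only [Finset.mem_powerset] at hT
    simp only [Finset.mem_image] at hT'
    obtain ⟨T', _, rfl⟩ := hT'
    exact hni (hT (Finset.mem_insert_self i T'))
  have hinj : ∀ T ∈ (S.erase i).powerset, ∀ T' ∈ (S.erase i).powerset,
      insert i T = insert i T' → T = T' := by
    intro T hT T' hT' h
    simp only [Finset.mem_powerset] at hT hT'
    have hT1 : i ∉ T := fun h' => hni (hT h')
    have hT2 : i ∉ T' := fun h' => hni (hT' h')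
    rw [← Finset.erase_insert hT1, ← Finset.erase_insert hT2, h]
  calc ∑ T ∈ S.powerset, F T
      = ∑ T ∈ (insert i (S.erase i)).powerset, F T := by rw [Finset.insert_erase hi]
    _ = ∑ T ∈ (S.erase i).powerset, F T
        + ∑ T ∈ (S.erase i).powerset, F (insert i T) := by
          rw [Finset.powerset_insert, Finset.sum_union hdis, Finset.sum_image hinj]
    _ = ∑ T ∈ (S.erase i).powerset, (F T + F (insert i T)) := by
          rw [Finset.sum_add_distrib]

theorem chi_insert_congr {T : Finset (Fin n)} {i j : Fin n} (h : j ≠ i) :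
    chi (insert i T) j = chi T j := by
  simp [chi, h]

theorem gpar_node {i : Fin n} {t0 t1 : DTree n} {S : Finset (Fin n)}
    (hi : i ∈ S) (h0 : i ∉ vars t0) (h1 : i ∉ vars t1) :
    gpar (node i t0 t1) S = gpar t0 (S.erase i) + gpar t1 (S.erase i) := by
  unfold gpar
  rw [sum_powerset_split S i hi, ← Finset.sum_add_distrib]
  apply Finset.sum_congr rfl
  intro T hT
  simp only [Finset.mem_powerset] at hT
  have hiT : i ∉ T := fun h => Finset.notMem_erase i S (hT h)
  have e0 : (node i t0 t1).eval (chi T) = t0.eval (chi T) := by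
    simp [eval, chi, hiT]
  have e1 : (node i t0 t1).eval (chi (insert i T)) = t1.eval (chi T) := by
    have : (node i t0 t1).eval (chi (insert i T)) = t1.eval (chi (insert i T)) := by
      simp [eval, chi]
    rw [this]
    exact eval_congr_vars t1 (fun j hj => chi_insert_congr (fun he => h1 (he ▸ hj)))
  rw [e0, e1]

theorem gpar_zero {t : DTree n} {S : Finset (Fin n)} {v : Fin n}
    (hv : v ∈ S) (hvt : v ∉ vars t) : gpar t S = 0 := by
  unfold gpar
  rw [sum_powerset_split S v hv]
  apply Finset.sum_eq_zero
  intro T hT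
  have : t.eval (chi (insert v T)) = t.eval (chi T) := by
    exact eval_congr_vars t (fun j hj => chi_insert_congr (fun he => hvt (he ▸ hj)))
  rw [this]
  exact CharTwo.add_self_eq_zero _

end DTree

namespace DTree

theorem key_lemma {v : Fin n} : ∀ (t : DTree n) (m : ℕ), Reduced t → t.depth ≤ m + 1 →
    v ∉ Qset m t → cnt m t v = 1 → cntd m t v = 1 →
    ∃ S : Finset (Fin n), S.card = m + 1 ∧ v ∈ S ∧ S ⊆ vars t ∧ gpar t S = 1 := by
  intro t
  induction t with
  | leaf b => intro m _ _ _ hc; simp [cnt] at hc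
  | node i t0 t1 ih0 ih1 =>
    intro m hred hd hq hc hcd
    cases hred with
    | node hv0 hv1 hr0 hr1 =>
    cases m with
    | zero =>
      simp only [cnt] at hc
      have hiv : i = v := by by_contra h; simp [h] at hc
      subst hiv
      simp only [cntd] at hcd
      have hdl : diffLeaf t0 t1 = true := by
        by_contra h
        simp [h] at hcd
      obtain ⟨b0, b1, rfl, rfl, hne⟩ : ∃ b0 b1, t0 = leaf b0 ∧ t1 = leaf b1 ∧ b0 ≠ b1 := by
        cases t0 with
        | node _ _ _ => simp [diffLeaf] at hdl
        | leaf b0 =>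
          cases t1 with
          | node _ _ _ => simp [diffLeaf] at hdl
          | leaf b1 =>
            refine ⟨b0, b1, rfl, rfl, ?_⟩
            simpa [diffLeaf] using hdl
      refine ⟨{i}, by simp, by simp, by simp [vars], ?_⟩
      unfold gpar
      rw [sum_powerset_split {i} i (Finset.mem_singleton_self i)]
      rw [Finset.erase_singleton, Finset.powerset_empty, Finset.sum_singleton]
      have hc0 : chi (∅ : Finset (Fin n)) i = false := by simp [chi]
      have hc1 : chi (insert i (∅ : Finset (Fin n))) i = true := by simp [chi]
      simp only [eval, hc0, hc1, if_false, if_true]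
      cases b0 <;> cases b1 <;> simp_all <;> decide
    | succ m =>
      have hd0 : t0.depth ≤ m + 1 := by simp [depth] at hd; omega
      have hd1 : t1.depth ≤ m + 1 := by simp [depth] at hd; omega
      have hiv : i ≠ v := by intro h; exact hq (by simp [Qset, h])
      have hq0 : v ∉ Qset m t0 := fun h => hq (by simp [Qset]; tauto)
      have hq1 : v ∉ Qset m t1 := fun h => hq (by simp [Qset]; tauto)
      simp only [cnt] at hc
      simp only [cntd] at hcd
      have hle0 := cntd_le_cnt m t0 v
      have hle1 := cntd_le_cnt m t1 v
      -- wlog: one side has cnt = 1, other has cnt = 0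
      rcases Nat.eq_zero_or_pos (cnt m t1 v) with h10 | h1pos
      · -- the special node is in t0
        have hc0' : cnt m t0 v = 1 := by omega
        have hcd0' : cntd m t0 v = 1 := by omega
        obtain ⟨S', hcard, hvS, hSsub, hg⟩ := ih0 m hr0 hd0 hq0 hc0' hcd0'
        have hiS' : i ∉ S' := fun h => hv0 (hSsub h)
        have hvt1 : v ∉ vars t1 := by
          intro h
          rcases mem_Q_or_cnt t1 m hd1 h with h' | h'
          · exact hq1 h'
          · omega
        refine ⟨insert i S', ?_, ?_, ?_, ?_⟩
        · rw [Finset.card_insert_of_notMem hiS', hcard]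
        · exact Finset.mem_insert_of_mem hvS
        · intro a ha
          rcases Finset.mem_insert.mp ha with rfl | ha
          · simp [vars]
          · simp [vars]; exact Or.inr (Or.inl (hSsub ha))
        · rw [gpar_node (Finset.mem_insert_self i S') hv0 hv1,
            Finset.erase_insert hiS', hg, gpar_zero hvS hvt1, add_zero]
      · -- the special node is in t1
        have hc1' : cnt m t1 v = 1 := by omega
        have hc00 : cnt m t0 v = 0 := by omega
        have hcd1' : cntd m t1 v = 1 := by omega
        obtain ⟨S', hcard, hvS, hSsub, hg⟩ := ih1 m hr1 hd1 hq1 hc1' hcd1'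
        have hiS' : i ∉ S' := fun h => hv1 (hSsub h)
        have hvt0 : v ∉ vars t0 := by
          intro h
          rcases mem_Q_or_cnt t0 m hd0 h with h' | h'
          · exact hq0 h'
          · omega
        refine ⟨insert i S', ?_, ?_, ?_, ?_⟩
        · rw [Finset.card_insert_of_notMem hiS', hcard]
        · exact Finset.mem_insert_of_mem hvS
        · intro a ha
          rcases Finset.mem_insert.mp ha with rfl | ha
          · simp [vars]
          · simp [vars]; exact Or.inr (Or.inr (hSsub ha))
        · rw [gpar_node (Finset.mem_insert_self i S') hv0 hv1,
            Finset.erase_insert hiS', hg, gpar_zero hvS hvt0, zero_add]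

end DTree

open Finset in
theorem poly_parity {n : ℕ} (S : Finset (Fin n)) (p : MvPolynomial (Fin n) (ZMod 2))
    (h : p.totalDegree < S.card) :
    ∑ T ∈ S.powerset, MvPolynomial.eval (fun i => if i ∈ T then (1 : ZMod 2) else 0) p = 0 := by
  have heval : ∀ T : Finset (Fin n),
      MvPolynomial.eval (fun i => if i ∈ T then (1 : ZMod 2) else 0) p
        = ∑ d ∈ p.support, p.coeff d * (if d.support ⊆ T then 1 else 0) := by
    intro T
    rw [MvPolynomial.eval_eq]
    apply Finset.sum_congr rfl
    intro d hd
    congr 1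
    by_cases hsub : d.support ⊆ T
    · rw [if_pos hsub]
      apply Finset.prod_eq_one
      intro i hi
      rw [if_pos (hsub hi), one_pow]
    · rw [if_neg hsub]
      obtain ⟨i, hiA, hiT⟩ := Finset.not_subset.mp hsub
      apply Finset.prod_eq_zero hiA
      rw [if_neg hiT]
      exact zero_pow (by simpa using hiA)
  calc ∑ T ∈ S.powerset, MvPolynomial.eval (fun i => if i ∈ T then (1 : ZMod 2) else 0) p
      = ∑ T ∈ S.powerset, ∑ d ∈ p.support, p.coeff d * (if d.support ⊆ T then 1 else 0) := by
        exact Finset.sum_congr rfl fun T _ => heval T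
    _ = ∑ d ∈ p.support, ∑ T ∈ S.powerset, p.coeff d * (if d.support ⊆ T then 1 else 0) :=
        Finset.sum_comm
    _ = 0 := by
        apply Finset.sum_eq_zero
        intro d hd
        rw [← Finset.mul_sum]
        have hcard : d.support.card < S.card := by
          have h1 : d.support.card ≤ d.sum fun _ e => e := by
            rw [Finsupp.sum]
            calc d.support.card = ∑ i ∈ d.support, 1 := by rw [Finset.card_eq_sum_ones]
              _ ≤ ∑ i ∈ d.support, d i := Finset.sum_le_sum fun i hi => by
                  have := Finsupp.mem_support_iff.mp hi; omega
          have h2 : (d.sum fun _ e => e) ≤ p.totalDegree := MvPolynomial.le_totalDegree hd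
          omega
        have hsum : ∑ T ∈ S.powerset, (if d.support ⊆ T then (1 : ZMod 2) else 0) = 0 := by
          rw [Finset.sum_boole]
          by_cases hAS : d.support ⊆ S
          · have hbij : (S.powerset.filter fun T => d.support ⊆ T).card
                = (S \ d.support).powerset.card := by
              apply Finset.card_bij' (fun T _ => T \ d.support) (fun U _ => U ∪ d.support)
              · intro T hT
                simp only [Finset.mem_filter, Finset.mem_powerset] at hT
                simp only [Finset.mem_powerset]
                exact Finset.sdiff_subset_sdiff hT.1 (le_refl _)
              · intro U hU
                simp only [Finset.mem_powerset] at hU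
                simp only [Finset.mem_filter, Finset.mem_powerset]
                exact ⟨Finset.union_subset (hU.trans Finset.sdiff_subset) hAS,
                  Finset.subset_union_right⟩
              · intro T hT
                simp only [Finset.mem_filter, Finset.mem_powerset] at hT
                exact Finset.sdiff_union_of_subset hT.2
              · intro U hU
                simp only [Finset.mem_powerset] at hU
                ext a
                simp only [Finset.mem_sdiff, Finset.mem_union]
                constructor
                · rintro ⟨h | h, hn⟩
                  · exact h
                  · exact absurd h hn
                · intro ha
                  have := Finset.mem_sdiff.mp (hU ha)
                  exact ⟨Or.inl ha, this.2⟩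
            rw [hbij, Finset.card_powerset, Finset.card_sdiff_of_subset hAS, Nat.cast_pow]
            have h2 : ((2 : ℕ) : ZMod 2) = 0 := rfl
            rw [h2, zero_pow (by omega)]
          · have : S.powerset.filter (fun T => d.support ⊆ T) = ∅ := by
              apply Finset.filter_eq_empty_iff.mpr
              intro T hT hsub
              exact hAS (hsub.trans (Finset.mem_powerset.mp hT))
            rw [this]
            simp
        rw [hsum, mul_zero]

/-- for `k ≥ 2` and `2^(k-1) + 2^(k-2) - 1 < n ≤ 2^k - 1`, every
Boolean function on `n` variables, all influencing, computed by a depth-`k`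
decision tree, has GF(2) algebraic degree at least `k`: every multilinear
polynomial over `ZMod 2` agreeing with `f` on Boolean inputs has total degree
at least `k`. -/
theorem stmt11 (k n : ℕ) (hk : 2 ≤ k)
    (h1 : 2 ^ (k - 1) + 2 ^ (k - 2) - 1 < n) (h2 : n ≤ 2 ^ k - 1)
    (f : (Fin n → Bool) → Bool) (hinf : ∀ i, Influences f i)
    (T : DTree n) (hdepth : T.depth = k) (hcomp : T.Computes f) :
    ∀ p : MvPolynomial (Fin n) (ZMod 2),
      (∀ i, p.degreeOf i ≤ 1) →
      (∀ x : Fin n → Bool,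
        MvPolynomial.eval (fun i => if x i then (1 : ZMod 2) else 0) p
          = if f x then 1 else 0) →
      k ≤ p.totalDegree := by
  classical
  intro p hml hagree
  by_contra hlt
  push_neg at hlt
  set t := DTree.reduce T with ht
  have hred := DTree.reduced_reduce T
  have hdt : t.depth ≤ k := hdepth ▸ DTree.depth_reduce T
  have hev : ∀ x, t.eval x = f x := fun x => (DTree.eval_reduce T x).trans (hcomp x)
  have hmk : k - 1 + 1 = k := by omega
  have main : ∀ v : Fin n, v ∈ DTree.Qset (k-1) t ∨ 2 ≤ DTree.cnt (k-1) t v := by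
    intro v
    by_contra hcon
    push_neg at hcon
    obtain ⟨hQ, hcnt⟩ := hcon
    have hdt' : t.depth ≤ (k-1) + 1 := by rw [hmk]; exact hdt
    by_cases hcd : DTree.cntd (k-1) t v = 0
    · obtain ⟨x, x', hxx, hne⟩ := hinf v
      exact hne (by rw [← hev x, ← hev x']
                    exact DTree.eval_indep t (k-1) hdt' hQ hcd x x' hxx)
    · have hle := DTree.cntd_le_cnt (k-1) t v
      have hc1 : DTree.cnt (k-1) t v = 1 := by omega
      have hcd1 : DTree.cntd (k-1) t v = 1 := by omega
      obtain ⟨S, hcard, hvS, hsub, hg⟩ := DTree.key_lemma t (k-1) hred hdt' hQ hc1 hcd1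
      have hzero := poly_parity S p (by omega : p.totalDegree < S.card)
      have htrans : ∑ T' ∈ S.powerset,
          MvPolynomial.eval (fun i => if i ∈ T' then (1:ZMod 2) else 0) p = DTree.gpar t S := by
        unfold DTree.gpar
        apply Finset.sum_congr rfl
        intro T' _
        have h1' := hagree (DTree.chi T')
        have h2' : (fun i => if DTree.chi T' i then (1:ZMod 2) else 0)
            = fun i => if i ∈ T' then (1:ZMod 2) else 0 := by
          funext i; simp [DTree.chi]
        rw [h2'] at h1'
        rw [h1', hev (DTree.chi T')]
      rw [htrans, hg] at hzero
      exact one_ne_zero hzero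
  set F := Finset.univ.filter (fun v : Fin n => 2 ≤ DTree.cnt (k-1) t v) with hF
  have hcover : (Finset.univ : Finset (Fin n)) ⊆ DTree.Qset (k-1) t ∪ F := by
    intro v _
    rcases main v with h | h
    · exact Finset.mem_union_left _ h
    · exact Finset.mem_union_right _ (Finset.mem_filter.mpr ⟨Finset.mem_univ v, h⟩)
  have hn : n ≤ (DTree.Qset (k-1) t).card + F.card := by
    calc n = (Finset.univ : Finset (Fin n)).card := by simp
    _ ≤ (DTree.Qset (k-1) t ∪ F).card := Finset.card_le_card hcover
    _ ≤ _ := Finset.card_union_le _ _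
  have hQc := DTree.card_Qset (k-1) t
  have hsc := DTree.sum_cnt (k-1) t
  have hFc : 2 * F.card ≤ 2 ^ (k-1) := by
    calc 2 * F.card = ∑ _v ∈ F, 2 := by rw [Finset.sum_const]; ring
    _ ≤ ∑ v ∈ F, DTree.cnt (k-1) t v :=
        Finset.sum_le_sum (fun v hv => (Finset.mem_filter.mp hv).2)
    _ ≤ ∑ v : Fin n, DTree.cnt (k-1) t v :=
        Finset.sum_le_sum_of_subset (Finset.filter_subset _ _)
    _ ≤ 2 ^ (k-1) := hsc
  have hpow : 2 ^ (k-1) = 2 * 2 ^ (k-2) := by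
    have hkk : k - 1 = (k-2) + 1 := by omega
    rw [hkk, pow_succ]; ring
  have hpos : 1 ≤ 2 ^ (k-2) := Nat.one_le_two_pow
  omega
end

section
/- Let m ≥ 1 and let f be a Maiorana–McFarland bent function on n = 2m variables, i.e. f(x, y) = (XOR over those i : Fin m with φ(x) i = true of y i) XOR h(x) where φ : (Fin m → Bool) → (Fin m → Bool) is a bijection and h : (Fin m → Bool) → Bool is arbitrary. Then every decision tree computing f has depth at least n = 2m; i.e. the deterministic query complexity of f equals n. -/
/-- XOR over those coordinates `i` with `a i = true` of `y i`, expressed as the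
parity of the number of coordinates where both `a` and `y` are true. -/
def parityDot {m : ℕ} (a y : Fin m → Bool) : Bool :=
  decide (Odd ((Finset.univ.filter (fun i : Fin m => a i = true ∧ y i = true)).card))

/-- The Maiorana–McFarland function `f(x, y) = φ(x)·y XOR h(x)` on `m + m`
variables, where the first `m` coordinates form `x` and the last `m` form `y`. -/
def MMBent {m : ℕ} (φ : (Fin m → Bool) → (Fin m → Bool))
    (h : (Fin m → Bool) → Bool) (z : Fin (m + m) → Bool) : Bool :=
  xor (parityDot (φ (fun i => z (Fin.castAdd m i))) (fun i => z (Fin.natAdd m i)))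
      (h (fun i => z (Fin.castAdd m i)))

namespace Stmt13Aux

def ε (b : Bool) : ℤ := if b then -1 else 1

lemma ε_ne_zero (b : Bool) : ε b ≠ 0 := by cases b <;> simp [ε]
lemma ε_xor (a b : Bool) : ε (xor a b) = ε a * ε b := by cases a <;> cases b <;> simp [ε]
lemma ε_not (b : Bool) : ε (!b) = - ε b := by cases b <;> simp [ε]

/-- Sum over a subcube of a product of signs on a set of coordinates containing a free
coordinate vanishes. -/
lemma cube_sum_zero {n : ℕ} (A : Finset (Fin n)) (a : Fin n → Bool) (c : Fin n → Bool)
    (i₀ : Fin n) (hi₀ : i₀ ∉ A) (hc : c i₀ = true) :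
    ∑ z ∈ Finset.univ.filter (fun z : Fin n → Bool => ∀ i ∈ A, z i = a i),
      ∏ i, (if c i = true then ε (z i) else 1) = 0 := by
  classical
  apply Finset.sum_involution (fun z _ => Function.update z i₀ (!z i₀))
  · intro z hz
    have key : ∏ i, (if c i = true then ε (Function.update z i₀ (!z i₀) i) else 1)
        = - ∏ i, (if c i = true then ε (z i) else 1) := by
      rw [← Finset.mul_prod_erase Finset.univ _ (Finset.mem_univ i₀),
          ← Finset.mul_prod_erase Finset.univ (fun i => if c i = true then ε (z i) else 1)
            (Finset.mem_univ i₀)]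
      have h1 : ∀ i ∈ Finset.univ.erase i₀,
          (if c i = true then ε (Function.update z i₀ (!z i₀) i) else 1)
          = (if c i = true then ε (z i) else 1) := by
        intro i hi
        rw [Function.update_of_ne (Finset.mem_erase.mp hi).1]
      rw [Finset.prod_congr rfl h1, hc, if_pos rfl, if_pos rfl, Function.update_self,
        ε_not, neg_mul]
    rw [key]; ring
  · intro z hz hne
    intro hcontra
    have := congrFun hcontra i₀
    rw [Function.update_self] at this
    cases hb : z i₀ <;> simp [hb] at this
  · intro z hz
    simp [Function.update_idem, Function.update_self]
  · intro z hz
    simp only [Finset.mem_filter, Finset.mem_univ, true_and] at hz ⊢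
    intro i hi
    have hne : i ≠ i₀ := fun h => hi₀ (h ▸ hi)
    rw [Function.update_of_ne hne]
    exact hz i hi


lemma exists_free {n : ℕ} (A : Finset (Fin n)) (hA : A.card < n) : ∃ i₀, i₀ ∉ A := by
  by_contra hcon
  push_neg at hcon
  have : A = Finset.univ := Finset.eq_univ_iff_forall.mpr hcon
  rw [this, Finset.card_univ, Fintype.card_fin] at hA
  omega

lemma tree_sum {n : ℕ} (T : DTree n) :
    ∀ (A : Finset (Fin n)) (a : Fin n → Bool), T.depth + A.card < n →
    ∑ z ∈ Finset.univ.filter (fun z : Fin n → Bool => ∀ i ∈ A, z i = a i),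
      ε (T.eval z) * ∏ i, ε (z i) = 0 := by
  classical
  induction T with
  | leaf b =>
    intro A a hlt
    simp only [DTree.depth, Nat.zero_add] at hlt
    obtain ⟨i₀, hi₀⟩ := exists_free A hlt
    calc ∑ z ∈ Finset.univ.filter (fun z : Fin n → Bool => ∀ i ∈ A, z i = a i),
          ε ((DTree.leaf b).eval z) * ∏ i, ε (z i)
        = ε b * ∑ z ∈ Finset.univ.filter (fun z : Fin n → Bool => ∀ i ∈ A, z i = a i),
            ∏ i, (if (fun _ : Fin n => true) i = true then ε (z i) else 1) := by
          rw [Finset.mul_sum]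
          exact Finset.sum_congr rfl (fun z _ => by simp [DTree.eval, Finset.mul_sum])
      _ = 0 := by rw [cube_sum_zero A a _ i₀ hi₀ rfl, mul_zero]
  | node i t0 t1 ih0 ih1 =>
    intro A a hlt
    simp only [DTree.depth] at hlt
    by_cases hiA : i ∈ A
    · have hev : ∀ z ∈ Finset.univ.filter (fun z : Fin n → Bool => ∀ i ∈ A, z i = a i),
          ε ((DTree.node i t0 t1).eval z) * ∏ j, ε (z j)
          = ε ((if a i = true then t1 else t0).eval z) * ∏ j, ε (z j) := by
        intro z hz
        simp only [Finset.mem_filter, Finset.mem_univ, true_and] at hz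
        have hzi := hz i hiA
        cases hb : a i <;> simp [DTree.eval, hzi, hb]
      by_cases hai : a i = true
      · rw [Finset.sum_congr rfl hev, if_pos hai]
        exact ih1 A a (by omega)
      · rw [Finset.sum_congr rfl hev, if_neg hai]
        exact ih0 A a (by omega)
    · rw [← Finset.sum_filter_add_sum_filter_not
        (Finset.univ.filter (fun z : Fin n → Bool => ∀ i ∈ A, z i = a i))
        (fun z => z i = true)]
      have hcube : ∀ b : Bool, ∀ z : Fin n → Bool,
          ((∀ j ∈ A, z j = a j) ∧ z i = b) ↔
          (∀ j ∈ insert i A, z j = Function.update a i b j) := by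
        intro b z
        constructor
        · rintro ⟨hall, hb⟩ j hj
          rcases Finset.mem_insert.mp hj with rfl | hj
          · rw [Function.update_self]; exact hb
          · rw [Function.update_of_ne (fun h => hiA (by rw [← h]; exact hj))]
            exact hall j hj
        · intro hall
          refine ⟨fun j hj => ?_, ?_⟩
          · have := hall j (Finset.mem_insert_of_mem hj)
            rwa [Function.update_of_ne (fun h => hiA (by rw [← h]; exact hj))] at this
          · have := hall i (Finset.mem_insert_self i A)
            rwa [Function.update_self] at this
      have hcard : (insert i A).card = A.card + 1 := Finset.card_insert_of_notMem hiA
      have hset : ∀ b : Bool,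
          (Finset.univ.filter (fun z : Fin n → Bool => ∀ i ∈ A, z i = a i)).filter
            (fun z => z i = b)
          = Finset.univ.filter
              (fun z : Fin n → Bool => ∀ j ∈ insert i A, z j = Function.update a i b j) := by
        intro b
        ext z
        simp only [Finset.mem_filter, Finset.mem_univ, true_and, and_assoc]
        exact hcube b z
      have hz1 : ∑ z ∈ (Finset.univ.filter
            (fun z : Fin n → Bool => ∀ i ∈ A, z i = a i)).filter (fun z => z i = true),
          ε ((DTree.node i t0 t1).eval z) * ∏ j, ε (z j) = 0 := by
        rw [hset true]
        have hd1 : t1.depth + (insert i A).card < n := by omega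
        refine Eq.trans (Finset.sum_congr rfl (fun z hz => ?_))
          (ih1 (insert i A) (Function.update a i true) hd1)
        simp only [Finset.mem_filter, Finset.mem_univ, true_and] at hz
        have hzi := hz i (Finset.mem_insert_self i A)
        rw [Function.update_self] at hzi
        simp [DTree.eval, hzi]
      have hz0 : ∑ z ∈ (Finset.univ.filter
            (fun z : Fin n → Bool => ∀ i ∈ A, z i = a i)).filter (fun z => ¬ z i = true),
          ε ((DTree.node i t0 t1).eval z) * ∏ j, ε (z j) = 0 := by
        have hne : (Finset.univ.filter
              (fun z : Fin n → Bool => ∀ i ∈ A, z i = a i)).filter (fun z => ¬ z i = true)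
            = (Finset.univ.filter
              (fun z : Fin n → Bool => ∀ i ∈ A, z i = a i)).filter (fun z => z i = false) := by
          ext z
          simp [Finset.mem_filter]
        rw [hne, hset false]
        have hd0 : t0.depth + (insert i A).card < n := by clear hne hz1; omega
        refine Eq.trans (Finset.sum_congr rfl (fun z hz => ?_))
          (ih0 (insert i A) (Function.update a i false) hd0)
        simp only [Finset.mem_filter, Finset.mem_univ, true_and] at hz
        have hzi := hz i (Finset.mem_insert_self i A)
        rw [Function.update_self] at hzi
        simp [DTree.eval, hzi]
      rw [hz1, hz0, add_zero]

lemma eps_parityDot {m : ℕ} (a y : Fin m → Bool) :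
    ε (parityDot a y) = ∏ i, (if a i = true ∧ y i = true then (-1:ℤ) else 1) := by
  classical
  rw [Finset.prod_ite, Finset.prod_const, Finset.prod_const, one_pow, mul_one, parityDot]
  by_cases hodd : Odd (Finset.univ.filter (fun i : Fin m => a i = true ∧ y i = true)).card
  · simp [ε, hodd, Odd.neg_one_pow hodd]
  · simp [ε, hodd, (Nat.not_odd_iff_even.mp hodd).neg_one_pow]

lemma inner_sum {m : ℕ} (a : Fin m → Bool) :
    ∑ y : Fin m → Bool, ε (parityDot a y) * ∏ i, ε (y i)
      = if a = (fun _ => true) then (2:ℤ)^m else 0 := by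
  classical
  have hterm : ∀ y : Fin m → Bool, ε (parityDot a y) * ∏ i, ε (y i)
      = ∏ i, (if (!(a i)) = true then ε (y i) else 1) := by
    intro y
    rw [eps_parityDot, ← Finset.prod_mul_distrib]
    refine Finset.prod_congr rfl (fun i _ => ?_)
    cases ha : a i <;> cases hy : y i <;> simp [ε, ha, hy]
  by_cases htop : a = fun _ => true
  · subst htop
    rw [if_pos rfl]
    have h1 : ∀ y : Fin m → Bool, ε (parityDot (fun _ => true) y) * ∏ i, ε (y i) = 1 := by
      intro y
      rw [hterm y]
      simp
    refine Eq.trans (Finset.sum_congr rfl (fun y _ => h1 y)) ?_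
    simp [Finset.card_univ, Fintype.card_fun]
  · rw [if_neg htop]
    obtain ⟨i₀, hi₀⟩ : ∃ i₀, a i₀ = false := by
      by_contra hcon
      push_neg at hcon
      exact htop (funext fun i => by
        have := hcon i
        cases h : a i
        · exact absurd h (this ·)
        · rfl)
    refine Eq.trans (Finset.sum_congr rfl (fun y _ => hterm y)) ?_
    have hz := cube_sum_zero (n := m) ∅ (fun _ => false) (fun i => !(a i)) i₀
      (Finset.notMem_empty i₀) (by simp [hi₀])
    simpa using hz

lemma MM_sum {m : ℕ} (φ : (Fin m → Bool) → (Fin m → Bool)) (hφ : Function.Bijective φ)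
    (h : (Fin m → Bool) → Bool) :
    ∑ z : Fin (m + m) → Bool, ε (MMBent φ h z) * ∏ i, ε (z i) ≠ 0 := by
  classical
  set e : ((Fin m → Bool) × (Fin m → Bool)) ≃ (Fin (m + m) → Bool) :=
    (Equiv.sumArrowEquivProdArrow (Fin m) (Fin m) Bool).symm.trans
      (Equiv.arrowCongr finSumFinEquiv (Equiv.refl Bool)) with he
  have hx : ∀ (x y : Fin m → Bool) (i : Fin m), e (x, y) (Fin.castAdd m i) = x i := by
    intro x y i
    simp [he, Equiv.arrowCongr, Equiv.sumArrowEquivProdArrow]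
  have hy : ∀ (x y : Fin m → Bool) (i : Fin m), e (x, y) (Fin.natAdd m i) = y i := by
    intro x y i
    simp only [he, Equiv.trans_apply, Equiv.arrowCongr, Equiv.sumArrowEquivProdArrow,
      Equiv.coe_fn_mk, Equiv.coe_fn_symm_mk, Equiv.refl_apply, Function.comp_apply,
      finSumFinEquiv_symm_apply_natAdd, Sum.elim_inr]
  have hsum : ∑ z : Fin (m + m) → Bool, ε (MMBent φ h z) * ∏ i, ε (z i)
      = ∑ p : (Fin m → Bool) × (Fin m → Bool), ε (MMBent φ h (e p)) * ∏ i, ε (e p i) :=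
    (Fintype.sum_equiv e _ _ (fun p => rfl)).symm
  have hMM : ∀ x y : Fin m → Bool,
      MMBent φ h (e (x, y)) = xor (parityDot (φ x) y) (h x) := by
    intro x y
    have h1 : (fun i => e (x, y) (Fin.castAdd m i)) = x := funext (hx x y)
    have h2 : (fun i => e (x, y) (Fin.natAdd m i)) = y := funext (hy x y)
    rw [MMBent, h1, h2]
  have hprod : ∀ x y : Fin m → Bool,
      ∏ j, ε (e (x, y) j) = (∏ i, ε (x i)) * ∏ i, ε (y i) := by
    intro x y
    rw [← Equiv.prod_comp finSumFinEquiv (fun j => ε (e (x, y) j)), Fintype.prod_sum_type]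
    congr 1
    · exact Finset.prod_congr rfl fun i _ => by rw [finSumFinEquiv_apply_left, hx]
    · exact Finset.prod_congr rfl fun i _ => by rw [finSumFinEquiv_apply_right, hy]
  rw [hsum, Fintype.sum_prod_type]
  have hinner : ∀ x : Fin m → Bool,
      ∑ y : Fin m → Bool, ε (MMBent φ h (e (x, y))) * ∏ i, ε (e (x, y) i)
      = (ε (h x) * ∏ i, ε (x i)) * (if φ x = (fun _ => true) then (2:ℤ)^m else 0) := by
    intro x
    rw [← inner_sum (φ x), Finset.mul_sum]
    refine Finset.sum_congr rfl fun y _ => ?_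
    rw [hMM x y, hprod x y, ε_xor]
    ring
  rw [Finset.sum_congr rfl fun x _ => hinner x]
  obtain ⟨x₀, hx₀⟩ := hφ.surjective (fun _ => true)
  rw [Finset.sum_eq_single x₀ (fun x _ hne => by
      rw [if_neg (fun hcon => hne (hφ.injective (hx₀ ▸ hcon))), mul_zero])
    (fun hcon => absurd (Finset.mem_univ x₀) hcon)]
  rw [if_pos hx₀]
  exact mul_ne_zero (mul_ne_zero (ε_ne_zero _)
    (Finset.prod_ne_zero_iff.mpr fun i _ => ε_ne_zero _)) (pow_ne_zero _ two_ne_zero)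

end Stmt13Aux

/-- for `m ≥ 1`, every decision tree computing a
Maiorana–McFarland bent function on `n = m + m` variables has depth at least
`n`; i.e. its deterministic query complexity is `n`. -/
theorem stmt13 (m : ℕ) (hm : 1 ≤ m)
    (φ : (Fin m → Bool) → (Fin m → Bool)) (hφ : Function.Bijective φ)
    (h : (Fin m → Bool) → Bool)
    (T : DTree (m + m)) (hcomp : T.Computes (MMBent φ h)) :
    m + m ≤ T.depth := by
  classical
  by_contra hd
  push_neg at hd
  have h0 := Stmt13Aux.tree_sum T ∅ (fun _ => false) (by simpa using hd)
  have hfilter : (Finset.univ.filter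
      (fun z : Fin (m + m) → Bool => ∀ i ∈ (∅ : Finset (Fin (m + m))), z i = false))
      = Finset.univ := by
    simp
  rw [hfilter] at h0
  refine Stmt13Aux.MM_sum φ hφ h ?_
  rw [← h0]
  exact Finset.sum_congr rfl fun z _ => by rw [hcomp z]
end

section
/- Let m ≥ 1 and let f be a Maiorana–McFarland bent function on n = 2m variables, i.e. f(x, y) = (XOR over those i with φ(x) i = true of y i) XOR h(x) with φ bijective. Then f is computed by a parity decision tree of depth m + ⌈m/2⌉ = ⌈3n/4⌉. -/
namespace Stmt14Aux

variable {m : ℕ}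

/-- count of indices `i ≥ k` with `a i && y i`. -/
def Nk (a y : Fin m → Bool) (k : ℕ) : ℕ :=
  (Finset.univ.filter (fun i : Fin m => k ≤ (i : ℕ) ∧ a i = true ∧ y i = true)).card

lemma Nk_of_le (a y : Fin m → Bool) (k : ℕ) (hk : m ≤ k) : Nk a y k = 0 := by
  have : (Finset.univ.filter
      (fun i : Fin m => k ≤ (i : ℕ) ∧ a i = true ∧ y i = true)) = ∅ := by
    apply Finset.filter_eq_empty_iff.mpr
    intro i _
    have := i.isLt
    intro hc
    omega
  simp [Nk, this]

lemma oddDecide_add (x y : ℕ) :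
    decide (Odd (x + y)) = xor (decide (Odd x)) (decide (Odd y)) := by
  rcases Nat.even_or_odd x with hx | hx <;> rcases Nat.even_or_odd y with hy | hy
  · simp [Nat.not_odd_iff_even.mpr hx, Nat.not_odd_iff_even.mpr hy,
      Nat.not_odd_iff_even.mpr (hx.add hy)]
  · simp [Nat.not_odd_iff_even.mpr hx, hy, hx.add_odd hy]
  · simp [hx, Nat.not_odd_iff_even.mpr hy, hx.add_even hy]
  · simp [hx, hy, Nat.not_odd_iff_even.mpr (hx.add_odd hy)]

lemma Nk_step (a y : Fin m → Bool) (k : ℕ) (hk : k < m) :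
    Nk a y k = (if a ⟨k, hk⟩ && y ⟨k, hk⟩ then 1 else 0) + Nk a y (k + 1) := by
  classical
  unfold Nk
  have hsplit : (Finset.univ.filter
      (fun i : Fin m => k ≤ (i : ℕ) ∧ a i = true ∧ y i = true))
      = (Finset.univ.filter (fun i : Fin m => i = ⟨k, hk⟩ ∧ a i = true ∧ y i = true))
        ∪ (Finset.univ.filter (fun i : Fin m => k + 1 ≤ (i : ℕ) ∧ a i = true ∧ y i = true)) := by
    rw [← Finset.filter_or]
    apply Finset.filter_congr
    intro i _
    constructor
    · rintro ⟨h1, h2⟩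
      rcases Nat.eq_or_lt_of_le h1 with he | hl
      · exact Or.inl ⟨Fin.ext he.symm, h2⟩
      · exact Or.inr ⟨hl, h2⟩
    · rintro (⟨h1, h2⟩ | ⟨h1, h2⟩)
      · subst h1; exact ⟨le_refl _, h2⟩
      · exact ⟨by omega, h2⟩
  rw [hsplit, Finset.card_union_of_disjoint]
  · congr 1
    by_cases hP : a ⟨k, hk⟩ = true ∧ y ⟨k, hk⟩ = true
    · have he : (Finset.univ.filter (fun i : Fin m => i = ⟨k, hk⟩ ∧ a i = true ∧ y i = true))
          = {⟨k, hk⟩} := by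
        ext i
        simp only [Finset.mem_filter, Finset.mem_univ, true_and, Finset.mem_singleton]
        constructor
        · rintro ⟨h1, _⟩; exact h1
        · rintro rfl; exact ⟨rfl, hP⟩
      simp [he, hP.1, hP.2]
    · have he : (Finset.univ.filter (fun i : Fin m => i = ⟨k, hk⟩ ∧ a i = true ∧ y i = true))
          = ∅ := by
        apply Finset.filter_eq_empty_iff.mpr
        intro i _
        rintro ⟨rfl, h2⟩
        exact hP h2
      rw [he]
      have hb : ¬ (a ⟨k, hk⟩ && y ⟨k, hk⟩) = true := by
        rw [Bool.and_eq_true]; exact hP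
      simp [hb]
  · rw [Finset.disjoint_filter]
    rintro i _ ⟨rfl, -⟩ ⟨h1, -⟩
    have hv : ((⟨k, hk⟩ : Fin m) : ℕ) = k := rfl
    omega

lemma decide_odd_Nk_step (a y : Fin m → Bool) (k : ℕ) (hk : k < m) :
    decide (Odd (Nk a y k))
      = xor (a ⟨k, hk⟩ && y ⟨k, hk⟩) (decide (Odd (Nk a y (k + 1)))) := by
  rw [Nk_step a y k hk, oddDecide_add]
  congr 1
  by_cases hb : (a ⟨k, hk⟩ && y ⟨k, hk⟩) = true <;> simp [hb]

/-- Stage 2: tree querying the `y` variables two at a time. -/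
def buildY (a : Fin m → Bool) : ℕ → ℕ → Bool → PDTree (m + m)
  | 0, _, acc => .leaf acc
  | fuel + 1, k, acc =>
    if h2 : k + 1 < m then
      if a ⟨k, by omega⟩ then
        (if a ⟨k + 1, h2⟩ then
          .node2 (Fin.natAdd m ⟨k, by omega⟩) (Fin.natAdd m ⟨k + 1, h2⟩)
            (buildY a fuel (k + 2) acc) (buildY a fuel (k + 2) (!acc))
        else
          .node1 (Fin.natAdd m ⟨k, by omega⟩)
            (buildY a fuel (k + 2) acc) (buildY a fuel (k + 2) (!acc)))
      else
        (if a ⟨k + 1, h2⟩ then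
          .node1 (Fin.natAdd m ⟨k + 1, h2⟩)
            (buildY a fuel (k + 2) acc) (buildY a fuel (k + 2) (!acc))
        else
          .node1 (Fin.natAdd m ⟨k, by omega⟩)
            (buildY a fuel (k + 2) acc) (buildY a fuel (k + 2) acc))
    else if h1 : k < m then
      if a ⟨k, h1⟩ then
        .node1 (Fin.natAdd m ⟨k, h1⟩)
          (buildY a fuel (k + 2) acc) (buildY a fuel (k + 2) (!acc))
      else
        .node1 (Fin.natAdd m ⟨k, h1⟩)
          (buildY a fuel (k + 2) acc) (buildY a fuel (k + 2) acc)
    else .leaf acc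

lemma buildY_depth (a : Fin m → Bool) :
    ∀ fuel k acc, k + 2 * fuel ≤ m + 1 → (buildY a fuel k acc).depth = fuel := by
  intro fuel
  induction fuel with
  | zero => intro k acc _; rfl
  | succ fuel ih =>
    intro k acc hk
    by_cases h2 : k + 1 < m
    · have r0 := ih (k + 2) acc (by omega)
      have r1 := ih (k + 2) (!acc) (by omega)
      simp only [buildY, dif_pos h2]
      by_cases ha : a ⟨k, by omega⟩ = true <;> by_cases hb : a ⟨k + 1, h2⟩ = true <;>
        simp [ha, hb, PDTree.depth, r0, r1]
    · have h1 : k < m := by omega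
      have r0 := ih (k + 2) acc (by omega)
      have r1 := ih (k + 2) (!acc) (by omega)
      simp only [buildY, dif_neg h2, dif_pos h1]
      by_cases ha : a ⟨k, h1⟩ = true <;> simp [ha, PDTree.depth, r0, r1]

lemma buildY_eval (a : Fin m → Bool) :
    ∀ fuel k acc (z : Fin (m + m) → Bool), m ≤ k + 2 * fuel →
      (buildY a fuel k acc).eval z
        = xor acc (decide (Odd (Nk a (fun i => z (Fin.natAdd m i)) k))) := by
  intro fuel
  induction fuel with
  | zero =>
    intro k acc z hk
    simp [buildY, PDTree.eval, Nk_of_le a _ k hk]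
  | succ fuel ih =>
    intro k acc z hk
    set y : Fin m → Bool := fun i => z (Fin.natAdd m i) with hy
    by_cases h2 : k + 1 < m
    · have h1 : k < m := by omega
      have r0 := ih (k + 2) acc z (by omega)
      have r1 := ih (k + 2) (!acc) z (by omega)
      rw [decide_odd_Nk_step a y k h1, decide_odd_Nk_step a y (k + 1) h2]
      have hz0 : z (Fin.natAdd m ⟨k, h1⟩) = y ⟨k, h1⟩ := rfl
      have hz1 : z (Fin.natAdd m ⟨k + 1, h2⟩) = y ⟨k + 1, h2⟩ := rfl
      simp only [buildY, dif_pos h2]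
      by_cases ha : a ⟨k, h1⟩ = true <;> by_cases hb : a ⟨k + 1, h2⟩ = true <;>
        · simp only [ha, hb, if_true, if_false, Bool.false_and, Bool.true_and, Bool.false_eq_true,
            PDTree.eval, hz0, hz1, r0, r1]
          generalize decide (Odd (Nk a y (k + 2))) = r
          cases h0 : y ⟨k, h1⟩ <;> cases h1' : y ⟨k + 1, h2⟩ <;> cases acc <;> cases r <;> rfl
    · by_cases h1 : k < m
      · have r0 := ih (k + 2) acc z (by omega)
        have r1 := ih (k + 2) (!acc) z (by omega)
        have hN2 : Nk a y (k + 2) = 0 := Nk_of_le a y (k + 2) (by omega)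
        have hN1 : Nk a y (k + 1) = 0 := Nk_of_le a y (k + 1) (by omega)
        rw [decide_odd_Nk_step a y k h1, hN1]
        have hz0 : z (Fin.natAdd m ⟨k, h1⟩) = y ⟨k, h1⟩ := rfl
        simp only [buildY, dif_neg h2, dif_pos h1]
        by_cases ha : a ⟨k, h1⟩ = true <;>
          · simp only [ha, if_true, if_false, Bool.false_and, Bool.true_and, Bool.false_eq_true,
              PDTree.eval, hz0, r0, r1, hN2]
            cases h0 : y ⟨k, h1⟩ <;> cases acc <;>
              rw [show Nk a (fun i => z (Fin.natAdd m i)) (k + 2) = 0 from hN2] <;> simp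
      · have hN : Nk a y k = 0 := Nk_of_le a y k (by omega)
        simp only [buildY, dif_neg h2, dif_neg h1, PDTree.eval, hN]
        simp

/-- Stage 1: tree querying all `x` variables in order. -/
def buildX (cont : (Fin m → Bool) → PDTree (m + m)) : ℕ → ℕ → (Fin m → Bool) → PDTree (m + m)
  | 0, _, acc => cont acc
  | fuel + 1, k, acc =>
    if hk : k < m then
      .node1 (Fin.castAdd m ⟨k, hk⟩)
        (buildX cont fuel (k + 1) (Function.update acc ⟨k, hk⟩ false))
        (buildX cont fuel (k + 1) (Function.update acc ⟨k, hk⟩ true))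
    else cont acc

lemma buildX_depth (cont : (Fin m → Bool) → PDTree (m + m)) (D : ℕ)
    (hD : ∀ x, (cont x).depth = D) :
    ∀ fuel k acc, k + fuel = m → (buildX cont fuel k acc).depth = fuel + D := by
  intro fuel
  induction fuel with
  | zero => intro k acc _; simpa [buildX] using hD acc
  | succ fuel ih =>
    intro k acc hkf
    have hk : k < m := by omega
    have r0 := ih (k + 1) (Function.update acc ⟨k, hk⟩ false) (by omega)
    have r1 := ih (k + 1) (Function.update acc ⟨k, hk⟩ true) (by omega)
    simp only [buildX, dif_pos hk, PDTree.depth, r0, r1]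
    omega

lemma buildX_eval (cont : (Fin m → Bool) → PDTree (m + m)) :
    ∀ fuel k acc (z : Fin (m + m) → Bool), m ≤ k + fuel →
      (buildX cont fuel k acc).eval z
        = (cont (fun i => if k ≤ (i : ℕ) then z (Fin.castAdd m i) else acc i)).eval z := by
  intro fuel
  induction fuel with
  | zero =>
    intro k acc z hk
    have : (fun i : Fin m => if k ≤ (i : ℕ) then z (Fin.castAdd m i) else acc i) = acc := by
      funext i
      have := i.isLt
      rw [if_neg (by omega)]
    rw [this]
    rfl
  | succ fuel ih =>
    intro k acc z hk
    by_cases h1 : k < m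
    · have key : ∀ b : Bool, b = z (Fin.castAdd m ⟨k, h1⟩) →
          (fun i : Fin m => if k + 1 ≤ (i : ℕ) then z (Fin.castAdd m i)
            else Function.update acc ⟨k, h1⟩ b i)
          = (fun i : Fin m => if k ≤ (i : ℕ) then z (Fin.castAdd m i) else acc i) := by
        intro b hb
        funext i
        by_cases hik : (i : ℕ) = k
        · have : i = ⟨k, h1⟩ := Fin.ext hik
          subst this
          rw [if_neg (by omega), if_pos (by omega), Function.update_self, hb]
        · rw [Function.update_of_ne (by simp [Fin.ext_iff, hik])]
          by_cases hge : k ≤ (i : ℕ)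
          · rw [if_pos (by omega), if_pos hge]
          · rw [if_neg (by omega), if_neg hge]
      have r0 := ih (k + 1) (Function.update acc ⟨k, h1⟩ false) z (by omega)
      have r1 := ih (k + 1) (Function.update acc ⟨k, h1⟩ true) z (by omega)
      simp only [buildX, dif_pos h1, PDTree.eval, r0, r1]
      by_cases hb : z (Fin.castAdd m ⟨k, h1⟩) = true
      · rw [if_pos hb, key true hb.symm]
      · rw [if_neg hb, key false (by simp at hb; exact hb.symm)]
    · have : (fun i : Fin m => if k ≤ (i : ℕ) then z (Fin.castAdd m i) else acc i) = acc := by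
        funext i
        have := i.isLt
        rw [if_neg (by omega)]
      simp only [buildX, dif_neg h1, this]

end Stmt14Aux


/-- for `m ≥ 1`, every Maiorana–McFarland bent function on
`n = m + m` variables is computed by a parity decision tree of depth
`m + ⌈m/2⌉ = ⌈3n/4⌉`. -/
theorem stmt14 (m : ℕ) (hm : 1 ≤ m)
    (φ : (Fin m → Bool) → (Fin m → Bool)) (hφ : Function.Bijective φ)
    (h : (Fin m → Bool) → Bool) :
    ∃ P : PDTree (m + m), P.depth = m + (m + 1) / 2 ∧ P.Computes (MMBent φ h) := by
  classical
  refine ⟨Stmt14Aux.buildX (fun x => Stmt14Aux.buildY (φ x) ((m + 1) / 2) 0 (h x))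
      m 0 (fun _ => false), ?_, ?_⟩
  · rw [Stmt14Aux.buildX_depth _ ((m + 1) / 2)
      (fun x => Stmt14Aux.buildY_depth (φ x) ((m + 1) / 2) 0 (h x) (by omega)) m 0 _ (by omega)]
  · intro z
    rw [Stmt14Aux.buildX_eval _ m 0 _ z (by omega)]
    have hx : (fun i : Fin m => if 0 ≤ (i : ℕ) then z (Fin.castAdd m i) else false)
        = fun i => z (Fin.castAdd m i) := by
      funext i; rw [if_pos (Nat.zero_le _)]
    rw [hx, Stmt14Aux.buildY_eval _ ((m + 1) / 2) 0 _ z (by omega)]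
    unfold MMBent parityDot Stmt14Aux.Nk
    simp only [Nat.zero_le, true_and]
    rw [Bool.xor_comm]
end
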